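/- arXiv:2602.07479 — 5 statements merged into one kernel-verified Lean document; each statement's English description precedes it below -/
import Mathlib

section
/- Let L: ℝ^{m×n} → ℝ be differentiable with ‖∇L(W)‖_F ≤ L₀ for all W and with ∇L M-Lipschitz. Fix W_pt ∈ ℝ^{m×n} and γ_min, γ_max > 0. For (A, B) ∈ ℝ^{r×n} × ℝ^{m×r} with γ_min·I ⪯ AAᵀ ⪯ γ_max·I and γ_min·I ⪯ BᵀB ⪯ γ_max·I, define G := ∇L(W_pt + BA), let X(A,B) be the unique solution of (AAᵀ + BᵀB)·X + X·(AAᵀ + BᵀB) = (BᵀB)⁻¹BᵀGAᵀ + AGᵀB(BᵀB)⁻¹, and define F_A(A,B) := −(BᵀB)⁻¹BᵀG + X(A,B)·A and F_B(A,B) := −(I − B(BᵀB)⁻¹Bᵀ)·G·Aᵀ(AAᵀ)⁻¹ − B·X(A,B). Then for any two such pairs (A,B) and (Ã,B̃): ‖F_A(A,B) − F_A(Ã,B̃)‖_F + ‖F_B(A,B) − F_B(Ã,B̃)‖_F ≤ ( 18·L₀·γ_max²/γ_min³ + 3·M·γ_max^{3/2}/γ_min^{3/2} ) · ( ‖A −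 Ã‖_F + ‖B − B̃‖_F ). -/
open Matrix

/-- Frobenius norm of a real matrix. -/
noncomputable def frobNorm {m n : ℕ} (A : Matrix (Fin m) (Fin n) ℝ) : ℝ :=
  Real.sqrt (∑ i, ∑ j, (A i j) ^ 2)

/-- Frobenius (trace) inner product of two real matrices. -/
def frobInner {m n : ℕ} (A B : Matrix (Fin m) (Fin n) ℝ) : ℝ :=
  ∑ i, ∑ j, A i j * B i j

attribute [local instance] Matrix.frobeniusSeminormedAddCommGroup

namespace Odelora

variable {a b d k : ℕ}

lemma frobNorm_eq (A : Matrix (Fin a) (Fin b) ℝ) : frobNorm A = ‖A‖ := by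
  rw [Matrix.frobenius_norm_def, frobNorm, Real.sqrt_eq_rpow]
  congr 1
  simp [Real.norm_eq_abs, sq_abs]

lemma frobInner_eq_trace (A B : Matrix (Fin a) (Fin b) ℝ) :
    frobInner A B = Matrix.trace (Aᵀ * B) := by
  rw [Matrix.trace, frobInner, Finset.sum_comm]
  simp [Matrix.diag, Matrix.mul_apply]

lemma frobInner_self (A : Matrix (Fin a) (Fin b) ℝ) : frobInner A A = ‖A‖ ^ 2 := by
  rw [← frobNorm_eq, frobNorm, Real.sq_sqrt (by positivity), frobInner]
  simp [sq]

lemma frobInner_le (A B : Matrix (Fin a) (Fin b) ℝ) : frobInner A B ≤ ‖A‖ * ‖B‖ := by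
  have key : (frobInner A B)^2 ≤ (frobInner A A) * (frobInner B B) := by
    have h := Finset.sum_mul_sq_le_sq_mul_sq Finset.univ
      (fun p : Fin a × Fin b => A p.1 p.2) (fun p => B p.1 p.2)
    simpa [frobInner, Fintype.sum_prod_type, sq] using h
  rw [frobInner_self, frobInner_self] at key
  have h2 : |frobInner A B| ≤ ‖A‖ * ‖B‖ := by
    rw [← Real.sqrt_sq_eq_abs]
    calc Real.sqrt ((frobInner A B)^2) ≤ Real.sqrt ((‖A‖*‖B‖)^2) := by
          apply Real.sqrt_le_sqrt; nlinarith
      _ = ‖A‖*‖B‖ := Real.sqrt_sq (by positivity)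
  linarith [le_abs_self (frobInner A B)]

lemma frobInner_mul_left (K : Matrix (Fin a) (Fin b) ℝ) (N : Matrix (Fin b) (Fin d) ℝ)
    (Mx : Matrix (Fin a) (Fin d) ℝ) : frobInner (K * N) Mx = frobInner N (Kᵀ * Mx) := by
  rw [frobInner_eq_trace, frobInner_eq_trace, Matrix.transpose_mul, Matrix.mul_assoc]

lemma frobInner_transpose (A B : Matrix (Fin a) (Fin b) ℝ) :
    frobInner Aᵀ Bᵀ = frobInner A B := by
  rw [frobInner_eq_trace, frobInner_eq_trace, Matrix.transpose_transpose,
    ← Matrix.trace_transpose (Aᵀ * B), Matrix.transpose_mul, Matrix.transpose_transpose,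
    Matrix.trace_mul_comm]

lemma frobInner_sub_right (A B C : Matrix (Fin a) (Fin b) ℝ) :
    frobInner A (B - C) = frobInner A B - frobInner A C := by
  rw [frobInner_eq_trace, frobInner_eq_trace, frobInner_eq_trace, Matrix.mul_sub,
    Matrix.trace_sub]

lemma frobInner_smul_right (c : ℝ) (A B : Matrix (Fin a) (Fin b) ℝ) :
    frobInner A (c • B) = c * frobInner A B := by
  rw [frobInner_eq_trace, frobInner_eq_trace, Matrix.mul_smul, Matrix.trace_smul]
  rfl

lemma psd_frobInner_nonneg {P : Matrix (Fin k) (Fin k) ℝ} (hP : P.PosSemidef)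
    (N : Matrix (Fin k) (Fin d) ℝ) : 0 ≤ frobInner N (P * N) := by
  have : frobInner N (P * N) = ∑ j : Fin d,
      dotProduct (star fun i => N i j) (P *ᵥ (fun i => N i j)) := by
    rw [frobInner, Finset.sum_comm]
    simp [dotProduct, Matrix.mulVec, Matrix.mul_apply]
  rw [this]
  exact Finset.sum_nonneg fun j _ => hP.dotProduct_mulVec_nonneg _

-- vector Cauchy-Schwarz
lemma dot_cs (x y : Fin a → ℝ) : (x ⬝ᵥ y) ^ 2 ≤ (x ⬝ᵥ x) * (y ⬝ᵥ y) := by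
  have h := Finset.sum_mul_sq_le_sq_mul_sq Finset.univ x y
  simpa [dotProduct, sq] using h

lemma dot_self_nonneg (x : Fin a → ℝ) : 0 ≤ x ⬝ᵥ x :=
  Finset.sum_nonneg fun i _ => mul_self_nonneg _

-- quadratic form evaluation lemma
lemma psd_quad {P : Matrix (Fin k) (Fin k) ℝ} (hP : P.PosSemidef) (x : Fin k → ℝ) :
    0 ≤ x ⬝ᵥ (P *ᵥ x) := by
  simpa using hP.dotProduct_mulVec_nonneg x

lemma smul_one_quad (c : ℝ) (x : Fin k → ℝ) :
    x ⬝ᵥ ((c • (1 : Matrix (Fin k) (Fin k) ℝ)) *ᵥ x) = c * (x ⬝ᵥ x) := by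
  simp [Matrix.smul_mulVec, dotProduct_smul]

lemma sub_quad (P Q : Matrix (Fin k) (Fin k) ℝ) (x : Fin k → ℝ) :
    x ⬝ᵥ ((P - Q) *ᵥ x) = x ⬝ᵥ (P *ᵥ x) - x ⬝ᵥ (Q *ᵥ x) := by
  simp [Matrix.sub_mulVec, dotProduct_sub]

lemma gram_swap (K : Matrix (Fin a) (Fin b) ℝ) {c : ℝ} (hc : 0 ≤ c)
    (h : ((c • (1 : Matrix (Fin b) (Fin b) ℝ)) - Kᵀ * K).PosSemidef) :
    ((c • (1 : Matrix (Fin a) (Fin a) ℝ)) - K * Kᵀ).PosSemidef := by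
  refine Matrix.PosSemidef.of_dotProduct_mulVec_nonneg ?_ ?_
  · have h1 : (K * Kᵀ).IsHermitian := by
      have := Matrix.isHermitian_mul_conjTranspose_self K
      simpa using this
    have h2 : ((c • (1 : Matrix (Fin a) (Fin a) ℝ))).IsHermitian := by
      ext i j
      simp [Matrix.conjTranspose_apply, Matrix.one_apply, eq_comm]
    exact h2.sub h1
  · intro x
    have hx : star x = x := by simp
    rw [hx, sub_quad, smul_one_quad]
    set w : Fin b → ℝ := Kᵀ *ᵥ x with hw
    have e1 : x ⬝ᵥ ((K * Kᵀ) *ᵥ x) = w ⬝ᵥ w := by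
      rw [← Matrix.mulVec_mulVec, hw, Matrix.dotProduct_mulVec x K, ← Matrix.mulVec_transpose]
    rw [e1]
    have hq := psd_quad h w
    rw [sub_quad, smul_one_quad] at hq
    -- hq : 0 ≤ c * (w⬝w) - w ⬝ (KᵀK w)
    have e2 : w ⬝ᵥ ((Kᵀ * K) *ᵥ w) = (K *ᵥ w) ⬝ᵥ (K *ᵥ w) := by
      rw [← Matrix.mulVec_mulVec, Matrix.dotProduct_mulVec w Kᵀ, ← Matrix.mulVec_transpose,
        Matrix.transpose_transpose]
    rw [e2] at hq
    have e3 : w ⬝ᵥ w = x ⬝ᵥ (K *ᵥ w) := by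
      rw [Matrix.dotProduct_mulVec x K, ← Matrix.mulVec_transpose, ← hw]
    have hcs := dot_cs x (K *ᵥ w)
    have hxx := dot_self_nonneg x
    have hww := dot_self_nonneg w
    -- (w⬝w)^2 = (x ⬝ Kw)^2 ≤ (x⬝x)(Kw⬝Kw) ≤ (x⬝x) * c * (w⬝w)
    rcases eq_or_lt_of_le hww with h0 | h0
    · nlinarith
    · have : (w ⬝ᵥ w)^2 ≤ (x ⬝ᵥ x) * (c * (w ⬝ᵥ w)) := by
        calc (w ⬝ᵥ w)^2 = (x ⬝ᵥ (K *ᵥ w))^2 := by rw [e3]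
          _ ≤ (x ⬝ᵥ x) * ((K *ᵥ w) ⬝ᵥ (K *ᵥ w)) := hcs
          _ ≤ (x ⬝ᵥ x) * (c * (w ⬝ᵥ w)) := by nlinarith
      nlinarith

-- gram-based multiplication bounds
lemma gmul_left (K : Matrix (Fin a) (Fin b) ℝ) {c : ℝ} (hc : 0 ≤ c)
    (h : ((c • (1 : Matrix (Fin b) (Fin b) ℝ)) - Kᵀ * K).PosSemidef)
    (N : Matrix (Fin b) (Fin d) ℝ) : ‖K * N‖ ≤ Real.sqrt c * ‖N‖ := by
  have h0 : 0 ≤ frobInner N (((c • (1 : Matrix (Fin b) (Fin b) ℝ)) - Kᵀ * K) * N) :=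
    psd_frobInner_nonneg h N
  have e : ((c • (1 : Matrix (Fin b) (Fin b) ℝ)) - Kᵀ * K) * N = c • N - Kᵀ * (K * N) := by
    rw [Matrix.sub_mul, Matrix.smul_mul, Matrix.one_mul, Matrix.mul_assoc]
  rw [e, frobInner_sub_right, frobInner_smul_right, ← frobInner_mul_left,
    frobInner_self, frobInner_self] at h0
  have hsq : ‖K * N‖^2 ≤ c * ‖N‖^2 := by linarith
  calc ‖K * N‖ = Real.sqrt (‖K * N‖^2) := (Real.sqrt_sq (norm_nonneg _)).symm
    _ ≤ Real.sqrt (c * ‖N‖^2) := Real.sqrt_le_sqrt hsq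
    _ = Real.sqrt c * ‖N‖ := by
        rw [Real.sqrt_mul hc, Real.sqrt_sq (norm_nonneg _)]

lemma gmul_right (K : Matrix (Fin a) (Fin b) ℝ) {c : ℝ} (hc : 0 ≤ c)
    (h : ((c • (1 : Matrix (Fin a) (Fin a) ℝ)) - K * Kᵀ).PosSemidef)
    (N : Matrix (Fin d) (Fin a) ℝ) : ‖N * K‖ ≤ Real.sqrt c * ‖N‖ := by
  have h' : ((c • (1 : Matrix (Fin a) (Fin a) ℝ)) - (Kᵀ)ᵀ * Kᵀ).PosSemidef := by
    rwa [Matrix.transpose_transpose]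
  calc ‖N * K‖ = ‖(N * K)ᵀ‖ := (Matrix.frobenius_norm_transpose _).symm
    _ = ‖Kᵀ * Nᵀ‖ := by rw [Matrix.transpose_mul]
    _ ≤ Real.sqrt c * ‖Nᵀ‖ := gmul_left Kᵀ hc h' Nᵀ
    _ = Real.sqrt c * ‖N‖ := by rw [Matrix.frobenius_norm_transpose]

lemma frobInner_add_right (A B C : Matrix (Fin a) (Fin b) ℝ) :
    frobInner A (B + C) = frobInner A B + frobInner A C := by
  rw [frobInner_eq_trace, frobInner_eq_trace, frobInner_eq_trace, Matrix.mul_add,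
    Matrix.trace_add]

lemma posdef_of_lb (P : Matrix (Fin k) (Fin k) ℝ) {γ : ℝ} (hγ : 0 < γ)
    (h : (P - γ • (1 : Matrix (Fin k) (Fin k) ℝ)).PosSemidef) : P.PosDef := by
  have hsm : ((γ • (1 : Matrix (Fin k) (Fin k) ℝ))).IsHermitian := by
    ext i j
    simp [Matrix.conjTranspose_apply, Matrix.one_apply, eq_comm]
  refine Matrix.PosDef.of_dotProduct_mulVec_pos ?_ ?_
  · have := h.1.add hsm
    simpa using this
  · intro x hx
    have hq := psd_quad h x
    rw [sub_quad, smul_one_quad] at hq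
    have hxx : 0 < x ⬝ᵥ x := by
      rcases lt_or_eq_of_le (dot_self_nonneg x) with h0 | h0
      · exact h0
      · exact absurd (dotProduct_self_eq_zero.mp h0.symm) hx
    have : star x = x := by simp
    rw [this]
    nlinarith

lemma inv_mul_cancel_of_lb (P : Matrix (Fin k) (Fin k) ℝ) {γ : ℝ} (hγ : 0 < γ)
    (h : (P - γ • (1 : Matrix (Fin k) (Fin k) ℝ)).PosSemidef) :
    P * P⁻¹ = 1 ∧ P⁻¹ * P = 1 := by
  have hu := (posdef_of_lb P hγ h).isUnit
  have hdet : IsUnit P.det := (Matrix.isUnit_iff_isUnit_det P).mp hu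
  exact ⟨Matrix.mul_nonsing_inv P hdet, Matrix.nonsing_inv_mul P hdet⟩

lemma inv_transpose_of_symm (P : Matrix (Fin k) (Fin k) ℝ) (hsym : Pᵀ = P) :
    (P⁻¹)ᵀ = P⁻¹ := by
  rw [Matrix.transpose_nonsing_inv, hsym]

lemma inv_norm_left (P : Matrix (Fin k) (Fin k) ℝ) {γ : ℝ} (hγ : 0 < γ)
    (h : (P - γ • (1 : Matrix (Fin k) (Fin k) ℝ)).PosSemidef)
    (N : Matrix (Fin k) (Fin d) ℝ) : ‖P⁻¹ * N‖ ≤ γ⁻¹ * ‖N‖ := by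
  set Mm := P⁻¹ * N with hM
  have h0 : 0 ≤ frobInner Mm ((P - γ • (1 : Matrix (Fin k) (Fin k) ℝ)) * Mm) :=
    psd_frobInner_nonneg h Mm
  have e : (P - γ • (1 : Matrix (Fin k) (Fin k) ℝ)) * Mm = N - γ • Mm := by
    rw [Matrix.sub_mul, Matrix.smul_mul, Matrix.one_mul, hM, ← Matrix.mul_assoc,
      (inv_mul_cancel_of_lb P hγ h).1, Matrix.one_mul]
  rw [e, frobInner_sub_right, frobInner_smul_right, frobInner_self] at h0
  have hcs := frobInner_le Mm N
  have hMn : 0 ≤ ‖Mm‖ := norm_nonneg _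
  rcases lt_or_eq_of_le hMn with h1 | h1
  · have h2 : γ * ‖Mm‖ ≤ ‖N‖ := by nlinarith
    calc ‖Mm‖ = γ⁻¹ * (γ * ‖Mm‖) := by field_simp
      _ ≤ γ⁻¹ * ‖N‖ := by
          apply mul_le_mul_of_nonneg_left h2 (by positivity)
  · rw [← h1]
    positivity

lemma inv_norm_right (P : Matrix (Fin k) (Fin k) ℝ) {γ : ℝ} (hγ : 0 < γ)
    (hsym : Pᵀ = P)
    (h : (P - γ • (1 : Matrix (Fin k) (Fin k) ℝ)).PosSemidef)
    (N : Matrix (Fin d) (Fin k) ℝ) : ‖N * P⁻¹‖ ≤ γ⁻¹ * ‖N‖ := by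
  calc ‖N * P⁻¹‖ = ‖(N * P⁻¹)ᵀ‖ := (Matrix.frobenius_norm_transpose _).symm
    _ = ‖P⁻¹ * Nᵀ‖ := by rw [Matrix.transpose_mul, inv_transpose_of_symm P hsym]
    _ ≤ γ⁻¹ * ‖Nᵀ‖ := inv_norm_left P hγ h Nᵀ
    _ = γ⁻¹ * ‖N‖ := by rw [Matrix.frobenius_norm_transpose]

lemma inv_psd_ub (P : Matrix (Fin k) (Fin k) ℝ) {γ : ℝ} (hγ : 0 < γ)
    (hsym : Pᵀ = P)
    (h : (P - γ • (1 : Matrix (Fin k) (Fin k) ℝ)).PosSemidef) :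
    ((γ⁻¹ • (1 : Matrix (Fin k) (Fin k) ℝ)) - P⁻¹).PosSemidef := by
  have hit := inv_transpose_of_symm P hsym
  have hinv := inv_mul_cancel_of_lb P hγ h
  refine Matrix.PosSemidef.of_dotProduct_mulVec_nonneg ?_ ?_
  · have hPij : ∀ i j, P⁻¹ j i = P⁻¹ i j := by
      intro i j
      have h0 := congrFun (congrFun hit i) j
      rw [Matrix.transpose_apply] at h0
      exact h0
    ext i j
    simp [Matrix.conjTranspose_apply, Matrix.one_apply, eq_comm, hPij j i]
  · intro x
    have hx : star x = x := by simp
    rw [hx, sub_quad, smul_one_quad]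
    set y := P⁻¹ *ᵥ x with hy
    have hPy : P *ᵥ y = x := by
      rw [hy, Matrix.mulVec_mulVec, hinv.1, Matrix.one_mulVec]
    have hq := psd_quad h y
    rw [sub_quad, smul_one_quad] at hq
    rw [hPy] at hq
    have ht : x ⬝ᵥ (P⁻¹ *ᵥ x) = y ⬝ᵥ x := by
      rw [← hy, dotProduct_comm]
    rw [ht]
    have hcs := dot_cs x y
    have hxx := dot_self_nonneg x
    have hyy := dot_self_nonneg y
    have hyx : 0 ≤ y ⬝ᵥ x := by nlinarith
    have hyy2 : y ⬝ᵥ y ≤ γ⁻¹ * (y ⬝ᵥ x) := by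
      calc y ⬝ᵥ y = γ⁻¹ * (γ * (y ⬝ᵥ y)) := by field_simp
        _ ≤ γ⁻¹ * (y ⬝ᵥ x) := by
            apply mul_le_mul_of_nonneg_left (by linarith) (by positivity)
    rcases lt_or_eq_of_le hyx with h1 | h1
    · have h2 : (y ⬝ᵥ x) * (y ⬝ᵥ x) ≤ (γ⁻¹ * (x ⬝ᵥ x)) * (y ⬝ᵥ x) := by
        nlinarith [dotProduct_comm x y, mul_le_mul_of_nonneg_left hyy2 hxx]
      have h3 := le_of_mul_le_mul_right h2 h1
      linarith
    · rw [← h1, sub_zero]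
      exact mul_nonneg (inv_nonneg.mpr hγ.le) hxx

lemma proj_contraction (Pi : Matrix (Fin k) (Fin k) ℝ) (hsym : Piᵀ = Pi)
    (hidem : Pi * Pi = Pi) (N : Matrix (Fin k) (Fin d) ℝ) :
    ‖((1 : Matrix (Fin k) (Fin k) ℝ) - Pi) * N‖ ≤ ‖N‖ := by
  set R := (1 : Matrix (Fin k) (Fin k) ℝ) - Pi with hR
  have hRsym : Rᵀ = R := by rw [hR, Matrix.transpose_sub, Matrix.transpose_one, hsym]
  have hRR : R * R = R := by
    have hstep : Pi * ((1 : Matrix (Fin k) (Fin k) ℝ) - Pi) = Pi - Pi := by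
      rw [Matrix.mul_sub, Matrix.mul_one, hidem]
    rw [hR, Matrix.sub_mul, Matrix.one_mul, hstep]
    simp
  have e : ‖R * N‖^2 = frobInner N (R * N) := by
    rw [← frobInner_self, frobInner_mul_left, hRsym, ← Matrix.mul_assoc, hRR]
  have hcs := frobInner_le N (R * N)
  have hn := norm_nonneg (R * N)
  rcases lt_or_eq_of_le hn with h1 | h1
  · have h2 : ‖R * N‖ * ‖R * N‖ ≤ ‖N‖ * ‖R * N‖ := by nlinarith
    exact le_of_mul_le_mul_right h2 h1
  · rw [← h1]; exact norm_nonneg _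

lemma sylv (S : Matrix (Fin k) (Fin k) ℝ) {γ : ℝ} (hγ : 0 < γ) (hsym : Sᵀ = S)
    (hpsd : (S - (2 * γ) • (1 : Matrix (Fin k) (Fin k) ℝ)).PosSemidef)
    (X C : Matrix (Fin k) (Fin k) ℝ) (heq : S * X + X * S = C) :
    (4 * γ) * ‖X‖ ≤ ‖C‖ := by
  have key : ∀ Y : Matrix (Fin k) (Fin k) ℝ, (2 * γ) * ‖Y‖^2 ≤ frobInner Y (S * Y) := by
    intro Y
    have h0 := psd_frobInner_nonneg hpsd Y
    have e : (S - (2 * γ) • (1 : Matrix (Fin k) (Fin k) ℝ)) * Y = S * Y - (2*γ) • Y := by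
      rw [Matrix.sub_mul, Matrix.smul_mul, Matrix.one_mul]
    rw [e, frobInner_sub_right, frobInner_smul_right, frobInner_self] at h0
    linarith
  have h1 := key X
  have h2 : (2 * γ) * ‖X‖^2 ≤ frobInner X (X * S) := by
    have e1 : frobInner X (X * S) = frobInner Xᵀ (S * Xᵀ) := by
      rw [← frobInner_transpose X (X * S), Matrix.transpose_mul, hsym]
    have := key Xᵀ
    rw [Matrix.frobenius_norm_transpose] at this
    rw [e1]
    exact this
  have h3 : frobInner X C = frobInner X (S * X) + frobInner X (X * S) := by
    rw [← heq, frobInner_add_right]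
  have hcs := frobInner_le X C
  have hXn := norm_nonneg X
  rcases lt_or_eq_of_le hXn with h4 | h4
  · have h5 : ((4 * γ) * ‖X‖) * ‖X‖ ≤ ‖C‖ * ‖X‖ := by nlinarith
    exact le_of_mul_le_mul_right h5 h4
  · rw [← h4]
    simpa using norm_nonneg C

lemma psd_diag {P : Matrix (Fin k) (Fin k) ℝ} (hP : P.PosSemidef) (i : Fin k) :
    0 ≤ P i i := by
  have h := psd_quad hP (Pi.single i 1)
  simpa [dotProduct, Matrix.mulVec, Pi.single_apply, Finset.sum_ite_eq'] using h

lemma rpow_3_2 {x : ℝ} (hx : 0 ≤ x) : x ^ ((3:ℝ)/2) = Real.sqrt x ^ 3 := by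
  rw [Real.sqrt_eq_rpow, ← Real.rpow_natCast (x ^ ((1:ℝ)/2)) 3, ← Real.rpow_mul hx]
  norm_num

end Odelora


set_option maxHeartbeats 1600000 in
/-- Lipschitz continuity of the ODELoRA vector field `(F_A, F_B)` with
respect to the LoRA factors `(A, B)`. -/
theorem odelora_field_lipschitz {m n r : ℕ}
    (L : Matrix (Fin m) (Fin n) ℝ → ℝ)
    (gradL : Matrix (Fin m) (Fin n) ℝ → Matrix (Fin m) (Fin n) ℝ)
    -- `gradL` is the gradient of the differentiable function `L`
    (hgrad : ∀ (W Δ : Matrix (Fin m) (Fin n) ℝ),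
      HasDerivAt (fun t : ℝ => L (W + t • Δ)) (frobInner (gradL W) Δ) 0)
    (L₀ M : ℝ)
    (hbound : ∀ W, frobNorm (gradL W) ≤ L₀)
    (hlip : ∀ W W' : Matrix (Fin m) (Fin n) ℝ,
      frobNorm (gradL W - gradL W') ≤ M * frobNorm (W - W'))
    (Wpt : Matrix (Fin m) (Fin n) ℝ)
    (γmin γmax : ℝ) (hγmin : 0 < γmin) (hγmax : 0 < γmax)
    (A At : Matrix (Fin r) (Fin n) ℝ) (B Bt : Matrix (Fin m) (Fin r) ℝ)
    (hA1 : (A * Aᵀ - γmin • (1 : Matrix (Fin r) (Fin r) ℝ)).PosSemidef)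
    (hA2 : (γmax • (1 : Matrix (Fin r) (Fin r) ℝ) - A * Aᵀ).PosSemidef)
    (hB1 : (Bᵀ * B - γmin • (1 : Matrix (Fin r) (Fin r) ℝ)).PosSemidef)
    (hB2 : (γmax • (1 : Matrix (Fin r) (Fin r) ℝ) - Bᵀ * B).PosSemidef)
    (hA1t : (At * Atᵀ - γmin • (1 : Matrix (Fin r) (Fin r) ℝ)).PosSemidef)
    (hA2t : (γmax • (1 : Matrix (Fin r) (Fin r) ℝ) - At * Atᵀ).PosSemidef)
    (hB1t : (Btᵀ * Bt - γmin • (1 : Matrix (Fin r) (Fin r) ℝ)).PosSemidef)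
    (hB2t : (γmax • (1 : Matrix (Fin r) (Fin r) ℝ) - Btᵀ * Bt).PosSemidef)
    (X Xt : Matrix (Fin r) (Fin r) ℝ)
    (hX : (A * Aᵀ + Bᵀ * B) * X + X * (A * Aᵀ + Bᵀ * B)
        = (Bᵀ * B)⁻¹ * Bᵀ * gradL (Wpt + B * A) * Aᵀ
          + A * (gradL (Wpt + B * A))ᵀ * B * (Bᵀ * B)⁻¹)
    (hXt : (At * Atᵀ + Btᵀ * Bt) * Xt + Xt * (At * Atᵀ + Btᵀ * Bt)
        = (Btᵀ * Bt)⁻¹ * Btᵀ * gradL (Wpt + Bt * At) * Atᵀ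
          + At * (gradL (Wpt + Bt * At))ᵀ * Bt * (Btᵀ * Bt)⁻¹) :
    let FA : Matrix (Fin r) (Fin n) ℝ :=
      -((Bᵀ * B)⁻¹ * Bᵀ * gradL (Wpt + B * A)) + X * A
    let FB : Matrix (Fin m) (Fin r) ℝ :=
      -(((1 : Matrix (Fin m) (Fin m) ℝ) - B * (Bᵀ * B)⁻¹ * Bᵀ) *
          gradL (Wpt + B * A) * Aᵀ * (A * Aᵀ)⁻¹) - B * X
    let FAt : Matrix (Fin r) (Fin n) ℝ :=
      -((Btᵀ * Bt)⁻¹ * Btᵀ * gradL (Wpt + Bt * At)) + Xt * At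
    let FBt : Matrix (Fin m) (Fin r) ℝ :=
      -(((1 : Matrix (Fin m) (Fin m) ℝ) - Bt * (Btᵀ * Bt)⁻¹ * Btᵀ) *
          gradL (Wpt + Bt * At) * Atᵀ * (At * Atᵀ)⁻¹) - Bt * Xt
    frobNorm (FA - FAt) + frobNorm (FB - FBt)
      ≤ (18 * L₀ * γmax ^ 2 / γmin ^ 3
          + 3 * M * γmax ^ ((3:ℝ)/2) / γmin ^ ((3:ℝ)/2))
        * (frobNorm (A - At) + frobNorm (B - Bt)) := by
  intro FA FB FAt FBt
  rcases Nat.eq_zero_or_pos r with hr0 | hrpos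
  · subst hr0
    have e1 : frobNorm (FA - FAt) = 0 := by
      simp [frobNorm]
    have e2 : frobNorm (FB - FBt) = 0 := by
      simp [frobNorm]
    have e3 : frobNorm (A - At) = 0 := by
      simp [frobNorm]
    have e4 : frobNorm (B - Bt) = 0 := by
      simp [frobNorm]
    rw [e1, e2, e3, e4]
    norm_num
  · -- main case r ≥ 1
    have i0 : Fin r := ⟨0, hrpos⟩
    have hγmM : γmin ≤ γmax := by
      have d1 := Odelora.psd_diag hA1 i0
      have d2 := Odelora.psd_diag hA2 i0
      simp only [Matrix.sub_apply, Matrix.smul_apply, Matrix.one_apply_eq,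
        smul_eq_mul, mul_one] at d1 d2
      linarith
    have hm : 0 < m := by
      rcases Nat.eq_zero_or_pos m with hm0 | hm0
      · exfalso
        subst hm0
        have d1 := Odelora.psd_diag hB1 i0
        have hz : (Bᵀ * B) i0 i0 = 0 := by
          simp [Matrix.mul_apply]
        simp only [Matrix.sub_apply, Matrix.smul_apply, Matrix.one_apply_eq,
          smul_eq_mul, mul_one, hz] at d1
        linarith
      · exact hm0
    have hn : 0 < n := by
      rcases Nat.eq_zero_or_pos n with hn0 | hn0
      · exfalso
        subst hn0
        have d1 := Odelora.psd_diag hA1 i0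
        have hz : (A * Aᵀ) i0 i0 = 0 := by
          simp [Matrix.mul_apply]
        simp only [Matrix.sub_apply, Matrix.smul_apply, Matrix.one_apply_eq,
          smul_eq_mul, mul_one, hz] at d1
        linarith
      · exact hn0
    have hL0 : 0 ≤ L₀ := le_trans (Real.sqrt_nonneg _) (hbound 0)
    have hM0 : 0 ≤ M := by
      set W1 : Matrix (Fin m) (Fin n) ℝ := Matrix.of fun _ _ => (1:ℝ) with hW1
      have h := hlip W1 0
      have hc : frobNorm (W1 - (0 : Matrix (Fin m) (Fin n) ℝ)) = Real.sqrt ((m:ℝ) * n) := by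
        simp [frobNorm, hW1, Finset.sum_const, Finset.card_univ, mul_comm]
      rw [hc] at h
      have hpos : 0 < Real.sqrt ((m:ℝ) * n) := by
        apply Real.sqrt_pos.mpr
        have h1 : (0:ℝ) < m := by exact_mod_cast hm
        have h2 : (0:ℝ) < n := by exact_mod_cast hn
        positivity
      have h0 : 0 ≤ frobNorm (gradL W1 - gradL 0) := Real.sqrt_nonneg _
      nlinarith [h0, h, hpos]
    -- square-root quantities
    set sm := Real.sqrt γmin with hsmdef
    set sx := Real.sqrt γmax with hsxdef
    set im := sm⁻¹ with himdef
    have hsm : 0 < sm := Real.sqrt_pos.mpr hγmin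
    have hsx : 0 < sx := Real.sqrt_pos.mpr hγmax
    have him : 0 < im := by positivity
    have hsm2 : sm ^ 2 = γmin := Real.sq_sqrt hγmin.le
    have hsx2 : sx ^ 2 = γmax := Real.sq_sqrt hγmax.le
    have hsmim : sm * im = 1 := mul_inv_cancel₀ hsm.ne'
    have hsmx : sm ≤ sx := Real.sqrt_le_sqrt hγmM
    have hxi : 1 ≤ sx * im := by
      rw [← hsmim]
      exact mul_le_mul_of_nonneg_right hsmx him.le
    have hxi2 : 1 ≤ sx^2 * im^2 := by nlinarith [hxi, mul_pos hsx him]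
    have hxi3 : 1 ≤ sx^3 * im^3 := by
      nlinarith [mul_le_mul hxi hxi2 (by norm_num) (by positivity), mul_pos hsx him]
    have hxi4 : 1 ≤ sx^4 * im^4 := by nlinarith [hxi2]
    have him2 : γmin⁻¹ = im ^ 2 := by
      rw [← hsm2, himdef, sq, sq, mul_inv]
    -- unfold the let-definitions in the goal and switch to the norm
    show frobNorm (FA - FAt) + frobNorm (FB - FBt) ≤ _
    simp only [FA, FB, FAt, FBt]
    rw [Odelora.frobNorm_eq, Odelora.frobNorm_eq, Odelora.frobNorm_eq, Odelora.frobNorm_eq]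
    -- abbreviations
    set G := gradL (Wpt + B * A) with hGdef
    set Gt := gradL (Wpt + Bt * At) with hGtdef
    set P := Bᵀ * B with hPdef
    set Pt := Btᵀ * Bt with hPtdef
    set Q := A * Aᵀ with hQdef
    set Qt := At * Atᵀ with hQtdef
    -- symmetries and inverses
    have hPsym : Pᵀ = P := by rw [hPdef, Matrix.transpose_mul, Matrix.transpose_transpose]
    have hPtsym : Ptᵀ = Pt := by rw [hPtdef, Matrix.transpose_mul, Matrix.transpose_transpose]
    have hQsym : Qᵀ = Q := by rw [hQdef, Matrix.transpose_mul, Matrix.transpose_transpose]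
    have hQtsym : Qtᵀ = Qt := by rw [hQtdef, Matrix.transpose_mul, Matrix.transpose_transpose]
    have hPiv := Odelora.inv_mul_cancel_of_lb P hγmin hB1
    have hPtiv := Odelora.inv_mul_cancel_of_lb Pt hγmin hB1t
    have hQiv := Odelora.inv_mul_cancel_of_lb Q hγmin hA1
    have hQtiv := Odelora.inv_mul_cancel_of_lb Qt hγmin hA1t
    have hPinvT := Odelora.inv_transpose_of_symm P hPsym
    have hPtinvT := Odelora.inv_transpose_of_symm Pt hPtsym
    have hQinvT := Odelora.inv_transpose_of_symm Q hQsym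
    have hQtinvT := Odelora.inv_transpose_of_symm Qt hQtsym
    -- upper gram facts in explicit product form
    have hgB : ((γmax • (1 : Matrix (Fin r) (Fin r) ℝ)) - Bᵀ * B).PosSemidef := by
      rw [← hPdef]; exact hB2
    have hgBt : ((γmax • (1 : Matrix (Fin r) (Fin r) ℝ)) - Btᵀ * Bt).PosSemidef := by
      rw [← hPtdef]; exact hB2t
    have hgA : ((γmax • (1 : Matrix (Fin r) (Fin r) ℝ)) - A * Aᵀ).PosSemidef := by
      rw [← hQdef]; exact hA2
    have hgAt : ((γmax • (1 : Matrix (Fin r) (Fin r) ℝ)) - At * Atᵀ).PosSemidef := by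
      rw [← hQtdef]; exact hA2t
    have hBsw := Odelora.gram_swap B hγmax.le hgB
    have hBtsw := Odelora.gram_swap Bt hγmax.le hgBt
    have hAsw : ((γmax • (1 : Matrix (Fin n) (Fin n) ℝ)) - Aᵀ * A).PosSemidef := by
      have h0 : ((γmax • (1 : Matrix (Fin r) (Fin r) ℝ)) - Aᵀᵀ * Aᵀ).PosSemidef := by
        rw [Matrix.transpose_transpose]; exact hgA
      have h1 := Odelora.gram_swap Aᵀ hγmax.le h0
      rwa [Matrix.transpose_transpose] at h1
    have hAtsw : ((γmax • (1 : Matrix (Fin n) (Fin n) ℝ)) - Atᵀ * At).PosSemidef := by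
      have h0 : ((γmax • (1 : Matrix (Fin r) (Fin r) ℝ)) - Atᵀᵀ * Atᵀ).PosSemidef := by
        rw [Matrix.transpose_transpose]; exact hgAt
      have h1 := Odelora.gram_swap Atᵀ hγmax.le h0
      rwa [Matrix.transpose_transpose] at h1
    -- atomic multiplication bounds
    have nBl : ∀ (k' : ℕ) (N : Matrix (Fin r) (Fin k') ℝ), ‖B * N‖ ≤ sx * ‖N‖ :=
      fun _ N => Odelora.gmul_left B hγmax.le hgB N
    have nBtl : ∀ (k' : ℕ) (N : Matrix (Fin r) (Fin k') ℝ), ‖Bt * N‖ ≤ sx * ‖N‖ :=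
      fun _ N => Odelora.gmul_left Bt hγmax.le hgBt N
    have nBTl : ∀ (k' : ℕ) (N : Matrix (Fin m) (Fin k') ℝ), ‖Bᵀ * N‖ ≤ sx * ‖N‖ := by
      intro k' N
      have h0 : ((γmax • (1 : Matrix (Fin m) (Fin m) ℝ)) - Bᵀᵀ * Bᵀ).PosSemidef := by
        rw [Matrix.transpose_transpose]; exact hBsw
      exact Odelora.gmul_left Bᵀ hγmax.le h0 N
    have nBtTl : ∀ (k' : ℕ) (N : Matrix (Fin m) (Fin k') ℝ), ‖Btᵀ * N‖ ≤ sx * ‖N‖ := by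
      intro k' N
      have h0 : ((γmax • (1 : Matrix (Fin m) (Fin m) ℝ)) - Btᵀᵀ * Btᵀ).PosSemidef := by
        rw [Matrix.transpose_transpose]; exact hBtsw
      exact Odelora.gmul_left Btᵀ hγmax.le h0 N
    have nAl : ∀ (k' : ℕ) (N : Matrix (Fin n) (Fin k') ℝ), ‖A * N‖ ≤ sx * ‖N‖ :=
      fun _ N => Odelora.gmul_left A hγmax.le hAsw N
    have nAtl : ∀ (k' : ℕ) (N : Matrix (Fin n) (Fin k') ℝ), ‖At * N‖ ≤ sx * ‖N‖ :=
      fun _ N => Odelora.gmul_left At hγmax.le hAtsw N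
    have nAr : ∀ (k' : ℕ) (N : Matrix (Fin k') (Fin r) ℝ), ‖N * A‖ ≤ sx * ‖N‖ :=
      fun _ N => Odelora.gmul_right A hγmax.le hgA N
    have nAtr : ∀ (k' : ℕ) (N : Matrix (Fin k') (Fin r) ℝ), ‖N * At‖ ≤ sx * ‖N‖ :=
      fun _ N => Odelora.gmul_right At hγmax.le hgAt N
    have nATr : ∀ (k' : ℕ) (N : Matrix (Fin k') (Fin n) ℝ), ‖N * Aᵀ‖ ≤ sx * ‖N‖ := by
      intro k' N
      have h0 : ((γmax • (1 : Matrix (Fin n) (Fin n) ℝ)) - Aᵀ * Aᵀᵀ).PosSemidef := by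
        rw [Matrix.transpose_transpose]; exact hAsw
      exact Odelora.gmul_right Aᵀ hγmax.le h0 N
    have nAtTr : ∀ (k' : ℕ) (N : Matrix (Fin k') (Fin n) ℝ), ‖N * Atᵀ‖ ≤ sx * ‖N‖ := by
      intro k' N
      have h0 : ((γmax • (1 : Matrix (Fin n) (Fin n) ℝ)) - Atᵀ * Atᵀᵀ).PosSemidef := by
        rw [Matrix.transpose_transpose]; exact hAtsw
      exact Odelora.gmul_right Atᵀ hγmax.le h0 N
    have nBr : ∀ (k' : ℕ) (N : Matrix (Fin k') (Fin m) ℝ), ‖N * B‖ ≤ sx * ‖N‖ :=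
      fun _ N => Odelora.gmul_right B hγmax.le hBsw N
    have nBtr : ∀ (k' : ℕ) (N : Matrix (Fin k') (Fin m) ℝ), ‖N * Bt‖ ≤ sx * ‖N‖ :=
      fun _ N => Odelora.gmul_right Bt hγmax.le hBtsw N
    -- inverse bounds
    have nPl : ∀ (k' : ℕ) (N : Matrix (Fin r) (Fin k') ℝ), ‖P⁻¹ * N‖ ≤ im ^ 2 * ‖N‖ := by
      intro k' N
      have h0 := Odelora.inv_norm_left P hγmin hB1 N
      rwa [him2] at h0
    have nQtr : ∀ (k' : ℕ) (N : Matrix (Fin k') (Fin r) ℝ), ‖N * Qt⁻¹‖ ≤ im ^ 2 * ‖N‖ := by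
      intro k' N
      have h0 := Odelora.inv_norm_right Qt hγmin hQtsym hA1t N
      rwa [him2] at h0
    -- half-power operators
    set KB := P⁻¹ * Bᵀ with hKBdef
    set KBt := Pt⁻¹ * Btᵀ with hKBtdef
    set JA := Aᵀ * Q⁻¹ with hJAdef
    set JAt := Atᵀ * Qt⁻¹ with hJAtdef
    have hKBKB : KB * KBᵀ = P⁻¹ := by
      rw [hKBdef, Matrix.transpose_mul, Matrix.transpose_transpose, hPinvT,
        Matrix.mul_assoc, ← Matrix.mul_assoc Bᵀ B P⁻¹, ← hPdef, hPiv.1, Matrix.mul_one]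
    have hKBtKBt : KBt * KBtᵀ = Pt⁻¹ := by
      rw [hKBtdef, Matrix.transpose_mul, Matrix.transpose_transpose, hPtinvT,
        Matrix.mul_assoc, ← Matrix.mul_assoc Btᵀ Bt Pt⁻¹, ← hPtdef, hPtiv.1, Matrix.mul_one]
    have hJAJA : JAᵀ * JA = Q⁻¹ := by
      rw [hJAdef, Matrix.transpose_mul, Matrix.transpose_transpose, hQinvT,
        Matrix.mul_assoc, ← Matrix.mul_assoc A Aᵀ Q⁻¹, ← hQdef, hQiv.1, Matrix.mul_one]
    have hinvPub := Odelora.inv_psd_ub P hγmin hPsym hB1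
    have hinvPtub := Odelora.inv_psd_ub Pt hγmin hPtsym hB1t
    have hinvQub := Odelora.inv_psd_ub Q hγmin hQsym hA1
    have hγinv0 : (0:ℝ) ≤ γmin⁻¹ := inv_nonneg.mpr hγmin.le
    have hgKB : ((γmin⁻¹ • (1 : Matrix (Fin r) (Fin r) ℝ)) - KB * KBᵀ).PosSemidef := by
      rw [hKBKB]; exact hinvPub
    have hgKBt : ((γmin⁻¹ • (1 : Matrix (Fin r) (Fin r) ℝ)) - KBt * KBtᵀ).PosSemidef := by
      rw [hKBtKBt]; exact hinvPtub
    have hgKB2 : ((γmin⁻¹ • (1 : Matrix (Fin m) (Fin m) ℝ)) - KBᵀ * KB).PosSemidef := by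
      have h0 : ((γmin⁻¹ • (1 : Matrix (Fin r) (Fin r) ℝ)) - KBᵀᵀ * KBᵀ).PosSemidef := by
        rw [Matrix.transpose_transpose]; exact hgKB
      have h1 := Odelora.gram_swap KBᵀ hγinv0 h0
      rwa [Matrix.transpose_transpose] at h1
    have hgKBt2 : ((γmin⁻¹ • (1 : Matrix (Fin m) (Fin m) ℝ)) - KBtᵀ * KBt).PosSemidef := by
      have h0 : ((γmin⁻¹ • (1 : Matrix (Fin r) (Fin r) ℝ)) - KBtᵀᵀ * KBtᵀ).PosSemidef := by
        rw [Matrix.transpose_transpose]; exact hgKBt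
      have h1 := Odelora.gram_swap KBtᵀ hγinv0 h0
      rwa [Matrix.transpose_transpose] at h1
    have nKBl : ∀ (k' : ℕ) (N : Matrix (Fin m) (Fin k') ℝ), ‖KB * N‖ ≤ im * ‖N‖ := by
      intro k' N
      have h0 := Odelora.gmul_left KB hγinv0 hgKB2 N
      rwa [Real.sqrt_inv] at h0
    have nKBr : ∀ (k' : ℕ) (N : Matrix (Fin k') (Fin r) ℝ), ‖N * KB‖ ≤ im * ‖N‖ := by
      intro k' N
      have h0 := Odelora.gmul_right KB hγinv0 hgKB N
      rwa [Real.sqrt_inv] at h0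
    have nKBtl : ∀ (k' : ℕ) (N : Matrix (Fin m) (Fin k') ℝ), ‖KBt * N‖ ≤ im * ‖N‖ := by
      intro k' N
      have h0 := Odelora.gmul_left KBt hγinv0 hgKBt2 N
      rwa [Real.sqrt_inv] at h0
    have nKBtr : ∀ (k' : ℕ) (N : Matrix (Fin k') (Fin r) ℝ), ‖N * KBt‖ ≤ im * ‖N‖ := by
      intro k' N
      have h0 := Odelora.gmul_right KBt hγinv0 hgKBt N
      rwa [Real.sqrt_inv] at h0
    have hgJA : ((γmin⁻¹ • (1 : Matrix (Fin r) (Fin r) ℝ)) - JAᵀ * JA).PosSemidef := by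
      rw [hJAJA]; exact hinvQub
    have nJAl : ∀ (k' : ℕ) (N : Matrix (Fin r) (Fin k') ℝ), ‖JA * N‖ ≤ im * ‖N‖ := by
      intro k' N
      have h0 := Odelora.gmul_left JA hγinv0 hgJA N
      rwa [Real.sqrt_inv] at h0
    have nJAr : ∀ (k' : ℕ) (N : Matrix (Fin k') (Fin n) ℝ), ‖N * JA‖ ≤ im * ‖N‖ := by
      intro k' N
      have h1 := Odelora.gram_swap JA hγinv0 hgJA
      have h0 := Odelora.gmul_right JA hγinv0 h1 N
      rwa [Real.sqrt_inv] at h0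
    -- gradient bounds
    have hGb : ‖G‖ ≤ L₀ := by rw [← Odelora.frobNorm_eq]; exact hbound _
    have hGtb : ‖Gt‖ ≤ L₀ := by rw [← Odelora.frobNorm_eq]; exact hbound _
    have hdGb : ‖G - Gt‖ ≤ M * (sx * (‖A - At‖ + ‖B - Bt‖)) := by
      have h := hlip (Wpt + B * A) (Wpt + Bt * At)
      rw [Odelora.frobNorm_eq, Odelora.frobNorm_eq, ← hGdef, ← hGtdef] at h
      have e : (Wpt + B * A) - (Wpt + Bt * At) = B * (A - At) + (B - Bt) * At := by
        rw [Matrix.mul_sub, Matrix.sub_mul]; abel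
      rw [e] at h
      have h2 : ‖B * (A - At) + (B - Bt) * At‖ ≤ sx * ‖A - At‖ + sx * ‖B - Bt‖ :=
        le_trans (norm_add_le _ _) (add_le_add (nBl _ _) (nAtr _ _))
      calc ‖G - Gt‖ ≤ M * ‖B * (A - At) + (B - Bt) * At‖ := h
        _ ≤ M * (sx * ‖A - At‖ + sx * ‖B - Bt‖) := mul_le_mul_of_nonneg_left h2 hM0
        _ = M * (sx * (‖A - At‖ + ‖B - Bt‖)) := by ring
    -- difference identity for KB
    have eKB : KB - KBt = P⁻¹ * (B - Bt)ᵀ + P⁻¹ * (Btᵀ * ((Bt - B) * KBt))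
        + P⁻¹ * (((Bt - B)ᵀ * B) * KBt) := by
      have c1 : Btᵀ * ((Bt - B) * KBt) = Btᵀ - Btᵀ * (B * KBt) := by
        rw [Matrix.sub_mul, Matrix.mul_sub]
        congr 1
        rw [← Matrix.mul_assoc, ← hPtdef, hKBtdef, ← Matrix.mul_assoc, hPtiv.1, Matrix.one_mul]
      have c2 : ((Bt - B)ᵀ * B) * KBt = Btᵀ * (B * KBt) - P * KBt := by
        rw [Matrix.transpose_sub, Matrix.sub_mul, Matrix.sub_mul, Matrix.mul_assoc, ← hPdef]
      have c3 : P⁻¹ * (P * KBt) = KBt := by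
        rw [← Matrix.mul_assoc, hPiv.2, Matrix.one_mul]
      rw [c1, c2, Matrix.mul_sub, Matrix.mul_sub, Matrix.transpose_sub, Matrix.mul_sub, c3,
        hKBdef]
      abel
    have hKBd : ‖KB - KBt‖
        ≤ im^2 * ‖B - Bt‖ + sx * im^3 * ‖B - Bt‖ + sx * im^3 * ‖B - Bt‖ := by
      have b1 : ‖P⁻¹ * (B - Bt)ᵀ‖ ≤ im^2 * ‖B - Bt‖ := by
        calc ‖P⁻¹ * (B - Bt)ᵀ‖ ≤ im^2 * ‖(B - Bt)ᵀ‖ := nPl _ _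
          _ = im^2 * ‖B - Bt‖ := by rw [Matrix.frobenius_norm_transpose]
      have b2 : ‖P⁻¹ * (Btᵀ * ((Bt - B) * KBt))‖ ≤ sx * im^3 * ‖B - Bt‖ := by
        calc ‖P⁻¹ * (Btᵀ * ((Bt - B) * KBt))‖ ≤ im^2 * ‖Btᵀ * ((Bt - B) * KBt)‖ := nPl _ _
          _ ≤ im^2 * (sx * ‖(Bt - B) * KBt‖) :=
              mul_le_mul_of_nonneg_left (nBtTl _ _) (by positivity)
          _ ≤ im^2 * (sx * (im * ‖Bt - B‖)) :=
              mul_le_mul_of_nonneg_left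
                (mul_le_mul_of_nonneg_left (nKBtr _ _) (by positivity)) (by positivity)
          _ = sx * im^3 * ‖B - Bt‖ := by rw [norm_sub_rev]; ring
      have b3 : ‖P⁻¹ * (((Bt - B)ᵀ * B) * KBt)‖ ≤ sx * im^3 * ‖B - Bt‖ := by
        calc ‖P⁻¹ * (((Bt - B)ᵀ * B) * KBt)‖ ≤ im^2 * ‖((Bt - B)ᵀ * B) * KBt‖ := nPl _ _
          _ ≤ im^2 * (im * ‖(Bt - B)ᵀ * B‖) :=
              mul_le_mul_of_nonneg_left (nKBtr _ _) (by positivity)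
          _ ≤ im^2 * (im * (sx * ‖(Bt - B)ᵀ‖)) :=
              mul_le_mul_of_nonneg_left
                (mul_le_mul_of_nonneg_left (nBr _ _) (by positivity)) (by positivity)
          _ = sx * im^3 * ‖B - Bt‖ := by
              rw [Matrix.frobenius_norm_transpose, norm_sub_rev]; ring
      calc ‖KB - KBt‖ = ‖P⁻¹ * (B - Bt)ᵀ + P⁻¹ * (Btᵀ * ((Bt - B) * KBt))
          + P⁻¹ * (((Bt - B)ᵀ * B) * KBt)‖ := by rw [eKB]
        _ ≤ ‖P⁻¹ * (B - Bt)ᵀ‖ + ‖P⁻¹ * (Btᵀ * ((Bt - B) * KBt))‖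
            + ‖P⁻¹ * (((Bt - B)ᵀ * B) * KBt)‖ := norm_add₃_le
        _ ≤ _ := add_le_add (add_le_add b1 b2) b3
    -- difference identity for JA
    have eJA : JA - JAt = (A - At)ᵀ * Qt⁻¹ + JA * ((At * (At - A)ᵀ) * Qt⁻¹)
        + JA * (((At - A) * Aᵀ) * Qt⁻¹) := by
      have c1 : (At * (At - A)ᵀ) * Qt⁻¹ = 1 - (At * Aᵀ) * Qt⁻¹ := by
        rw [Matrix.transpose_sub, Matrix.mul_sub, Matrix.sub_mul, ← hQtdef, hQtiv.1]
      have c2 : ((At - A) * Aᵀ) * Qt⁻¹ = (At * Aᵀ) * Qt⁻¹ - Q * Qt⁻¹ := by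
        rw [Matrix.sub_mul, Matrix.sub_mul, ← hQdef]
      have c3 : JA * (Q * Qt⁻¹) = Aᵀ * Qt⁻¹ := by
        rw [hJAdef, Matrix.mul_assoc, ← Matrix.mul_assoc Q⁻¹ Q Qt⁻¹, hQiv.2, Matrix.one_mul]
      rw [c1, c2, Matrix.mul_sub JA, Matrix.mul_sub JA, Matrix.mul_one, c3,
        Matrix.transpose_sub, Matrix.sub_mul, hJAtdef]
      abel
    have hJAd : ‖JA - JAt‖
        ≤ im^2 * ‖A - At‖ + sx * im^3 * ‖A - At‖ + sx * im^3 * ‖A - At‖ := by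
      have b1 : ‖(A - At)ᵀ * Qt⁻¹‖ ≤ im^2 * ‖A - At‖ := by
        calc ‖(A - At)ᵀ * Qt⁻¹‖ ≤ im^2 * ‖(A - At)ᵀ‖ := nQtr _ _
          _ = im^2 * ‖A - At‖ := by rw [Matrix.frobenius_norm_transpose]
      have b2 : ‖JA * ((At * (At - A)ᵀ) * Qt⁻¹)‖ ≤ sx * im^3 * ‖A - At‖ := by
        calc ‖JA * ((At * (At - A)ᵀ) * Qt⁻¹)‖ ≤ im * ‖(At * (At - A)ᵀ) * Qt⁻¹‖ := nJAl _ _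
          _ ≤ im * (im^2 * ‖At * (At - A)ᵀ‖) :=
              mul_le_mul_of_nonneg_left (nQtr _ _) (by positivity)
          _ ≤ im * (im^2 * (sx * ‖(At - A)ᵀ‖)) :=
              mul_le_mul_of_nonneg_left
                (mul_le_mul_of_nonneg_left (nAtl _ _) (by positivity)) (by positivity)
          _ = sx * im^3 * ‖A - At‖ := by
              rw [Matrix.frobenius_norm_transpose, norm_sub_rev]; ring
      have b3 : ‖JA * (((At - A) * Aᵀ) * Qt⁻¹)‖ ≤ sx * im^3 * ‖A - At‖ := by
        calc ‖JA * (((At - A) * Aᵀ) * Qt⁻¹)‖ ≤ im * ‖((At - A) * Aᵀ) * Qt⁻¹‖ := nJAl _ _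
          _ ≤ im * (im^2 * ‖(At - A) * Aᵀ‖) :=
              mul_le_mul_of_nonneg_left (nQtr _ _) (by positivity)
          _ ≤ im * (im^2 * (sx * ‖At - A‖)) :=
              mul_le_mul_of_nonneg_left
                (mul_le_mul_of_nonneg_left (nATr _ _) (by positivity)) (by positivity)
          _ = sx * im^3 * ‖A - At‖ := by rw [norm_sub_rev]; ring
      calc ‖JA - JAt‖ = ‖(A - At)ᵀ * Qt⁻¹ + JA * ((At * (At - A)ᵀ) * Qt⁻¹)
          + JA * (((At - A) * Aᵀ) * Qt⁻¹)‖ := by rw [eJA]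
        _ ≤ ‖(A - At)ᵀ * Qt⁻¹‖ + ‖JA * ((At * (At - A)ᵀ) * Qt⁻¹)‖
            + ‖JA * (((At - A) * Aᵀ) * Qt⁻¹)‖ := norm_add₃_le
        _ ≤ _ := add_le_add (add_le_add b1 b2) b3
    clear hgrad hlip hbound
    clear_value G Gt P Pt Q Qt KB KBt JA JAt
    -- rewrite hX, hXt in Z-form
    have hZt_eq : A * Gᵀ * B * P⁻¹ = (KB * G * Aᵀ)ᵀ := by
      rw [hKBdef]
      simp only [Matrix.transpose_mul, Matrix.transpose_transpose, hPinvT, Matrix.mul_assoc]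
    have hZt_eqt : At * Gtᵀ * Bt * Pt⁻¹ = (KBt * Gt * Atᵀ)ᵀ := by
      rw [hKBtdef]
      simp only [Matrix.transpose_mul, Matrix.transpose_transpose, hPtinvT, Matrix.mul_assoc]
    rw [hZt_eq] at hX
    rw [hZt_eqt] at hXt
    set S := Q + P with hSdef
    set St := Qt + Pt with hStdef
    set Z := KB * G * Aᵀ with hZdef
    set Zt := KBt * Gt * Atᵀ with hZtdef
    have hSsym : Sᵀ = S := by rw [hSdef, Matrix.transpose_add, hQsym, hPsym]
    have hSpsd : (S - (2*γmin) • (1 : Matrix (Fin r) (Fin r) ℝ)).PosSemidef := by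
      have h0 := hA1.add hB1
      have e : (Q - γmin • (1 : Matrix (Fin r) (Fin r) ℝ)) + (P - γmin • 1)
          = S - (2*γmin) • 1 := by
        rw [hSdef, two_mul, add_smul]; abel
      rwa [e] at h0
    have hStsym : Stᵀ = St := by rw [hStdef, Matrix.transpose_add, hQtsym, hPtsym]
    have hStpsd : (St - (2*γmin) • (1 : Matrix (Fin r) (Fin r) ℝ)).PosSemidef := by
      have h0 := hA1t.add hB1t
      have e : (Qt - γmin • (1 : Matrix (Fin r) (Fin r) ℝ)) + (Pt - γmin • 1)
          = St - (2*γmin) • 1 := by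
        rw [hStdef, two_mul, add_smul]; abel
      rwa [e] at h0
    have hγim : γmin * im^2 = 1 := by
      rw [← hsm2, himdef]; field_simp
    -- norms of Z, Zt and X, Xt
    have hZb : ‖Z‖ ≤ sx * (im * L₀) := by
      rw [hZdef]
      calc ‖KB * G * Aᵀ‖ ≤ sx * ‖KB * G‖ := nATr _ _
        _ ≤ sx * (im * ‖G‖) := mul_le_mul_of_nonneg_left (nKBl _ _) hsx.le
        _ ≤ sx * (im * L₀) := by
            apply mul_le_mul_of_nonneg_left (mul_le_mul_of_nonneg_left hGb him.le) hsx.le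
    have hZtb : ‖Zt‖ ≤ sx * (im * L₀) := by
      rw [hZtdef]
      calc ‖KBt * Gt * Atᵀ‖ ≤ sx * ‖KBt * Gt‖ := nAtTr _ _
        _ ≤ sx * (im * ‖Gt‖) := mul_le_mul_of_nonneg_left (nKBtl _ _) hsx.le
        _ ≤ sx * (im * L₀) := by
            apply mul_le_mul_of_nonneg_left (mul_le_mul_of_nonneg_left hGtb him.le) hsx.le
    have hXb : ‖X‖ ≤ sx * im^3 * L₀ / 2 := by
      have hs := Odelora.sylv S hγmin hSsym hSpsd X (Z + Zᵀ) hX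
      have h4 : 4 * γmin * ‖X‖ ≤ 2 * (sx * (im * L₀)) := by
        have hC : ‖Z + Zᵀ‖ ≤ 2 * ‖Z‖ := by
          calc ‖Z + Zᵀ‖ ≤ ‖Z‖ + ‖Zᵀ‖ := norm_add_le _ _
            _ = 2 * ‖Z‖ := by rw [Matrix.frobenius_norm_transpose]; ring
        calc 4 * γmin * ‖X‖ ≤ ‖Z + Zᵀ‖ := hs
          _ ≤ 2 * ‖Z‖ := hC
          _ ≤ 2 * (sx * (im * L₀)) := by linarith [hZb]
      calc ‖X‖ = (γmin * im^2) * ‖X‖ := by rw [hγim, one_mul]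
        _ = (im^2/4) * (4 * γmin * ‖X‖) := by ring
        _ ≤ (im^2/4) * (2 * (sx * (im * L₀))) :=
            mul_le_mul_of_nonneg_left h4 (by positivity)
        _ = sx * im^3 * L₀ / 2 := by ring
    have hXtb : ‖Xt‖ ≤ sx * im^3 * L₀ / 2 := by
      have hs := Odelora.sylv St hγmin hStsym hStpsd Xt (Zt + Ztᵀ) hXt
      have h4 : 4 * γmin * ‖Xt‖ ≤ 2 * (sx * (im * L₀)) := by
        have hC : ‖Zt + Ztᵀ‖ ≤ 2 * ‖Zt‖ := by
          calc ‖Zt + Ztᵀ‖ ≤ ‖Zt‖ + ‖Ztᵀ‖ := norm_add_le _ _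
            _ = 2 * ‖Zt‖ := by rw [Matrix.frobenius_norm_transpose]; ring
        calc 4 * γmin * ‖Xt‖ ≤ ‖Zt + Ztᵀ‖ := hs
          _ ≤ 2 * ‖Zt‖ := hC
          _ ≤ 2 * (sx * (im * L₀)) := by linarith [hZtb]
      calc ‖Xt‖ = (γmin * im^2) * ‖Xt‖ := by rw [hγim, one_mul]
        _ = (im^2/4) * (4 * γmin * ‖Xt‖) := by ring
        _ ≤ (im^2/4) * (2 * (sx * (im * L₀))) :=
            mul_le_mul_of_nonneg_left h4 (by positivity)
        _ = sx * im^3 * L₀ / 2 := by ring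
    -- difference of Z
    have eZ : Z - Zt = (KB - KBt) * (G * Aᵀ) + KBt * ((G - Gt) * Aᵀ)
        + (KBt * Gt) * (A - At)ᵀ := by
      rw [hZdef, hZtdef]
      simp only [Matrix.sub_mul, Matrix.mul_sub, Matrix.transpose_sub, Matrix.mul_assoc]
      abel
    have hGAb : ‖G * Aᵀ‖ ≤ sx * L₀ := by
      calc ‖G * Aᵀ‖ ≤ sx * ‖G‖ := nATr _ _
        _ ≤ sx * L₀ := mul_le_mul_of_nonneg_left hGb hsx.le
    have hKBtGt : ‖KBt * Gt‖ ≤ im * L₀ := by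
      calc ‖KBt * Gt‖ ≤ im * ‖Gt‖ := nKBtl _ _
        _ ≤ im * L₀ := mul_le_mul_of_nonneg_left hGtb him.le
    have hZdb : ‖Z - Zt‖
        ≤ (im^2 * ‖B - Bt‖ + sx*im^3*‖B - Bt‖ + sx*im^3*‖B - Bt‖) * (sx * L₀)
          + im * (sx * (M * (sx * (‖A - At‖ + ‖B - Bt‖)))) + (im * L₀) * ‖A - At‖ := by
      have p1 : ‖(KB - KBt) * (G * Aᵀ)‖
          ≤ (im^2 * ‖B - Bt‖ + sx*im^3*‖B - Bt‖ + sx*im^3*‖B - Bt‖) * (sx * L₀) := by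
        calc ‖(KB - KBt) * (G * Aᵀ)‖ ≤ ‖KB - KBt‖ * ‖G * Aᵀ‖ :=
              Matrix.frobenius_norm_mul _ _
          _ ≤ _ := mul_le_mul hKBd hGAb (norm_nonneg _) (by positivity)
      have p2 : ‖KBt * ((G - Gt) * Aᵀ)‖
          ≤ im * (sx * (M * (sx * (‖A - At‖ + ‖B - Bt‖)))) := by
        calc ‖KBt * ((G - Gt) * Aᵀ)‖ ≤ im * ‖(G - Gt) * Aᵀ‖ := nKBtl _ _
          _ ≤ im * (sx * ‖G - Gt‖) := mul_le_mul_of_nonneg_left (nATr _ _) him.le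
          _ ≤ im * (sx * (M * (sx * (‖A - At‖ + ‖B - Bt‖)))) := by
              apply mul_le_mul_of_nonneg_left
                (mul_le_mul_of_nonneg_left hdGb hsx.le) him.le
      have p3 : ‖(KBt * Gt) * (A - At)ᵀ‖ ≤ (im * L₀) * ‖A - At‖ := by
        calc ‖(KBt * Gt) * (A - At)ᵀ‖ ≤ ‖KBt * Gt‖ * ‖(A - At)ᵀ‖ :=
              Matrix.frobenius_norm_mul _ _
          _ ≤ (im * L₀) * ‖(A - At)ᵀ‖ :=
              mul_le_mul_of_nonneg_right hKBtGt (norm_nonneg _)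
          _ = (im * L₀) * ‖A - At‖ := by rw [Matrix.frobenius_norm_transpose]
      calc ‖Z - Zt‖ = ‖(KB - KBt) * (G * Aᵀ) + KBt * ((G - Gt) * Aᵀ)
          + (KBt * Gt) * (A - At)ᵀ‖ := by rw [eZ]
        _ ≤ ‖(KB - KBt) * (G * Aᵀ)‖ + ‖KBt * ((G - Gt) * Aᵀ)‖
            + ‖(KBt * Gt) * (A - At)ᵀ‖ := norm_add₃_le
        _ ≤ _ := add_le_add (add_le_add p1 p2) p3
    -- S difference
    have eS : S - St = A * (A - At)ᵀ + (A - At) * Atᵀ + (Bᵀ * (B - Bt) + (B - Bt)ᵀ * Bt) := by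
      rw [hSdef, hStdef, hQdef, hQtdef, hPdef, hPtdef]
      simp only [Matrix.mul_sub, Matrix.sub_mul, Matrix.transpose_sub]
      abel
    have hSdb : ‖S - St‖ ≤ 2 * sx * (‖A - At‖ + ‖B - Bt‖) := by
      have q1 : ‖A * (A - At)ᵀ‖ ≤ sx * ‖A - At‖ := by
        calc ‖A * (A - At)ᵀ‖ ≤ sx * ‖(A - At)ᵀ‖ := nAl _ _
          _ = sx * ‖A - At‖ := by rw [Matrix.frobenius_norm_transpose]
      have q2 : ‖(A - At) * Atᵀ‖ ≤ sx * ‖A - At‖ := nAtTr _ _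
      have q3 : ‖Bᵀ * (B - Bt)‖ ≤ sx * ‖B - Bt‖ := nBTl _ _
      have q4 : ‖(B - Bt)ᵀ * Bt‖ ≤ sx * ‖B - Bt‖ := by
        calc ‖(B - Bt)ᵀ * Bt‖ ≤ sx * ‖(B - Bt)ᵀ‖ := nBtr _ _
          _ = sx * ‖B - Bt‖ := by rw [Matrix.frobenius_norm_transpose]
      calc ‖S - St‖ = ‖A * (A - At)ᵀ + (A - At) * Atᵀ
          + (Bᵀ * (B - Bt) + (B - Bt)ᵀ * Bt)‖ := by rw [eS]
        _ ≤ ‖A * (A - At)ᵀ‖ + ‖(A - At) * Atᵀ‖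
            + (‖Bᵀ * (B - Bt)‖ + ‖(B - Bt)ᵀ * Bt‖) :=
            le_trans (norm_add₃_le) (by
              have := norm_add_le (Bᵀ * (B - Bt)) ((B - Bt)ᵀ * Bt)
              linarith)
        _ ≤ 2 * sx * (‖A - At‖ + ‖B - Bt‖) := by linarith
    -- Sylvester equation for the difference
    have eSyl : S * (X - Xt) + (X - Xt) * S
        = ((Z + Zᵀ) - (Zt + Ztᵀ)) - ((S - St) * Xt + Xt * (S - St)) := by
      rw [← hX, ← hXt]
      simp only [Matrix.sub_mul, Matrix.mul_sub]
      abel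
    have hsylD := Odelora.sylv S hγmin hSsym hSpsd (X - Xt) _ eSyl
    have hXdb : ‖X - Xt‖ ≤ (im^2/4) * (2 * ‖Z - Zt‖ + 2 * ‖S - St‖ * ‖Xt‖) := by
      have hD : ‖((Z + Zᵀ) - (Zt + Ztᵀ)) - ((S - St) * Xt + Xt * (S - St))‖
          ≤ 2 * ‖Z - Zt‖ + 2 * ‖S - St‖ * ‖Xt‖ := by
        have e1 : (Z + Zᵀ) - (Zt + Ztᵀ) = (Z - Zt) + (Z - Zt)ᵀ := by
          rw [Matrix.transpose_sub]; abel
        have h1 : ‖(Z + Zᵀ) - (Zt + Ztᵀ)‖ ≤ 2 * ‖Z - Zt‖ := by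
          rw [e1]
          calc ‖(Z - Zt) + (Z - Zt)ᵀ‖ ≤ ‖Z - Zt‖ + ‖(Z - Zt)ᵀ‖ := norm_add_le _ _
            _ = 2 * ‖Z - Zt‖ := by rw [Matrix.frobenius_norm_transpose]; ring
        have h2 : ‖(S - St) * Xt + Xt * (S - St)‖ ≤ 2 * ‖S - St‖ * ‖Xt‖ := by
          calc ‖(S - St) * Xt + Xt * (S - St)‖
              ≤ ‖(S - St) * Xt‖ + ‖Xt * (S - St)‖ := norm_add_le _ _
            _ ≤ ‖S - St‖ * ‖Xt‖ + ‖Xt‖ * ‖S - St‖ :=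
                add_le_add (Matrix.frobenius_norm_mul _ _) (Matrix.frobenius_norm_mul _ _)
            _ = 2 * ‖S - St‖ * ‖Xt‖ := by ring
        calc ‖((Z + Zᵀ) - (Zt + Ztᵀ)) - ((S - St) * Xt + Xt * (S - St))‖
            ≤ ‖(Z + Zᵀ) - (Zt + Ztᵀ)‖ + ‖(S - St) * Xt + Xt * (S - St)‖ := norm_sub_le _ _
          _ ≤ 2 * ‖Z - Zt‖ + 2 * ‖S - St‖ * ‖Xt‖ := add_le_add h1 h2
      calc ‖X - Xt‖ = (γmin * im^2) * ‖X - Xt‖ := by rw [hγim, one_mul]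
        _ = (im^2/4) * (4 * γmin * ‖X - Xt‖) := by ring
        _ ≤ (im^2/4) * ‖((Z + Zᵀ) - (Zt + Ztᵀ)) - ((S - St) * Xt + Xt * (S - St))‖ :=
            mul_le_mul_of_nonneg_left hsylD (by positivity)
        _ ≤ (im^2/4) * (2 * ‖Z - Zt‖ + 2 * ‖S - St‖ * ‖Xt‖) :=
            mul_le_mul_of_nonneg_left hD (by positivity)
    have hXdm : ‖X - Xt‖
        ≤ L₀ * sx * im^4 / 2 * ‖B - Bt‖ + L₀ * sx^2 * im^5 * ‖B - Bt‖
          + M * sx^2 * im^3 / 2 * (‖A - At‖ + ‖B - Bt‖) + L₀ * im^3 / 2 * ‖A - At‖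
          + L₀ * sx^2 * im^5 / 2 * (‖A - At‖ + ‖B - Bt‖) := by
      have hmul : ‖S - St‖ * ‖Xt‖
          ≤ (2 * sx * (‖A - At‖ + ‖B - Bt‖)) * (sx * im^3 * L₀ / 2) :=
        mul_le_mul hSdb hXtb (norm_nonneg _) (by positivity)
      calc ‖X - Xt‖ ≤ (im^2/4) * (2 * ‖Z - Zt‖ + 2 * ‖S - St‖ * ‖Xt‖) := hXdb
        _ ≤ (im^2/4) * (2 * ((im^2 * ‖B - Bt‖ + sx*im^3*‖B - Bt‖ + sx*im^3*‖B - Bt‖) * (sx * L₀)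
              + im * (sx * (M * (sx * (‖A - At‖ + ‖B - Bt‖)))) + (im * L₀) * ‖A - At‖)
            + 2 * ((2 * sx * (‖A - At‖ + ‖B - Bt‖)) * (sx * im^3 * L₀ / 2))) := by
            apply mul_le_mul_of_nonneg_left _ (by positivity)
            linarith [hZdb, hmul]
        _ = _ := by ring
    -- projection facts (tilde side)
    have hKBtBt : KBt * Bt = 1 := by
      rw [hKBtdef, Matrix.mul_assoc, ← hPtdef]; exact hPtiv.2
    have hPitsym : (Bt * KBt)ᵀ = Bt * KBt := by
      rw [hKBtdef, Matrix.transpose_mul, Matrix.transpose_mul, Matrix.transpose_transpose,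
        hPtinvT, Matrix.mul_assoc]
    have hPitidem : (Bt * KBt) * (Bt * KBt) = Bt * KBt := by
      rw [Matrix.mul_assoc, ← Matrix.mul_assoc KBt Bt KBt, hKBtBt, Matrix.one_mul]
    have nRt : ∀ (k' : ℕ) (N : Matrix (Fin m) (Fin k') ℝ),
        ‖((1 : Matrix (Fin m) (Fin m) ℝ) - Bt * KBt) * N‖ ≤ ‖N‖ :=
      fun _ N => Odelora.proj_contraction _ hPitsym hPitidem N
    -- rewrite the FB expressions in the goal
    have eFBexpr : ((1 : Matrix (Fin m) (Fin m) ℝ) - B * P⁻¹ * Bᵀ) * G * Aᵀ * Q⁻¹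
        = ((1 : Matrix (Fin m) (Fin m) ℝ) - B * KB) * (G * JA) := by
      rw [hKBdef, hJAdef]; simp only [Matrix.mul_assoc]
    have eFBtexpr : ((1 : Matrix (Fin m) (Fin m) ℝ) - Bt * Pt⁻¹ * Btᵀ) * Gt * Atᵀ * Qt⁻¹
        = ((1 : Matrix (Fin m) (Fin m) ℝ) - Bt * KBt) * (Gt * JAt) := by
      rw [hKBtdef, hJAtdef]; simp only [Matrix.mul_assoc]
    rw [eFBexpr, eFBtexpr]
    clear_value S St Z Zt
    -- per-term bounds, upgraded to the final units
    have tb1 : ‖(KB - KBt) * G‖ ≤ 3 * (L₀*(sx^4*im^6)) * ‖B - Bt‖ := by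
      calc ‖(KB - KBt) * G‖ ≤ ‖KB - KBt‖ * ‖G‖ := Matrix.frobenius_norm_mul _ _
        _ ≤ (im^2 * ‖B - Bt‖ + sx*im^3*‖B - Bt‖ + sx*im^3*‖B - Bt‖) * L₀ :=
            mul_le_mul hKBd hGb (norm_nonneg _) (by positivity)
        _ ≤ 3 * (L₀*(sx^4*im^6)) * ‖B - Bt‖ := by
            linarith [mul_le_mul_of_nonneg_left hxi4
                (show (0:ℝ) ≤ L₀ * ‖B - Bt‖ * im^2 by positivity),
              mul_le_mul_of_nonneg_left hxi3
                (show (0:ℝ) ≤ L₀ * ‖B - Bt‖ * (sx*im^3) by positivity)]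
    have tb2 : ‖KBt * (G - Gt)‖ ≤ (M*(sx^3*im^3)) * (‖A - At‖ + ‖B - Bt‖) := by
      calc ‖KBt * (G - Gt)‖ ≤ im * ‖G - Gt‖ := nKBtl _ _
        _ ≤ im * (M * (sx * (‖A - At‖ + ‖B - Bt‖))) :=
            mul_le_mul_of_nonneg_left hdGb him.le
        _ ≤ (M*(sx^3*im^3)) * (‖A - At‖ + ‖B - Bt‖) := by
            linarith [mul_le_mul_of_nonneg_left hxi2
              (show (0:ℝ) ≤ M * (‖A - At‖ + ‖B - Bt‖) * (sx*im) by positivity)]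
    have tb3 : ‖(X - Xt) * A‖
        ≤ (L₀*(sx^4*im^6)) * (‖A - At‖ + 2*‖B - Bt‖)
          + (M*(sx^3*im^3))/2 * (‖A - At‖ + ‖B - Bt‖) := by
      calc ‖(X - Xt) * A‖ ≤ sx * ‖X - Xt‖ := nAr _ _
        _ ≤ sx * (L₀ * sx * im^4 / 2 * ‖B - Bt‖ + L₀ * sx^2 * im^5 * ‖B - Bt‖
              + M * sx^2 * im^3 / 2 * (‖A - At‖ + ‖B - Bt‖) + L₀ * im^3 / 2 * ‖A - At‖
              + L₀ * sx^2 * im^5 / 2 * (‖A - At‖ + ‖B - Bt‖)) :=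
            mul_le_mul_of_nonneg_left hXdm hsx.le
        _ ≤ _ := by
            linarith [mul_le_mul_of_nonneg_left hxi2
                (show (0:ℝ) ≤ L₀ * ‖B - Bt‖ * (sx^2*im^4) / 2 by positivity),
              mul_le_mul_of_nonneg_left hxi
                (show (0:ℝ) ≤ L₀ * ‖B - Bt‖ * (sx^3*im^5) by positivity),
              mul_le_mul_of_nonneg_left hxi3
                (show (0:ℝ) ≤ L₀ * ‖A - At‖ * (sx*im^3) / 2 by positivity),
              mul_le_mul_of_nonneg_left hxi
                (show (0:ℝ) ≤ L₀ * (‖A - At‖ + ‖B - Bt‖) * (sx^3*im^5) / 2 by positivity)]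
    have tb4 : ‖Xt * (A - At)‖ ≤ (L₀*(sx^4*im^6))/2 * ‖A - At‖ := by
      calc ‖Xt * (A - At)‖ ≤ ‖Xt‖ * ‖A - At‖ := Matrix.frobenius_norm_mul _ _
        _ ≤ (sx * im^3 * L₀ / 2) * ‖A - At‖ :=
            mul_le_mul_of_nonneg_right hXtb (norm_nonneg _)
        _ ≤ _ := by
            linarith [mul_le_mul_of_nonneg_left hxi3
              (show (0:ℝ) ≤ L₀ * ‖A - At‖ * (sx*im^3) / 2 by positivity)]
    -- FB pieces
    have hRd : ‖((1 : Matrix (Fin m) (Fin m) ℝ) - B * KB)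
        - ((1 : Matrix (Fin m) (Fin m) ℝ) - Bt * KBt)‖
        ≤ im * ‖B - Bt‖ + sx * (im^2 * ‖B - Bt‖ + sx*im^3*‖B - Bt‖ + sx*im^3*‖B - Bt‖) := by
      have e : ((1 : Matrix (Fin m) (Fin m) ℝ) - B * KB)
          - ((1 : Matrix (Fin m) (Fin m) ℝ) - Bt * KBt)
          = -((B - Bt) * KB) + -(Bt * (KB - KBt)) := by
        simp only [Matrix.sub_mul, Matrix.mul_sub]; abel
      rw [e]
      calc ‖-((B - Bt) * KB) + -(Bt * (KB - KBt))‖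
          ≤ ‖-((B - Bt) * KB)‖ + ‖-(Bt * (KB - KBt))‖ := norm_add_le _ _
        _ = ‖(B - Bt) * KB‖ + ‖Bt * (KB - KBt)‖ := by rw [norm_neg, norm_neg]
        _ ≤ im * ‖B - Bt‖ + sx * ‖KB - KBt‖ := add_le_add (nKBr _ _) (nBtl _ _)
        _ ≤ _ := by
            have := mul_le_mul_of_nonneg_left hKBd hsx.le
            linarith
    have hGJA : ‖G * JA‖ ≤ im * L₀ := by
      calc ‖G * JA‖ ≤ im * ‖G‖ := nJAr _ _
        _ ≤ im * L₀ := mul_le_mul_of_nonneg_left hGb him.le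
    have tb5 : ‖(((1 : Matrix (Fin m) (Fin m) ℝ) - B * KB)
        - ((1 : Matrix (Fin m) (Fin m) ℝ) - Bt * KBt)) * (G * JA)‖
        ≤ 4 * (L₀*(sx^4*im^6)) * ‖B - Bt‖ := by
      calc ‖_ * (G * JA)‖ ≤ ‖((1 : Matrix (Fin m) (Fin m) ℝ) - B * KB)
            - ((1 : Matrix (Fin m) (Fin m) ℝ) - Bt * KBt)‖ * ‖G * JA‖ :=
            Matrix.frobenius_norm_mul _ _
        _ ≤ (im * ‖B - Bt‖ + sx * (im^2 * ‖B - Bt‖ + sx*im^3*‖B - Bt‖ + sx*im^3*‖B - Bt‖))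
              * (im * L₀) := mul_le_mul hRd hGJA (norm_nonneg _) (by positivity)
        _ ≤ _ := by
            linarith [mul_le_mul_of_nonneg_left hxi4
                (show (0:ℝ) ≤ L₀ * ‖B - Bt‖ * im^2 by positivity),
              mul_le_mul_of_nonneg_left hxi3
                (show (0:ℝ) ≤ L₀ * ‖B - Bt‖ * (sx*im^3) by positivity),
              mul_le_mul_of_nonneg_left hxi2
                (show (0:ℝ) ≤ L₀ * ‖B - Bt‖ * (sx^2*im^4) by positivity)]
    have tb6 : ‖((1 : Matrix (Fin m) (Fin m) ℝ) - Bt * KBt) * ((G - Gt) * JA)‖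
        ≤ (M*(sx^3*im^3)) * (‖A - At‖ + ‖B - Bt‖) := by
      calc ‖((1 : Matrix (Fin m) (Fin m) ℝ) - Bt * KBt) * ((G - Gt) * JA)‖
          ≤ ‖(G - Gt) * JA‖ := nRt _ _
        _ ≤ im * ‖G - Gt‖ := nJAr _ _
        _ ≤ im * (M * (sx * (‖A - At‖ + ‖B - Bt‖))) :=
            mul_le_mul_of_nonneg_left hdGb him.le
        _ ≤ _ := by
            linarith [mul_le_mul_of_nonneg_left hxi2
              (show (0:ℝ) ≤ M * (‖A - At‖ + ‖B - Bt‖) * (sx*im) by positivity)]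
    have tb7 : ‖(((1 : Matrix (Fin m) (Fin m) ℝ) - Bt * KBt) * Gt) * (JA - JAt)‖
        ≤ 3 * (L₀*(sx^4*im^6)) * ‖A - At‖ := by
      calc ‖(((1 : Matrix (Fin m) (Fin m) ℝ) - Bt * KBt) * Gt) * (JA - JAt)‖
          ≤ ‖((1 : Matrix (Fin m) (Fin m) ℝ) - Bt * KBt) * Gt‖ * ‖JA - JAt‖ :=
            Matrix.frobenius_norm_mul _ _
        _ ≤ L₀ * (im^2 * ‖A - At‖ + sx*im^3*‖A - At‖ + sx*im^3*‖A - At‖) :=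
            mul_le_mul (le_trans (nRt _ _) hGtb) hJAd (norm_nonneg _) hL0
        _ ≤ _ := by
            linarith [mul_le_mul_of_nonneg_left hxi4
                (show (0:ℝ) ≤ L₀ * ‖A - At‖ * im^2 by positivity),
              mul_le_mul_of_nonneg_left hxi3
                (show (0:ℝ) ≤ L₀ * ‖A - At‖ * (sx*im^3) by positivity)]
    have tb8 : ‖(B - Bt) * X‖ ≤ (L₀*(sx^4*im^6))/2 * ‖B - Bt‖ := by
      calc ‖(B - Bt) * X‖ ≤ ‖B - Bt‖ * ‖X‖ := Matrix.frobenius_norm_mul _ _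
        _ ≤ ‖B - Bt‖ * (sx * im^3 * L₀ / 2) :=
            mul_le_mul_of_nonneg_left hXb (norm_nonneg _)
        _ ≤ _ := by
            linarith [mul_le_mul_of_nonneg_left hxi3
              (show (0:ℝ) ≤ L₀ * ‖B - Bt‖ * (sx*im^3) / 2 by positivity)]
    have tb9 : ‖Bt * (X - Xt)‖
        ≤ (L₀*(sx^4*im^6)) * (‖A - At‖ + 2*‖B - Bt‖)
          + (M*(sx^3*im^3))/2 * (‖A - At‖ + ‖B - Bt‖) := by
      calc ‖Bt * (X - Xt)‖ ≤ sx * ‖X - Xt‖ := nBtl _ _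
        _ ≤ sx * (L₀ * sx * im^4 / 2 * ‖B - Bt‖ + L₀ * sx^2 * im^5 * ‖B - Bt‖
              + M * sx^2 * im^3 / 2 * (‖A - At‖ + ‖B - Bt‖) + L₀ * im^3 / 2 * ‖A - At‖
              + L₀ * sx^2 * im^5 / 2 * (‖A - At‖ + ‖B - Bt‖)) :=
            mul_le_mul_of_nonneg_left hXdm hsx.le
        _ ≤ _ := by
            linarith [mul_le_mul_of_nonneg_left hxi2
                (show (0:ℝ) ≤ L₀ * ‖B - Bt‖ * (sx^2*im^4) / 2 by positivity),
              mul_le_mul_of_nonneg_left hxi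
                (show (0:ℝ) ≤ L₀ * ‖B - Bt‖ * (sx^3*im^5) by positivity),
              mul_le_mul_of_nonneg_left hxi3
                (show (0:ℝ) ≤ L₀ * ‖A - At‖ * (sx*im^3) / 2 by positivity),
              mul_le_mul_of_nonneg_left hxi
                (show (0:ℝ) ≤ L₀ * (‖A - At‖ + ‖B - Bt‖) * (sx^3*im^5) / 2 by positivity)]
    -- decompositions
    have eFA : (-(KB * G) + X * A) - (-(KBt * Gt) + Xt * At)
        = -((KB - KBt) * G) + -(KBt * (G - Gt)) + ((X - Xt) * A + Xt * (A - At)) := by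
      simp only [Matrix.sub_mul, Matrix.mul_sub]; abel
    have hFAb : ‖(-(KB * G) + X * A) - (-(KBt * Gt) + Xt * At)‖
        ≤ 3 * (L₀*(sx^4*im^6)) * ‖B - Bt‖ + (M*(sx^3*im^3)) * (‖A - At‖ + ‖B - Bt‖)
          + ((L₀*(sx^4*im^6)) * (‖A - At‖ + 2*‖B - Bt‖)
              + (M*(sx^3*im^3))/2 * (‖A - At‖ + ‖B - Bt‖)
            + (L₀*(sx^4*im^6))/2 * ‖A - At‖) := by
      rw [eFA]
      calc ‖-((KB - KBt) * G) + -(KBt * (G - Gt)) + ((X - Xt) * A + Xt * (A - At))‖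
          ≤ ‖-((KB - KBt) * G)‖ + ‖-(KBt * (G - Gt))‖ + ‖(X - Xt) * A + Xt * (A - At)‖ :=
            norm_add₃_le
        _ ≤ ‖(KB - KBt) * G‖ + ‖KBt * (G - Gt)‖ + (‖(X - Xt) * A‖ + ‖Xt * (A - At)‖) := by
            rw [norm_neg, norm_neg]
            exact add_le_add_right (norm_add_le _ _) _
        _ ≤ _ := add_le_add (add_le_add tb1 tb2) (add_le_add tb3 tb4)
    have eFB : (-(((1 : Matrix (Fin m) (Fin m) ℝ) - B * KB) * (G * JA)) - B * X)
        - (-(((1 : Matrix (Fin m) (Fin m) ℝ) - Bt * KBt) * (Gt * JAt)) - Bt * Xt)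
        = -((((1 : Matrix (Fin m) (Fin m) ℝ) - B * KB)
              - ((1 : Matrix (Fin m) (Fin m) ℝ) - Bt * KBt)) * (G * JA))
          + -(((1 : Matrix (Fin m) (Fin m) ℝ) - Bt * KBt) * ((G - Gt) * JA))
          + (-((((1 : Matrix (Fin m) (Fin m) ℝ) - Bt * KBt) * Gt) * (JA - JAt))
            + (-((B - Bt) * X) + -(Bt * (X - Xt)))) := by
      simp only [Matrix.sub_mul, Matrix.mul_sub, Matrix.mul_assoc]; abel
    have hFBb : ‖(-(((1 : Matrix (Fin m) (Fin m) ℝ) - B * KB) * (G * JA)) - B * X)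
        - (-(((1 : Matrix (Fin m) (Fin m) ℝ) - Bt * KBt) * (Gt * JAt)) - Bt * Xt)‖
        ≤ 4 * (L₀*(sx^4*im^6)) * ‖B - Bt‖
          + (M*(sx^3*im^3)) * (‖A - At‖ + ‖B - Bt‖)
          + (3 * (L₀*(sx^4*im^6)) * ‖A - At‖
            + ((L₀*(sx^4*im^6))/2 * ‖B - Bt‖
              + ((L₀*(sx^4*im^6)) * (‖A - At‖ + 2*‖B - Bt‖)
                + (M*(sx^3*im^3))/2 * (‖A - At‖ + ‖B - Bt‖)))) := by
      rw [eFB]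
      calc ‖_ + _ + _‖
          ≤ ‖-((((1 : Matrix (Fin m) (Fin m) ℝ) - B * KB)
              - ((1 : Matrix (Fin m) (Fin m) ℝ) - Bt * KBt)) * (G * JA))‖
            + ‖-(((1 : Matrix (Fin m) (Fin m) ℝ) - Bt * KBt) * ((G - Gt) * JA))‖
            + ‖-((((1 : Matrix (Fin m) (Fin m) ℝ) - Bt * KBt) * Gt) * (JA - JAt))
                + (-((B - Bt) * X) + -(Bt * (X - Xt)))‖ := norm_add₃_le
        _ ≤ ‖(((1 : Matrix (Fin m) (Fin m) ℝ) - B * KB)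
              - ((1 : Matrix (Fin m) (Fin m) ℝ) - Bt * KBt)) * (G * JA)‖
            + ‖((1 : Matrix (Fin m) (Fin m) ℝ) - Bt * KBt) * ((G - Gt) * JA)‖
            + (‖(((1 : Matrix (Fin m) (Fin m) ℝ) - Bt * KBt) * Gt) * (JA - JAt)‖
              + (‖(B - Bt) * X‖ + ‖Bt * (X - Xt)‖)) := by
            rw [norm_neg, norm_neg]
            apply add_le_add_right
            calc ‖-((((1 : Matrix (Fin m) (Fin m) ℝ) - Bt * KBt) * Gt) * (JA - JAt))
                + (-((B - Bt) * X) + -(Bt * (X - Xt)))‖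
                ≤ ‖-((((1 : Matrix (Fin m) (Fin m) ℝ) - Bt * KBt) * Gt) * (JA - JAt))‖
                  + ‖-((B - Bt) * X) + -(Bt * (X - Xt))‖ := norm_add_le _ _
              _ ≤ _ := by
                  rw [norm_neg]
                  apply add_le_add_right
                  calc ‖-((B - Bt) * X) + -(Bt * (X - Xt))‖
                      ≤ ‖-((B - Bt) * X)‖ + ‖-(Bt * (X - Xt))‖ := norm_add_le _ _
                    _ = ‖(B - Bt) * X‖ + ‖Bt * (X - Xt)‖ := by rw [norm_neg, norm_neg]
        _ ≤ _ := add_le_add (add_le_add tb5 tb6) (add_le_add tb7 (add_le_add tb8 tb9))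
    -- final combination
    have hRHSeq : 18 * L₀ * γmax ^ 2 / γmin ^ 3 + 3 * M * γmax ^ ((3:ℝ)/2) / γmin ^ ((3:ℝ)/2)
        = 18*(L₀*(sx^4*im^6)) + 3*(M*(sx^3*im^3)) := by
      rw [Odelora.rpow_3_2 hγmax.le, Odelora.rpow_3_2 hγmin.le, ← hsxdef, ← hsmdef,
        ← hsx2, ← hsm2, himdef]
      field_simp
    rw [hRHSeq]
    refine le_trans (add_le_add hFAb hFBb) ?_
    have hUU : 0 ≤ L₀*(sx^4*im^6) := by positivity
    have hVV : 0 ≤ M*(sx^3*im^3) := mul_nonneg hM0 (by positivity)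
    linarith [mul_nonneg hUU (norm_nonneg (A - At)), mul_nonneg hUU (norm_nonneg (B - Bt)),
      mul_nonneg hVV (norm_nonneg (A - At)), mul_nonneg hVV (norm_nonneg (B - Bt))]
end

section
/- Let γ_min, γ_max > 0, let A ∈ ℝ^{r×n} and B ∈ ℝ^{m×r} satisfy γ_min·I ⪯ AAᵀ ⪯ γ_max·I and γ_min·I ⪯ BᵀB ⪯ γ_max·I, and let G ∈ ℝ^{m×n} with ‖G‖_F ≤ L₀. Let X be the unique solution of (AAᵀ + BᵀB)·X + X·(AAᵀ + BᵀB) = (BᵀB)⁻¹BᵀGAᵀ + AGᵀB(BᵀB)⁻¹, and define F_A := −(BᵀB)⁻¹BᵀG + X·A and F_B := −(I − B(BᵀB)⁻¹Bᵀ)·G·Aᵀ(AAᵀ)⁻¹ − B·X. Then ‖F_A‖_F + ‖F_B‖_F ≤ 2·L₀/√γ_min + L₀·γ_max/γ_min^{3/2}. -/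
open Matrix

set_option linter.unusedSectionVars false
set_option linter.unusedVariables false
set_option maxHeartbeats 1000000

namespace OdeAux

variable {a b d : Type*} [Fintype a] [Fintype b] [Fintype d]

/-- Sum of squares of entries. -/
noncomputable def F2 (M : Matrix a b ℝ) : ℝ := ∑ i, ∑ j, (M i j) ^ 2

lemma F2_nonneg (M : Matrix a b ℝ) : 0 ≤ F2 M := by
  unfold F2; positivity

lemma F2_transpose (M : Matrix a b ℝ) : F2 Mᵀ = F2 M := by
  unfold F2; rw [Finset.sum_comm]; rfl

lemma F2_neg (M : Matrix a b ℝ) : F2 (-M) = F2 M := by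
  unfold F2; simp

lemma F2_eq_trace (M : Matrix a b ℝ) : F2 M = (M * Mᵀ).trace := by
  unfold F2
  simp [Matrix.trace, Matrix.diag, Matrix.mul_apply, sq]

lemma F2_eq_trace' (M : Matrix a b ℝ) : F2 M = (Mᵀ * M).trace := by
  rw [← F2_transpose M, F2_eq_trace, transpose_transpose]

lemma sum_mul_le (P Q : Matrix a b ℝ) :
    ∑ i, ∑ j, P i j * Q i j ≤ Real.sqrt (F2 P) * Real.sqrt (F2 Q) := by
  have h := Finset.sum_mul_sq_le_sq_mul_sq Finset.univ (fun p : a × b => P p.1 p.2)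
      (fun p : a × b => Q p.1 p.2)
  have e1 : ∑ i, ∑ j, P i j * Q i j = ∑ p : a × b, P p.1 p.2 * Q p.1 p.2 :=
    (Fintype.sum_prod_type (f := fun p : a × b => P p.1 p.2 * Q p.1 p.2)).symm
  have e2 : F2 P = ∑ p : a × b, (P p.1 p.2) ^ 2 :=
    (Fintype.sum_prod_type (f := fun p : a × b => (P p.1 p.2) ^ 2)).symm
  have e3 : F2 Q = ∑ p : a × b, (Q p.1 p.2) ^ 2 :=
    (Fintype.sum_prod_type (f := fun p : a × b => (Q p.1 p.2) ^ 2)).symm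
  rw [e1, e2, e3]
  calc ∑ p : a × b, P p.1 p.2 * Q p.1 p.2
      ≤ |∑ p : a × b, P p.1 p.2 * Q p.1 p.2| := le_abs_self _
    _ = Real.sqrt ((∑ p : a × b, P p.1 p.2 * Q p.1 p.2) ^ 2) := (Real.sqrt_sq_eq_abs _).symm
    _ ≤ Real.sqrt ((∑ p : a × b, (P p.1 p.2) ^ 2) * ∑ p : a × b, (Q p.1 p.2) ^ 2) :=
        Real.sqrt_le_sqrt h
    _ = _ := Real.sqrt_mul (by positivity) _

lemma sqrtF2_add_le (P Q : Matrix a b ℝ) :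
    Real.sqrt (F2 (P + Q)) ≤ Real.sqrt (F2 P) + Real.sqrt (F2 Q) := by
  have hPQ := sum_mul_le P Q
  have hexp : F2 (P + Q) = F2 P + 2 * (∑ i, ∑ j, P i j * Q i j) + F2 Q := by
    unfold F2
    rw [Finset.mul_sum, ← Finset.sum_add_distrib, ← Finset.sum_add_distrib]
    refine Finset.sum_congr rfl fun i _ => ?_
    rw [Finset.mul_sum, ← Finset.sum_add_distrib, ← Finset.sum_add_distrib]
    refine Finset.sum_congr rfl fun j _ => ?_
    simp [Matrix.add_apply]; ring
  have h2 : F2 (P + Q) ≤ (Real.sqrt (F2 P) + Real.sqrt (F2 Q)) ^ 2 := by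
    rw [hexp, add_sq, Real.sq_sqrt (F2_nonneg P), Real.sq_sqrt (F2_nonneg Q)]
    nlinarith [hPQ]
  calc Real.sqrt (F2 (P + Q)) ≤ Real.sqrt ((Real.sqrt (F2 P) + Real.sqrt (F2 Q)) ^ 2) :=
        Real.sqrt_le_sqrt h2
    _ = _ := Real.sqrt_sq (by positivity)

lemma ct_eq (M : Matrix a b ℝ) : Mᴴ = Mᵀ :=
  Matrix.conjTranspose_eq_transpose_of_trivial M

lemma psd_trace_nonneg [DecidableEq a] {S : Matrix a a ℝ} (hS : S.PosSemidef) :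
    0 ≤ S.trace := by
  have h : ∀ i, 0 ≤ S i i := by
    intro i
    have := hS.dotProduct_mulVec_nonneg (Pi.single i 1)
    simpa [dotProduct, mulVec, Pi.single_apply, Finset.sum_ite_eq] using this
  exact Finset.sum_nonneg fun i _ => h i

open scoped MatrixOrder in
lemma trace_mul_psd_nonneg [DecidableEq a] {S T : Matrix a a ℝ} (hS : S.PosSemidef)
    (hT : T.PosSemidef) : 0 ≤ (S * T).trace := by
  obtain ⟨C, hC⟩ := CStarAlgebra.nonneg_iff_eq_star_mul_self.mp hS.nonneg
  have h2 : (S * T).trace = (C * T * Cᴴ).trace := by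
    rw [hC, star_eq_conjTranspose, Matrix.trace_mul_cycle Cᴴ C T, Matrix.trace_mul_cycle T Cᴴ C]
  rw [h2]
  exact psd_trace_nonneg (hT.mul_mul_conjTranspose_same C)

lemma trace_mul_le [DecidableEq a] {c : ℝ} {M N : Matrix a a ℝ}
    (hM : (c • (1 : Matrix a a ℝ) - M).PosSemidef) (hN : N.PosSemidef) :
    (M * N).trace ≤ c * N.trace := by
  have h := trace_mul_psd_nonneg hM hN
  rw [Matrix.sub_mul, Matrix.trace_sub, Matrix.smul_mul, Matrix.one_mul, Matrix.trace_smul,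
    smul_eq_mul] at h
  linarith

lemma trace_mul_ge [DecidableEq a] {c : ℝ} {M N : Matrix a a ℝ}
    (hM : (M - c • (1 : Matrix a a ℝ)).PosSemidef) (hN : N.PosSemidef) :
    c * N.trace ≤ (M * N).trace := by
  have h := trace_mul_psd_nonneg hM hN
  rw [Matrix.sub_mul, Matrix.trace_sub, Matrix.smul_mul, Matrix.one_mul, Matrix.trace_smul,
    smul_eq_mul] at h
  linarith

lemma psd_smul {c : ℝ} [DecidableEq a] {M : Matrix a a ℝ} (hc : 0 ≤ c) (hM : M.PosSemidef) :
    (c • M).PosSemidef := by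
  refine Matrix.PosSemidef.of_dotProduct_mulVec_nonneg ?_ (fun x => ?_)
  · unfold Matrix.IsHermitian
    rw [conjTranspose_smul, hM.1]
    simp
  · rw [smul_mulVec, dotProduct_smul, smul_eq_mul]
    exact mul_nonneg hc (hM.dotProduct_mulVec_nonneg x)

lemma F2_mul_le [DecidableEq b] {c : ℝ} (U : Matrix a b ℝ) (W : Matrix b d ℝ)
    (h : (c • (1 : Matrix b b ℝ) - Uᵀ * U).PosSemidef) : F2 (U * W) ≤ c * F2 W := by
  have e : F2 (U * W) = ((Uᵀ * U) * (W * Wᵀ)).trace := by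
    calc F2 (U * W) = ((U * W) * (U * W)ᵀ).trace := F2_eq_trace _
      _ = (U * (W * (Wᵀ * Uᵀ))).trace := by rw [Matrix.transpose_mul]; simp only [Matrix.mul_assoc]
      _ = ((W * (Wᵀ * Uᵀ)) * U).trace := Matrix.trace_mul_comm _ _
      _ = ((Uᵀ * U) * (W * Wᵀ)).trace := by
          rw [Matrix.trace_mul_comm (Uᵀ * U) (W * Wᵀ)]; simp only [Matrix.mul_assoc]
  rw [e, F2_eq_trace W]
  exact trace_mul_le h (by simpa [ct_eq] using Matrix.posSemidef_self_mul_conjTranspose W)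

lemma F2_mul_le' [DecidableEq b] {c : ℝ} (W : Matrix a b ℝ) (V : Matrix b d ℝ)
    (h : (c • (1 : Matrix b b ℝ) - V * Vᵀ).PosSemidef) : F2 (W * V) ≤ c * F2 W := by
  have h' : (c • (1 : Matrix b b ℝ) - Vᵀᵀ * Vᵀ).PosSemidef := by
    rwa [transpose_transpose]
  have := F2_mul_le Vᵀ Wᵀ h'
  rwa [← Matrix.transpose_mul, F2_transpose, F2_transpose] at this

lemma dot_sq_le (v w : b → ℝ) : (v ⬝ᵥ w) ^ 2 ≤ (v ⬝ᵥ v) * (w ⬝ᵥ w) := by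
  have h := Finset.sum_mul_sq_le_sq_mul_sq Finset.univ v w
  simpa [dotProduct, sq] using h

lemma dot_self_nonneg (v : b → ℝ) : 0 ≤ v ⬝ᵥ v :=
  Finset.sum_nonneg fun i _ => mul_self_nonneg _

/-- If `A Aᵀ ⪯ c I` then `Aᵀ A ⪯ c I`. -/
lemma switch [DecidableEq a] [DecidableEq b] {c : ℝ} (hc : 0 ≤ c) (A : Matrix a b ℝ)
    (h : (c • (1 : Matrix a a ℝ) - A * Aᵀ).PosSemidef) :
    (c • (1 : Matrix b b ℝ) - Aᵀ * A).PosSemidef := by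
  have quad : ∀ (y : a → ℝ), (Aᵀ *ᵥ y) ⬝ᵥ (Aᵀ *ᵥ y) ≤ c * (y ⬝ᵥ y) := by
    intro y
    have := h.dotProduct_mulVec_nonneg y
    rw [sub_mulVec, dotProduct_sub, smul_mulVec, one_mulVec, dotProduct_smul,
      smul_eq_mul, star_trivial] at this
    have e : y ⬝ᵥ (A * Aᵀ) *ᵥ y = (Aᵀ *ᵥ y) ⬝ᵥ (Aᵀ *ᵥ y) := by
      rw [← Matrix.mulVec_mulVec, Matrix.dotProduct_mulVec, ← Matrix.mulVec_transpose]
    linarith [this, e.ge, e.le]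
  refine Matrix.PosSemidef.of_dotProduct_mulVec_nonneg ?_ (fun x => ?_)
  · unfold Matrix.IsHermitian
    rw [conjTranspose_sub, conjTranspose_smul, ct_eq (Aᵀ * A), Matrix.transpose_mul,
      transpose_transpose, conjTranspose_one, star_trivial]
  · rw [star_trivial, sub_mulVec, dotProduct_sub, smul_mulVec, one_mulVec,
      dotProduct_smul, smul_eq_mul]
    have e : x ⬝ᵥ (Aᵀ * A) *ᵥ x = (A *ᵥ x) ⬝ᵥ (A *ᵥ x) := by
      rw [← Matrix.mulVec_mulVec, Matrix.dotProduct_mulVec, Matrix.vecMul_transpose]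
    rw [e]
    set u := A *ᵥ x with hu
    have h1 : (Aᵀ *ᵥ u) ⬝ᵥ (Aᵀ *ᵥ u) ≤ c * (u ⬝ᵥ u) := quad u
    have h2 : u ⬝ᵥ u = x ⬝ᵥ (Aᵀ *ᵥ u) := by
      conv_rhs => rw [Matrix.dotProduct_mulVec, Matrix.vecMul_transpose]
    have hcs : (x ⬝ᵥ (Aᵀ *ᵥ u)) ^ 2 ≤ (x ⬝ᵥ x) * ((Aᵀ *ᵥ u) ⬝ᵥ (Aᵀ *ᵥ u)) := dot_sq_le _ _
    have hx := dot_self_nonneg x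
    have huu := dot_self_nonneg u
    rcases eq_or_lt_of_le huu with h0 | h0
    · rw [← h0, sub_zero]; exact mul_nonneg hc hx
    · nlinarith [hcs, h1, h2]

lemma posDef_smul_one {k : Type*} [Fintype k] [DecidableEq k] {γ : ℝ} (hγ : 0 < γ) :
    (γ • (1 : Matrix k k ℝ)).PosDef := by
  have h1 : (γ • (1 : Matrix k k ℝ)) = Matrix.diagonal (fun _ => γ) := by
    ext i j
    by_cases h : i = j <;> simp [h, Matrix.one_apply, Matrix.diagonal]
  rw [h1]
  exact Matrix.posDef_diagonal_iff.mpr fun _ => hγ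

lemma trace_transpose_mul_le (P Q : Matrix a b ℝ) :
    (Pᵀ * Q).trace ≤ Real.sqrt (F2 P) * Real.sqrt (F2 Q) := by
  have e : (Pᵀ * Q).trace = ∑ i, ∑ j, P i j * Q i j := by
    rw [Matrix.trace]
    simp only [Matrix.diag, Matrix.mul_apply, Matrix.transpose_apply]
    exact Finset.sum_comm
  rw [e]
  exact sum_mul_le P Q

lemma key {k l : Type*} [Fintype k] [Fintype l] [DecidableEq k] [DecidableEq l]
    {γ : ℝ} (hγ : 0 < γ) (C : Matrix k l ℝ)
    (h1 : (Cᵀ * C - γ • (1 : Matrix l l ℝ)).PosSemidef) :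
    (Cᵀ * C).PosDef ∧
    ((1 : Matrix k k ℝ) - C * (Cᵀ * C)⁻¹ * Cᵀ).PosSemidef ∧
    (γ⁻¹ • (1 : Matrix k k ℝ) - (C * (Cᵀ * C)⁻¹) * ((Cᵀ * C)⁻¹ * Cᵀ)).PosSemidef ∧
    ((1:ℝ) • (1 : Matrix k k ℝ)
      - ((1 : Matrix k k ℝ) - C * (Cᵀ * C)⁻¹ * Cᵀ)ᵀ
        * ((1 : Matrix k k ℝ) - C * (Cᵀ * C)⁻¹ * Cᵀ)).PosSemidef := by
  set S := Cᵀ * C with hS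
  have hpd : S.PosDef := by
    have := Matrix.PosDef.posSemidef_add h1 (posDef_smul_one hγ (k := l))
    rwa [sub_add_cancel] at this
  have hdet : IsUnit S.det := isUnit_iff_ne_zero.mpr hpd.det_pos.ne'
  have hSinv_mul : S⁻¹ * S = 1 := Matrix.nonsing_inv_mul S hdet
  have hST : Sᵀ = S := by
    have := hpd.isHermitian
    rwa [Matrix.IsHermitian, ct_eq] at this
  have hSinvT : (S⁻¹)ᵀ = S⁻¹ := by
    rw [Matrix.transpose_nonsing_inv, hST]
  have hSinv_psd : S⁻¹.PosSemidef := hpd.inv.posSemidef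
  set P := C * S⁻¹ * Cᵀ with hP
  have hP_psd : P.PosSemidef := by
    have := hSinv_psd.mul_mul_conjTranspose_same C
    rwa [ct_eq] at this
  have hPT : Pᵀ = P := by
    rw [hP, Matrix.transpose_mul, Matrix.transpose_mul, transpose_transpose, hSinvT,
      Matrix.mul_assoc]
  have hPP : P * P = P := by
    rw [hP]
    calc C * S⁻¹ * Cᵀ * (C * S⁻¹ * Cᵀ)
        = C * S⁻¹ * (Cᵀ * C) * S⁻¹ * Cᵀ := by simp only [Matrix.mul_assoc]
      _ = C * (S⁻¹ * S) * S⁻¹ * Cᵀ := by rw [← hS]; simp only [Matrix.mul_assoc]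
      _ = C * S⁻¹ * Cᵀ := by rw [hSinv_mul, Matrix.mul_one]
  have h1mP : ((1 : Matrix k k ℝ) - P).PosSemidef := by
    have heq : ((1 : Matrix k k ℝ) - P)ᴴ * ((1 : Matrix k k ℝ) - P) = 1 - P := by
      rw [ct_eq, Matrix.transpose_sub, Matrix.transpose_one, hPT, Matrix.sub_mul,
        Matrix.mul_sub, Matrix.mul_sub, Matrix.one_mul, Matrix.mul_one, hPP]
      simp only [Matrix.one_mul]
      abel
    have := Matrix.posSemidef_conjTranspose_mul_self ((1 : Matrix k k ℝ) - P)
    rwa [heq] at this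
  have hlast : ((1:ℝ) • (1 : Matrix k k ℝ)
      - ((1 : Matrix k k ℝ) - P)ᵀ * ((1 : Matrix k k ℝ) - P)).PosSemidef := by
    have heq2 : ((1 : Matrix k k ℝ) - P)ᵀ * ((1 : Matrix k k ℝ) - P) = 1 - P := by
      rw [Matrix.transpose_sub, Matrix.transpose_one, hPT, Matrix.sub_mul,
        Matrix.mul_sub, Matrix.mul_sub, Matrix.one_mul, Matrix.mul_one, hPP]
      simp only [Matrix.one_mul]
      abel
    rw [heq2, one_smul, sub_sub_cancel]
    exact hP_psd
  refine ⟨hpd, h1mP, ?_, hlast⟩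
  have hmain : γ⁻¹ • ((1 : Matrix k k ℝ) - P)
      + (C * S⁻¹) * (γ⁻¹ • (S - γ • (1 : Matrix l l ℝ))) * (C * S⁻¹)ᴴ
      = γ⁻¹ • (1 : Matrix k k ℝ) - (C * S⁻¹) * (S⁻¹ * Cᵀ) := by
    have hctr : (C * S⁻¹)ᴴ = S⁻¹ * Cᵀ := by
      rw [ct_eq, Matrix.transpose_mul, hSinvT]
    rw [hctr]
    have hE : (C * S⁻¹) * (S - γ • (1 : Matrix l l ℝ)) * (S⁻¹ * Cᵀ)
        = P - γ • ((C * S⁻¹) * (S⁻¹ * Cᵀ)) := by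
      rw [Matrix.mul_sub, Matrix.mul_smul, Matrix.mul_one, Matrix.sub_mul,
        Matrix.smul_mul]
      congr 1
      · rw [hP]
        calc C * S⁻¹ * S * (S⁻¹ * Cᵀ) = C * (S⁻¹ * S) * (S⁻¹ * Cᵀ) := by
              simp only [Matrix.mul_assoc]
          _ = C * S⁻¹ * Cᵀ := by rw [hSinv_mul, Matrix.mul_one]; simp only [Matrix.mul_assoc]
    rw [Matrix.mul_smul, Matrix.smul_mul, hE, smul_sub, smul_sub, smul_smul,
      inv_mul_cancel₀ hγ.ne', one_smul]
    abel
  rw [← hmain]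
  exact (psd_smul (by positivity) h1mP).add
    ((psd_smul (by positivity) h1).mul_mul_conjTranspose_same (C * S⁻¹))

end OdeAux

open Matrix

lemma frob_eq {m n : ℕ} (A : Matrix (Fin m) (Fin n) ℝ) :
    frobNorm A = Real.sqrt (OdeAux.F2 A) := rfl

open OdeAux in
/-- Boundedness of the ODELoRA vector field `(F_A, F_B)`. -/
theorem odelora_field_bound {m n r : ℕ}
    (γmin γmax L₀ : ℝ) (hγmin : 0 < γmin) (hγmax : 0 < γmax)
    (A : Matrix (Fin r) (Fin n) ℝ) (B : Matrix (Fin m) (Fin r) ℝ)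
    (hA1 : (A * Aᵀ - γmin • (1 : Matrix (Fin r) (Fin r) ℝ)).PosSemidef)
    (hA2 : (γmax • (1 : Matrix (Fin r) (Fin r) ℝ) - A * Aᵀ).PosSemidef)
    (hB1 : (Bᵀ * B - γmin • (1 : Matrix (Fin r) (Fin r) ℝ)).PosSemidef)
    (hB2 : (γmax • (1 : Matrix (Fin r) (Fin r) ℝ) - Bᵀ * B).PosSemidef)
    (G : Matrix (Fin m) (Fin n) ℝ) (hG : frobNorm G ≤ L₀)
    (X : Matrix (Fin r) (Fin r) ℝ)
    (hX : (A * Aᵀ + Bᵀ * B) * X + X * (A * Aᵀ + Bᵀ * B)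
        = (Bᵀ * B)⁻¹ * Bᵀ * G * Aᵀ + A * Gᵀ * B * (Bᵀ * B)⁻¹) :
    let FA : Matrix (Fin r) (Fin n) ℝ := -((Bᵀ * B)⁻¹ * Bᵀ * G) + X * A
    let FB : Matrix (Fin m) (Fin r) ℝ :=
      -(((1 : Matrix (Fin m) (Fin m) ℝ) - B * (Bᵀ * B)⁻¹ * Bᵀ) * G * Aᵀ * (A * Aᵀ)⁻¹)
        - B * X
    frobNorm FA + frobNorm FB
      ≤ 2 * L₀ / Real.sqrt γmin + L₀ * γmax / γmin ^ ((3:ℝ)/2) := by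
  intro FA FB
  show frobNorm (-((Bᵀ * B)⁻¹ * Bᵀ * G) + X * A)
      + frobNorm (-(((1 : Matrix (Fin m) (Fin m) ℝ) - B * (Bᵀ * B)⁻¹ * Bᵀ) * G * Aᵀ
          * (A * Aᵀ)⁻¹) - B * X)
      ≤ 2 * L₀ / Real.sqrt γmin + L₀ * γmax / γmin ^ ((3:ℝ)/2)
  rw [frob_eq, frob_eq]
  -- key facts
  obtain ⟨hSBpd, hProjB, hBoundB, hProjB2⟩ := OdeAux.key hγmin B hB1
  have hA1' : ((Aᵀ)ᵀ * Aᵀ - γmin • (1 : Matrix (Fin r) (Fin r) ℝ)).PosSemidef := by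
    rwa [transpose_transpose]
  obtain ⟨hSApd, hProjA, hBoundA, hProjA2⟩ := OdeAux.key hγmin Aᵀ hA1'
  rw [transpose_transpose] at hSApd hProjA hBoundA hProjA2
  have hSBinvT : ((Bᵀ * B)⁻¹)ᵀ = (Bᵀ * B)⁻¹ := by
    rw [Matrix.transpose_nonsing_inv]
    congr 1
    have := hSBpd.isHermitian
    rwa [Matrix.IsHermitian, OdeAux.ct_eq] at this
  have hSAinvT : ((A * Aᵀ)⁻¹)ᵀ = (A * Aᵀ)⁻¹ := by
    rw [Matrix.transpose_nonsing_inv]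
    congr 1
    have := hSApd.isHermitian
    rwa [Matrix.IsHermitian, OdeAux.ct_eq] at this
  -- bounds on the four pieces
  have hT1 : F2 ((Bᵀ * B)⁻¹ * Bᵀ * G) ≤ γmin⁻¹ * F2 G := by
    apply OdeAux.F2_mul_le ((Bᵀ * B)⁻¹ * Bᵀ) G
    have hUB : ((Bᵀ * B)⁻¹ * Bᵀ)ᵀ * ((Bᵀ * B)⁻¹ * Bᵀ)
        = (B * (Bᵀ * B)⁻¹) * ((Bᵀ * B)⁻¹ * Bᵀ) := by
      rw [Matrix.transpose_mul, transpose_transpose, hSBinvT]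
    rwa [hUB]
  have hT2 : F2 (X * A) ≤ γmax * F2 X := OdeAux.F2_mul_le' X A hA2
  have hT4 : F2 (B * X) ≤ γmax * F2 X := OdeAux.F2_mul_le B X hB2
  have hT3 : F2 (((1 : Matrix (Fin m) (Fin m) ℝ) - B * (Bᵀ * B)⁻¹ * Bᵀ) * G * Aᵀ * (A * Aᵀ)⁻¹)
      ≤ γmin⁻¹ * F2 G := by
    have hstep1 : F2 (((1 : Matrix (Fin m) (Fin m) ℝ) - B * (Bᵀ * B)⁻¹ * Bᵀ) * G * Aᵀ
          * (A * Aᵀ)⁻¹)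
        ≤ γmin⁻¹ * F2 (((1 : Matrix (Fin m) (Fin m) ℝ) - B * (Bᵀ * B)⁻¹ * Bᵀ) * G) := by
      have hassoc : ((1 : Matrix (Fin m) (Fin m) ℝ) - B * (Bᵀ * B)⁻¹ * Bᵀ) * G * Aᵀ * (A * Aᵀ)⁻¹
          = (((1 : Matrix (Fin m) (Fin m) ℝ) - B * (Bᵀ * B)⁻¹ * Bᵀ) * G) * (Aᵀ * (A * Aᵀ)⁻¹) := by
        simp only [Matrix.mul_assoc]
      rw [hassoc]
      apply OdeAux.F2_mul_le' _ (Aᵀ * (A * Aᵀ)⁻¹)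
      have hVT : (Aᵀ * (A * Aᵀ)⁻¹)ᵀ = (A * Aᵀ)⁻¹ * A := by
        rw [Matrix.transpose_mul, transpose_transpose, hSAinvT]
      rw [hVT]
      exact hBoundA
    have hstep2 : F2 (((1 : Matrix (Fin m) (Fin m) ℝ) - B * (Bᵀ * B)⁻¹ * Bᵀ) * G)
        ≤ 1 * F2 G :=
      OdeAux.F2_mul_le _ G hProjB2
    calc F2 (((1 : Matrix (Fin m) (Fin m) ℝ) - B * (Bᵀ * B)⁻¹ * Bᵀ) * G * Aᵀ * (A * Aᵀ)⁻¹)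
        ≤ γmin⁻¹ * F2 (((1 : Matrix (Fin m) (Fin m) ℝ) - B * (Bᵀ * B)⁻¹ * Bᵀ) * G) := hstep1
      _ ≤ γmin⁻¹ * (1 * F2 G) :=
          mul_le_mul_of_nonneg_left hstep2 (inv_nonneg.mpr hγmin.le)
      _ = γmin⁻¹ * F2 G := by ring
  -- the right-hand side of the Sylvester equation
  have hC2T : A * Gᵀ * B * (Bᵀ * B)⁻¹ = ((Bᵀ * B)⁻¹ * Bᵀ * G * Aᵀ)ᵀ := by
    simp only [Matrix.transpose_mul, transpose_transpose, hSBinvT, Matrix.mul_assoc]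
  have hswA : (γmax • (1 : Matrix (Fin n) (Fin n) ℝ) - Aᵀ * A).PosSemidef :=
    OdeAux.switch hγmax.le A hA2
  have hC1b : F2 ((Bᵀ * B)⁻¹ * Bᵀ * G * Aᵀ) ≤ γmax * (γmin⁻¹ * F2 G) := by
    have h1 : F2 (((Bᵀ * B)⁻¹ * Bᵀ * G) * Aᵀ) ≤ γmax * F2 ((Bᵀ * B)⁻¹ * Bᵀ * G) := by
      apply OdeAux.F2_mul_le' _ Aᵀ
      rwa [transpose_transpose]
    calc F2 ((Bᵀ * B)⁻¹ * Bᵀ * G * Aᵀ) ≤ γmax * F2 ((Bᵀ * B)⁻¹ * Bᵀ * G) := h1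
      _ ≤ γmax * (γmin⁻¹ * F2 G) := mul_le_mul_of_nonneg_left hT1 hγmax.le
  -- scalar abbreviations
  set g := Real.sqrt (F2 G) with hgdef
  set x := Real.sqrt (F2 X) with hxdef
  set sm := Real.sqrt γmin with hsmdef
  set sM := Real.sqrt γmax with hsMdef
  have hsm : 0 < sm := Real.sqrt_pos.mpr hγmin
  have hsM0 : 0 ≤ sM := Real.sqrt_nonneg _
  have hx0 : 0 ≤ x := Real.sqrt_nonneg _
  have hg0 : 0 ≤ g := Real.sqrt_nonneg _
  have hgL : g ≤ L₀ := hG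
  have hL0 : 0 ≤ L₀ := hg0.trans hgL
  have hsqmaxmin : Real.sqrt (γmax * (γmin⁻¹ * F2 G)) = sM * (sm⁻¹ * g) := by
    rw [Real.sqrt_mul hγmax.le, Real.sqrt_mul (inv_nonneg.mpr hγmin.le), Real.sqrt_inv]
  -- bound on the RHS matrix
  have hc2 : Real.sqrt (F2 ((Bᵀ * B)⁻¹ * Bᵀ * G * Aᵀ + A * Gᵀ * B * (Bᵀ * B)⁻¹))
      ≤ 2 * (sM * (sm⁻¹ * g)) := by
    have hb1 : Real.sqrt (F2 ((Bᵀ * B)⁻¹ * Bᵀ * G * Aᵀ)) ≤ sM * (sm⁻¹ * g) := by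
      rw [← hsqmaxmin]
      exact Real.sqrt_le_sqrt hC1b
    calc Real.sqrt (F2 ((Bᵀ * B)⁻¹ * Bᵀ * G * Aᵀ + A * Gᵀ * B * (Bᵀ * B)⁻¹))
        ≤ Real.sqrt (F2 ((Bᵀ * B)⁻¹ * Bᵀ * G * Aᵀ))
          + Real.sqrt (F2 (A * Gᵀ * B * (Bᵀ * B)⁻¹)) := OdeAux.sqrtF2_add_le _ _
      _ = Real.sqrt (F2 ((Bᵀ * B)⁻¹ * Bᵀ * G * Aᵀ))
          + Real.sqrt (F2 ((Bᵀ * B)⁻¹ * Bᵀ * G * Aᵀ)) := by rw [hC2T, OdeAux.F2_transpose]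
      _ ≤ sM * (sm⁻¹ * g) + sM * (sm⁻¹ * g) := add_le_add hb1 hb1
      _ = 2 * (sM * (sm⁻¹ * g)) := by ring
  -- lower bound on the Lyapunov quadratic form
  have hMlow : (((A * Aᵀ) + (Bᵀ * B)) - (2 * γmin) • (1 : Matrix (Fin r) (Fin r) ℝ)).PosSemidef := by
    have hadd := hA1.add hB1
    have e : (A * Aᵀ - γmin • (1 : Matrix (Fin r) (Fin r) ℝ))
        + (Bᵀ * B - γmin • (1 : Matrix (Fin r) (Fin r) ℝ))
        = ((A * Aᵀ) + (Bᵀ * B)) - (2 * γmin) • (1 : Matrix (Fin r) (Fin r) ℝ) := by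
      module
    rwa [e] at hadd
  have hXXT : (X * Xᵀ).PosSemidef := by
    simpa [OdeAux.ct_eq] using Matrix.posSemidef_self_mul_conjTranspose X
  have hXTX : (Xᵀ * X).PosSemidef := by
    simpa [OdeAux.ct_eq] using Matrix.posSemidef_conjTranspose_mul_self X
  have htr : (Xᵀ * ((A * Aᵀ + Bᵀ * B) * X + X * (A * Aᵀ + Bᵀ * B))).trace
      = (Xᵀ * ((Bᵀ * B)⁻¹ * Bᵀ * G * Aᵀ + A * Gᵀ * B * (Bᵀ * B)⁻¹)).trace := by
    rw [hX]
  have hLHS : (Xᵀ * ((A * Aᵀ + Bᵀ * B) * X + X * (A * Aᵀ + Bᵀ * B))).trace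
      = ((A * Aᵀ + Bᵀ * B) * (X * Xᵀ)).trace + ((A * Aᵀ + Bᵀ * B) * (Xᵀ * X)).trace := by
    rw [Matrix.mul_add, Matrix.trace_add]
    congr 1
    · calc (Xᵀ * ((A * Aᵀ + Bᵀ * B) * X)).trace
          = (Xᵀ * (A * Aᵀ + Bᵀ * B) * X).trace := by rw [Matrix.mul_assoc]
        _ = (X * Xᵀ * (A * Aᵀ + Bᵀ * B)).trace := Matrix.trace_mul_cycle _ _ _
        _ = ((A * Aᵀ + Bᵀ * B) * (X * Xᵀ)).trace := Matrix.trace_mul_comm _ _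
    · calc (Xᵀ * (X * (A * Aᵀ + Bᵀ * B))).trace
          = ((Xᵀ * X) * (A * Aᵀ + Bᵀ * B)).trace := by rw [Matrix.mul_assoc]
        _ = ((A * Aᵀ + Bᵀ * B) * (Xᵀ * X)).trace := Matrix.trace_mul_comm _ _
  have hge : 2 * γmin * F2 X + 2 * γmin * F2 X
      ≤ (Xᵀ * ((A * Aᵀ + Bᵀ * B) * X + X * (A * Aᵀ + Bᵀ * B))).trace := by
    rw [hLHS]
    have g1 : 2 * γmin * (X * Xᵀ).trace ≤ ((A * Aᵀ + Bᵀ * B) * (X * Xᵀ)).trace :=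
      OdeAux.trace_mul_ge hMlow hXXT
    have g2 : 2 * γmin * (Xᵀ * X).trace ≤ ((A * Aᵀ + Bᵀ * B) * (Xᵀ * X)).trace :=
      OdeAux.trace_mul_ge hMlow hXTX
    rw [← OdeAux.F2_eq_trace X] at g1
    rw [← OdeAux.F2_eq_trace' X] at g2
    linarith
  have hle : (Xᵀ * ((Bᵀ * B)⁻¹ * Bᵀ * G * Aᵀ + A * Gᵀ * B * (Bᵀ * B)⁻¹)).trace
      ≤ x * Real.sqrt (F2 ((Bᵀ * B)⁻¹ * Bᵀ * G * Aᵀ + A * Gᵀ * B * (Bᵀ * B)⁻¹)) :=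
    OdeAux.trace_transpose_mul_le X _
  have hkey : 4 * γmin * (x * x) ≤ x * (2 * (sM * (sm⁻¹ * g))) := by
    have hxx : x * x = F2 X := Real.mul_self_sqrt (OdeAux.F2_nonneg X)
    have h2 : x * Real.sqrt (F2 ((Bᵀ * B)⁻¹ * Bᵀ * G * Aᵀ + A * Gᵀ * B * (Bᵀ * B)⁻¹))
        ≤ x * (2 * (sM * (sm⁻¹ * g))) := mul_le_mul_of_nonneg_left hc2 hx0
    rw [hxx]
    linarith [hge, htr, hle, h2]
  have hxm : 2 * γmin * x ≤ sM * (sm⁻¹ * g) := by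
    rcases eq_or_lt_of_le hx0 with h0 | h0
    · rw [← h0, mul_zero]
      positivity
    · nlinarith [hkey, h0]
  -- assemble the two norms
  have hFA : Real.sqrt (F2 (-((Bᵀ * B)⁻¹ * Bᵀ * G) + X * A)) ≤ sm⁻¹ * g + sM * x := by
    calc Real.sqrt (F2 (-((Bᵀ * B)⁻¹ * Bᵀ * G) + X * A))
        ≤ Real.sqrt (F2 (-((Bᵀ * B)⁻¹ * Bᵀ * G))) + Real.sqrt (F2 (X * A)) :=
          OdeAux.sqrtF2_add_le _ _
      _ = Real.sqrt (F2 ((Bᵀ * B)⁻¹ * Bᵀ * G)) + Real.sqrt (F2 (X * A)) := by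
          rw [OdeAux.F2_neg]
      _ ≤ Real.sqrt (γmin⁻¹ * F2 G) + Real.sqrt (γmax * F2 X) :=
          add_le_add (Real.sqrt_le_sqrt hT1) (Real.sqrt_le_sqrt hT2)
      _ = sm⁻¹ * g + sM * x := by
          rw [Real.sqrt_mul (inv_nonneg.mpr hγmin.le), Real.sqrt_inv,
            Real.sqrt_mul hγmax.le]
  have hFB : Real.sqrt (F2 (-(((1 : Matrix (Fin m) (Fin m) ℝ) - B * (Bᵀ * B)⁻¹ * Bᵀ) * G * Aᵀ
        * (A * Aᵀ)⁻¹) - B * X)) ≤ sm⁻¹ * g + sM * x := by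
    rw [sub_eq_add_neg]
    calc Real.sqrt (F2 (-(((1 : Matrix (Fin m) (Fin m) ℝ) - B * (Bᵀ * B)⁻¹ * Bᵀ) * G * Aᵀ
            * (A * Aᵀ)⁻¹) + -(B * X)))
        ≤ Real.sqrt (F2 (-(((1 : Matrix (Fin m) (Fin m) ℝ) - B * (Bᵀ * B)⁻¹ * Bᵀ) * G * Aᵀ
            * (A * Aᵀ)⁻¹))) + Real.sqrt (F2 (-(B * X))) := OdeAux.sqrtF2_add_le _ _
      _ = Real.sqrt (F2 (((1 : Matrix (Fin m) (Fin m) ℝ) - B * (Bᵀ * B)⁻¹ * Bᵀ) * G * Aᵀ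
            * (A * Aᵀ)⁻¹)) + Real.sqrt (F2 (B * X)) := by rw [OdeAux.F2_neg, OdeAux.F2_neg]
      _ ≤ Real.sqrt (γmin⁻¹ * F2 G) + Real.sqrt (γmax * F2 X) :=
          add_le_add (Real.sqrt_le_sqrt hT3) (Real.sqrt_le_sqrt hT4)
      _ = sm⁻¹ * g + sM * x := by
          rw [Real.sqrt_mul (inv_nonneg.mpr hγmin.le), Real.sqrt_inv,
            Real.sqrt_mul hγmax.le]
  -- final arithmetic
  have hrpow : γmin ^ ((3:ℝ)/2) = γmin * sm := by
    rw [show (3:ℝ)/2 = 1 + 1/2 by norm_num, Real.rpow_add hγmin, Real.rpow_one, hsmdef,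
      Real.sqrt_eq_rpow]
  rw [hrpow]
  have hA' : 2 * (sm⁻¹ * g) ≤ 2 * L₀ / sm := by
    rw [div_eq_mul_inv]
    have : 2 * (sm⁻¹ * g) ≤ 2 * (sm⁻¹ * L₀) := by
      have := mul_le_mul_of_nonneg_left hgL (inv_nonneg.mpr hsm.le)
      linarith
    linarith [this]
  have hB' : 2 * (sM * x) ≤ L₀ * γmax / (γmin * sm) := by
    rw [le_div_iff₀ (by positivity)]
    have hmul : sM * (2 * γmin * x) ≤ sM * (sM * (sm⁻¹ * g)) :=
      mul_le_mul_of_nonneg_left hxm hsM0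
    have hsm1 : sm⁻¹ * sm = 1 := inv_mul_cancel₀ hsm.ne'
    have hsM2 : sM * sM = γmax := Real.mul_self_sqrt hγmax.le
    calc 2 * (sM * x) * (γmin * sm) = (sM * (2 * γmin * x)) * sm := by ring
      _ ≤ (sM * (sM * (sm⁻¹ * g))) * sm := mul_le_mul_of_nonneg_right hmul hsm.le
      _ = (sM * sM) * g * (sm⁻¹ * sm) := by ring
      _ = γmax * g := by rw [hsM2, hsm1, mul_one]
      _ ≤ γmax * L₀ := mul_le_mul_of_nonneg_left hgL hγmax.le
      _ = L₀ * γmax := mul_comm _ _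
  linarith [hFA, hFB, hA', hB']
end

section
/- Let A, A* ∈ ℝ^{r×n} and B, B* ∈ ℝ^{m×r}, where A has full row rank r (so AAᵀ is invertible) and B* has full column rank r (so σ_min(B*) > 0). Then ‖A*·P_A^null‖_F ≤ (1/σ_min(B*)) · ‖B·A − B*·A*‖_F, where P_A^null := I_n − Aᵀ(AAᵀ)⁻¹A. -/
open Matrix

/-- Euclidean norm of a real vector. -/
noncomputable def vecNorm {b : ℕ} (x : Fin b → ℝ) : ℝ :=
  Real.sqrt (∑ i, x i ^ 2)

/-- Smallest singular value of a real matrix: the infimum of `‖M x‖` over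
unit vectors `x`. -/
noncomputable def sigmaMin {a b : ℕ} (M : Matrix (Fin a) (Fin b) ℝ) : ℝ :=
  sInf {c : ℝ | ∃ x : Fin b → ℝ, vecNorm x = 1 ∧ c = vecNorm (M.mulVec x)}

lemma vecNorm_nonneg {b : ℕ} (x : Fin b → ℝ) : 0 ≤ vecNorm x := Real.sqrt_nonneg _

lemma sq_vecNorm {b : ℕ} (x : Fin b → ℝ) : vecNorm x ^ 2 = ∑ i, x i ^ 2 :=
  Real.sq_sqrt (Finset.sum_nonneg fun _ _ => sq_nonneg _)

lemma vecNorm_smul {b : ℕ} {c : ℝ} (hc : 0 ≤ c) (x : Fin b → ℝ) :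
    vecNorm (c • x) = c * vecNorm x := by
  unfold vecNorm
  simp only [Pi.smul_apply, smul_eq_mul, mul_pow]
  rw [← Finset.mul_sum, Real.sqrt_mul (sq_nonneg c), Real.sqrt_sq hc]

lemma vecNorm_pos {b : ℕ} {x : Fin b → ℝ} (hx : x ≠ 0) : 0 < vecNorm x := by
  rw [vecNorm, Real.sqrt_pos]
  obtain ⟨i, hi⟩ := Function.ne_iff.mp hx
  exact Finset.sum_pos' (fun j _ => sq_nonneg _)
    ⟨i, Finset.mem_univ i, lt_of_le_of_ne (sq_nonneg _) (Ne.symm (pow_ne_zero 2 hi))⟩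

lemma sigmaMin_nonneg {a b : ℕ} (M : Matrix (Fin a) (Fin b) ℝ) : 0 ≤ sigmaMin M :=
  Real.sInf_nonneg (by rintro c ⟨x, -, rfl⟩; exact vecNorm_nonneg _)

lemma sigmaMin_mul_le {a b : ℕ} (M : Matrix (Fin a) (Fin b) ℝ) (x : Fin b → ℝ) :
    sigmaMin M * vecNorm x ≤ vecNorm (M.mulVec x) := by
  rcases eq_or_lt_of_le (vecNorm_nonneg x) with h | h
  · rw [← h, mul_zero]; exact vecNorm_nonneg _
  · set t := vecNorm x with ht
    have hbdd : BddBelow {c : ℝ | ∃ y : Fin b → ℝ, vecNorm y = 1 ∧ c = vecNorm (M.mulVec y)} :=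
      ⟨0, by rintro c ⟨y, -, rfl⟩; exact vecNorm_nonneg _⟩
    have hmem : t⁻¹ * vecNorm (M.mulVec x) ∈
        {c : ℝ | ∃ y : Fin b → ℝ, vecNorm y = 1 ∧ c = vecNorm (M.mulVec y)} := by
      refine ⟨t⁻¹ • x, ?_, ?_⟩
      · rw [vecNorm_smul (by positivity), ← ht, inv_mul_cancel₀ h.ne']
      · rw [Matrix.mulVec_smul, vecNorm_smul (by positivity)]
    have := csInf_le hbdd hmem
    calc sigmaMin M * t ≤ (t⁻¹ * vecNorm (M.mulVec x)) * t := by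
          exact mul_le_mul_of_nonneg_right this h.le
      _ = vecNorm (M.mulVec x) := by field_simp
lemma mulVec_inj_of_rank {a b : ℕ} (M : Matrix (Fin a) (Fin b) ℝ) (h : M.rank = b) :
    Function.Injective M.mulVec := by
  have h1 := LinearMap.finrank_range_add_finrank_ker M.mulVecLin
  rw [Matrix.rank] at h
  have h2 : Module.finrank ℝ (Fin b → ℝ) = b := by simp
  have hker : LinearMap.ker M.mulVecLin = ⊥ :=
    Submodule.finrank_eq_zero.mp (by omega)
  have hinj := LinearMap.ker_eq_bot.mp hker
  intro x y hxy
  exact hinj (by simpa [Matrix.mulVecLin_apply] using hxy)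

set_option maxHeartbeats 1000000 in
lemma sigmaMin_pos {a b : ℕ} (M : Matrix (Fin a) (Fin b) ℝ) (hb : 0 < b)
    (hinj : Function.Injective M.mulVec) : 0 < sigmaMin M := by
  have hcont : Continuous (fun x : Fin b → ℝ => vecNorm x) := by
    unfold vecNorm
    exact Real.continuous_sqrt.comp
      (continuous_finset_sum _ fun i _ => (continuous_apply i).pow 2)
  have hcontM : Continuous (fun x : Fin b → ℝ => vecNorm (M.mulVec x)) := by
    unfold vecNorm
    refine Real.continuous_sqrt.comp (continuous_finset_sum _ fun i _ => ?_)
    have h1 : (fun x : Fin b → ℝ => M.mulVec x i) = fun x => ∑ j, M i j * x j := by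
      ext x; simp [Matrix.mulVec, dotProduct]
    exact (h1 ▸ (continuous_finset_sum _ fun j _ =>
      continuous_const.mul (continuous_apply j) : Continuous fun x : Fin b → ℝ => ∑ j, M i j * x j) : Continuous fun x : Fin b → ℝ => M.mulVec x i).pow 2
  set S : Set (Fin b → ℝ) := {x | vecNorm x = 1} with hS
  have hSclosed : IsClosed S := isClosed_eq hcont continuous_const
  have hSbdd : Bornology.IsBounded S := by
    rw [Metric.isBounded_iff_subset_closedBall 0]
    refine ⟨1, fun x hx => ?_⟩
    simp only [Metric.mem_closedBall, dist_zero_right]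
    rw [pi_norm_le_iff_of_nonneg zero_le_one]
    intro i
    have : |x i| ≤ vecNorm x := by
      rw [vecNorm, ← Real.sqrt_sq_eq_abs]
      exact Real.sqrt_le_sqrt (Finset.single_le_sum (f := fun j => x j ^ 2)
        (fun j _ => sq_nonneg _) (Finset.mem_univ i))
    have hx1 : vecNorm x = 1 := hx
    simpa [hx1] using this
  have hScompact : IsCompact S := Metric.isCompact_of_isClosed_isBounded hSclosed hSbdd
  have hTset : {c : ℝ | ∃ x : Fin b → ℝ, vecNorm x = 1 ∧ c = vecNorm (M.mulVec x)} =
      (fun x => vecNorm (M.mulVec x)) '' S := by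
    ext c; constructor
    · rintro ⟨x, hx, rfl⟩; exact ⟨x, hx, rfl⟩
    · rintro ⟨x, hx, rfl⟩; exact ⟨x, hx, rfl⟩
  have hTcompact : IsCompact ((fun x => vecNorm (M.mulVec x)) '' S) :=
    hScompact.image hcontM
  have hTne : ((fun x => vecNorm (M.mulVec x)) '' S).Nonempty := by
    have hx0 : ((fun i => if i = (⟨0, hb⟩ : Fin b) then (1:ℝ) else 0) : Fin b → ℝ) ∈ S := by
      show vecNorm _ = 1
      rw [vecNorm]
      have h1 : (∑ i, (if i = (⟨0, hb⟩ : Fin b) then (1:ℝ) else 0) ^ 2) = 1 := by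
        simp
      rw [h1, Real.sqrt_one]
    exact ⟨_, ⟨_, hx0, rfl⟩⟩
  have hmem := hTcompact.sInf_mem hTne
  rw [sigmaMin, hTset]
  obtain ⟨x, hx, hxe⟩ := hmem
  rw [← hxe]
  apply vecNorm_pos
  intro h0
  have hx0 : x ≠ 0 := by
    intro hx0; rw [hS] at hx; simp only [Set.mem_setOf_eq, hx0] at hx
    rw [show vecNorm (0 : Fin b → ℝ) = 0 by simp [vecNorm]] at hx
    exact one_ne_zero hx.symm
  exact hx0 (hinj (by rw [h0, Matrix.mulVec_zero]))

lemma proj_contract {n : ℕ} (P : Matrix (Fin n) (Fin n) ℝ) (hs : Pᵀ = P)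
    (hi : P * P = P) (v : Fin n → ℝ) :
    ∑ j, (P.mulVec v j) ^ 2 ≤ ∑ j, v j ^ 2 := by
  have key : ∀ (Q : Matrix (Fin n) (Fin n) ℝ), Qᵀ = Q → Q * Q = Q →
      (Q.mulVec v) ⬝ᵥ (Q.mulVec v) = v ⬝ᵥ (Q.mulVec v) := by
    intro Q hQs hQi
    rw [Matrix.dotProduct_mulVec (Q.mulVec v) Q v]
    have : (Q.mulVec v) ᵥ* Q = Q.mulVec (Q.mulVec v) := by
      rw [← Matrix.mulVec_transpose, hQs]
    rw [this, Matrix.mulVec_mulVec, hQi, dotProduct_comm]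
  have hQ : (1 - P)ᵀ = 1 - P := by rw [Matrix.transpose_sub, Matrix.transpose_one, hs]
  have hQi : (1 - P) * (1 - P) = 1 - P := by
    rw [sub_mul, one_mul, mul_sub, mul_one, hi]; abel
  have h1 := key P hs hi
  have h2 := key (1 - P) hQ hQi
  have hsub : (1 - P).mulVec v = v - P.mulVec v := by
    rw [Matrix.sub_mulVec, Matrix.one_mulVec]
  have hnn : 0 ≤ ((1 - P).mulVec v) ⬝ᵥ ((1 - P).mulVec v) :=
    Finset.sum_nonneg fun i _ => mul_self_nonneg _
  have e1 : ∑ j, (P.mulVec v j) ^ 2 = (P.mulVec v) ⬝ᵥ (P.mulVec v) := by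
    simp [dotProduct, sq]
  have e2 : ∑ j, v j ^ 2 = v ⬝ᵥ v := by simp [dotProduct, sq]
  rw [hsub] at h2 hnn
  have h3 : v ⬝ᵥ (v - P.mulVec v) = v ⬝ᵥ v - v ⬝ᵥ (P.mulVec v) := by
    simp [dotProduct_sub]
  rw [e1, e2, h1]
  rw [h2, h3] at hnn
  linarith

lemma sumsq_mul_ge {a b n : ℕ} (M : Matrix (Fin a) (Fin b) ℝ)
    (C : Matrix (Fin b) (Fin n) ℝ) :
    sigmaMin M ^ 2 * (∑ k, ∑ j, (C k j) ^ 2) ≤ ∑ i, ∑ j, ((M * C) i j) ^ 2 := by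
  rw [Finset.sum_comm (s := Finset.univ) (t := Finset.univ)
    (f := fun i j => ((M * C) i j) ^ 2)]
  rw [Finset.sum_comm (s := Finset.univ) (t := Finset.univ)
    (f := fun k j => (C k j) ^ 2), Finset.mul_sum]
  refine Finset.sum_le_sum fun j _ => ?_
  have h := sigmaMin_mul_le M (fun k => C k j)
  have hsq : (sigmaMin M * vecNorm (fun k => C k j)) ^ 2 ≤
      vecNorm (M.mulVec (fun k => C k j)) ^ 2 := by
    apply pow_le_pow_left₀ (mul_nonneg (sigmaMin_nonneg M) (vecNorm_nonneg _)) h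
  rw [mul_pow, sq_vecNorm, sq_vecNorm] at hsq
  calc sigmaMin M ^ 2 * ∑ k, (C k j) ^ 2 ≤ ∑ i, (M.mulVec (fun k => C k j) i) ^ 2 := hsq
    _ = ∑ i, ((M * C) i j) ^ 2 := by
        refine Finset.sum_congr rfl fun i _ => ?_
        simp [Matrix.mulVec, Matrix.mul_apply, dotProduct]

set_option maxHeartbeats 1000000 in
/-- `‖A* P_A^null‖_F ≤ ‖B A − B* A*‖_F / σ_min(B*)` when `A` has full row
rank and `B*` has full column rank. -/
theorem proj_Astar_bound {m n r : ℕ}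
    (A Astar : Matrix (Fin r) (Fin n) ℝ) (B Bstar : Matrix (Fin m) (Fin r) ℝ)
    (hA : A.rank = r) (hBstar : Bstar.rank = r) :
    frobNorm (Astar * ((1 : Matrix (Fin n) (Fin n) ℝ) - Aᵀ * (A * Aᵀ)⁻¹ * A))
      ≤ (1 / sigmaMin Bstar) * frobNorm (B * A - Bstar * Astar) := by
  rcases Nat.eq_zero_or_pos r with hr | hr
  · subst hr
    have hl : frobNorm (Astar * ((1 : Matrix (Fin n) (Fin n) ℝ) - Aᵀ * (A * Aᵀ)⁻¹ * A)) = 0 := by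
      rw [frobNorm]; simp
    rw [hl]
    exact mul_nonneg (div_nonneg zero_le_one (sigmaMin_nonneg _)) (Real.sqrt_nonneg _)
  -- main case
  · set P : Matrix (Fin n) (Fin n) ℝ := 1 - Aᵀ * (A * Aᵀ)⁻¹ * A with hP
    -- A * Aᵀ is invertible
    have hAT : Aᵀ.rank = r := by rw [Matrix.rank_transpose]; exact hA
    have hATinj : Function.Injective Aᵀ.mulVec := mulVec_inj_of_rank Aᵀ hAT
    have hunit : IsUnit (A * Aᵀ) := by
      rw [← Matrix.mulVec_injective_iff_isUnit]
      intro x y hxy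
      have hd : (A * Aᵀ).mulVec (x - y) = 0 := by
        rw [Matrix.mulVec_sub, hxy, sub_self]
      have hAd : Aᵀ.mulVec (x - y) = 0 := by
        have h1 : (Aᵀ.mulVec (x - y)) ⬝ᵥ (Aᵀ.mulVec (x - y)) = 0 := by
          rw [Matrix.dotProduct_mulVec, Matrix.vecMul_transpose, Matrix.mulVec_mulVec,
            hd, zero_dotProduct]
        exact dotProduct_self_eq_zero.mp h1
      have : x - y = 0 := hATinj (by rw [hAd, Matrix.mulVec_zero])
      exact sub_eq_zero.mp this
    have hdet : IsUnit (A * Aᵀ).det := (Matrix.isUnit_iff_isUnit_det _).mp hunit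
    have hInv : (A * Aᵀ) * (A * Aᵀ)⁻¹ = 1 := Matrix.mul_nonsing_inv _ hdet
    have hInv' : (A * Aᵀ)⁻¹ * (A * Aᵀ) = 1 := Matrix.nonsing_inv_mul _ hdet
    -- properties of P
    have hAP : A * P = 0 := by
      rw [hP, Matrix.mul_sub, Matrix.mul_one]
      have : A * (Aᵀ * (A * Aᵀ)⁻¹ * A) = (A * Aᵀ) * (A * Aᵀ)⁻¹ * A := by
        rw [Matrix.mul_assoc, Matrix.mul_assoc, Matrix.mul_assoc]
      rw [this, hInv, Matrix.one_mul, sub_self]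
    have hPsymm : Pᵀ = P := by
      rw [hP, Matrix.transpose_sub, Matrix.transpose_one]
      congr 1
      rw [Matrix.transpose_mul, Matrix.transpose_mul, Matrix.transpose_transpose,
        Matrix.transpose_nonsing_inv, Matrix.transpose_mul, Matrix.transpose_transpose,
        Matrix.mul_assoc]
    have hQQ : (Aᵀ * (A * Aᵀ)⁻¹ * A) * (Aᵀ * (A * Aᵀ)⁻¹ * A) = Aᵀ * (A * Aᵀ)⁻¹ * A := by
      calc (Aᵀ * (A * Aᵀ)⁻¹ * A) * (Aᵀ * (A * Aᵀ)⁻¹ * A)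
          = Aᵀ * ((A * Aᵀ)⁻¹ * ((A * Aᵀ) * ((A * Aᵀ)⁻¹ * A))) := by
            simp only [Matrix.mul_assoc]
        _ = Aᵀ * (A * Aᵀ)⁻¹ * A := by
            rw [← Matrix.mul_assoc (A * Aᵀ)⁻¹, hInv', Matrix.one_mul, Matrix.mul_assoc]
    have hPP : P * P = P := by
      rw [hP, sub_mul, one_mul, mul_sub, mul_one, hQQ]; abel
    -- key matrices
    set E : Matrix (Fin m) (Fin n) ℝ := B * A - Bstar * Astar with hE
    set C : Matrix (Fin r) (Fin n) ℝ := Astar * P with hC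
    have hEP : E * P = -(Bstar * C) := by
      rw [hE, hC, Matrix.sub_mul, Matrix.mul_assoc, Matrix.mul_assoc, hAP,
        Matrix.mul_zero, zero_sub]
    -- sigma
    have hBinj : Function.Injective Bstar.mulVec := mulVec_inj_of_rank Bstar hBstar
    have hσ : 0 < sigmaMin Bstar := sigmaMin_pos Bstar hr hBinj
    -- squared sums
    have step1 : sigmaMin Bstar ^ 2 * (∑ k, ∑ j, (C k j) ^ 2)
        ≤ ∑ i, ∑ j, ((Bstar * C) i j) ^ 2 := sumsq_mul_ge Bstar C
    have step2 : ∑ i, ∑ j, ((Bstar * C) i j) ^ 2 = ∑ i, ∑ j, ((E * P) i j) ^ 2 := by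
      rw [hEP]
      refine Finset.sum_congr rfl fun i _ => Finset.sum_congr rfl fun j _ => ?_
      simp [neg_sq]
    have step3 : ∑ i, ∑ j, ((E * P) i j) ^ 2 ≤ ∑ i, ∑ j, (E i j) ^ 2 := by
      refine Finset.sum_le_sum fun i _ => ?_
      have hrow : ∀ j, (E * P) i j = P.mulVec (E i) j := by
        intro j
        rw [Matrix.mul_apply, Matrix.mulVec, dotProduct]
        refine Finset.sum_congr rfl fun k _ => ?_
        rw [mul_comm]
        congr 1
        conv_lhs => rw [← hPsymm]
        rw [Matrix.transpose_apply]
      calc ∑ j, ((E * P) i j) ^ 2 = ∑ j, (P.mulVec (E i) j) ^ 2 := by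
            refine Finset.sum_congr rfl fun j _ => by rw [hrow j]
        _ ≤ ∑ j, (E i j) ^ 2 := proj_contract P hPsymm hPP (E i)
    have key : sigmaMin Bstar ^ 2 * (∑ k, ∑ j, (C k j) ^ 2) ≤ ∑ i, ∑ j, (E i j) ^ 2 := by
      calc sigmaMin Bstar ^ 2 * (∑ k, ∑ j, (C k j) ^ 2)
          ≤ ∑ i, ∑ j, ((Bstar * C) i j) ^ 2 := step1
        _ = ∑ i, ∑ j, ((E * P) i j) ^ 2 := step2
        _ ≤ ∑ i, ∑ j, (E i j) ^ 2 := step3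
    -- conclude with square roots
    have hCnn : 0 ≤ ∑ k, ∑ j, (C k j) ^ 2 :=
      Finset.sum_nonneg fun _ _ => Finset.sum_nonneg fun _ _ => sq_nonneg _
    have hsqrt : Real.sqrt (sigmaMin Bstar ^ 2 * (∑ k, ∑ j, (C k j) ^ 2))
        ≤ Real.sqrt (∑ i, ∑ j, (E i j) ^ 2) := Real.sqrt_le_sqrt key
    rw [Real.sqrt_mul (sq_nonneg _), Real.sqrt_sq hσ.le] at hsqrt
    rw [frobNorm, frobNorm]
    rw [div_mul_eq_mul_div, one_mul, le_div_iff₀ hσ, mul_comm]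
    exact hsqrt
end

section
/- Let γ_min, γ_max > 0 and let B, B̃ ∈ ℝ^{m×r} satisfy γ_min·I ⪯ BᵀB ⪯ γ_max·I and γ_min·I ⪯ B̃ᵀB̃ ⪯ γ_max·I. Then ‖(BᵀB)⁻¹Bᵀ − (B̃ᵀB̃)⁻¹B̃ᵀ‖_F ≤ (1/γ_min + 2·γ_max/γ_min²) · ‖B − B̃‖_F. -/
open Matrix

namespace PLaux

attribute [local instance] Matrix.frobeniusNormedAddCommGroup

lemma frobNorm_eq_norm {a b : ℕ} (A : Matrix (Fin a) (Fin b) ℝ) : frobNorm A = ‖A‖ := by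
  rw [Matrix.frobenius_norm_def, frobNorm, Real.sqrt_eq_rpow]
  congr 1
  refine Finset.sum_congr rfl fun i _ => Finset.sum_congr rfl fun j _ => ?_
  rw [Real.norm_eq_abs, show ((2:ℝ) = ((2:ℕ):ℝ)) by norm_num, Real.rpow_natCast, sq_abs]

lemma frobNorm_nonneg {a b : ℕ} (A : Matrix (Fin a) (Fin b) ℝ) : 0 ≤ frobNorm A :=
  Real.sqrt_nonneg _

lemma frobNorm_transpose {a b : ℕ} (A : Matrix (Fin a) (Fin b) ℝ) :
    frobNorm Aᵀ = frobNorm A := by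
  rw [frobNorm, frobNorm, Finset.sum_comm]
  rfl

lemma frobNorm_eq {a b : ℕ} (A : Matrix (Fin a) (Fin b) ℝ) :
    frobNorm A = Real.sqrt (Aᵀ * A).trace := by
  rw [frobNorm, Matrix.trace]
  congr 1
  rw [Finset.sum_comm]
  refine Finset.sum_congr rfl fun i _ => ?_
  simp [Matrix.mul_apply, sq]

lemma triangle3 {a b : ℕ} (X Y Z : Matrix (Fin a) (Fin b) ℝ) :
    frobNorm (X - Y - Z) ≤ frobNorm X + frobNorm Y + frobNorm Z := by
  simp only [frobNorm_eq_norm]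
  calc ‖X - Y - Z‖ ≤ ‖X - Y‖ + ‖Z‖ := norm_sub_le _ _
    _ ≤ ‖X‖ + ‖Y‖ + ‖Z‖ := by gcongr; exact norm_sub_le _ _


lemma psd_smul {n : ℕ} {M : Matrix (Fin n) (Fin n) ℝ} (hM : M.PosSemidef) {c : ℝ} (hc : 0 ≤ c) :
    (c • M).PosSemidef := by
  refine Matrix.PosSemidef.of_dotProduct_mulVec_nonneg ?_ fun x => ?_
  · simp [Matrix.IsHermitian, Matrix.conjTranspose_smul, hM.1.eq]
    rw [show Mᵀ = M from (Matrix.conjTranspose_eq_transpose_of_trivial M) ▸ hM.1.eq]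
  · rw [Matrix.smul_mulVec, dotProduct_smul]
    exact mul_nonneg hc (hM.dotProduct_mulVec_nonneg x)

lemma psd_trace_nonneg {n : ℕ} {M : Matrix (Fin n) (Fin n) ℝ} (hM : M.PosSemidef) :
    0 ≤ M.trace := by
  rw [Matrix.trace]
  refine Finset.sum_nonneg fun i _ => ?_
  have := hM.dotProduct_mulVec_nonneg (Pi.single i 1)
  simpa [Matrix.mulVec, dotProduct, Pi.single_apply] using this

lemma congr_psd {a b : ℕ} {M : Matrix (Fin a) (Fin a) ℝ} (hM : M.PosSemidef)
    (X : Matrix (Fin a) (Fin b) ℝ) : (Xᵀ * M * X).PosSemidef := by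
  have := hM.conjTranspose_mul_mul_same X
  rwa [Matrix.conjTranspose_eq_transpose_of_trivial] at this

lemma congr_psd' {a b : ℕ} {M : Matrix (Fin a) (Fin a) ℝ} (hM : M.PosSemidef)
    (X : Matrix (Fin b) (Fin a) ℝ) : (X * M * Xᵀ).PosSemidef := by
  have := hM.mul_mul_conjTranspose_same X
  rwa [Matrix.conjTranspose_eq_transpose_of_trivial] at this

lemma frob_mul_left {p a b : ℕ} {A : Matrix (Fin p) (Fin a) ℝ} {c : ℝ} (hc : 0 ≤ c)
    (h : (c • (1 : Matrix (Fin a) (Fin a) ℝ) - Aᵀ * A).PosSemidef)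
    (X : Matrix (Fin a) (Fin b) ℝ) :
    frobNorm (A * X) ≤ Real.sqrt c * frobNorm X := by
  rw [frobNorm_eq, frobNorm_eq, ← Real.sqrt_mul hc]
  apply Real.sqrt_le_sqrt
  have key := psd_trace_nonneg (congr_psd h X)
  have expand : Xᵀ * (c • (1 : Matrix (Fin a) (Fin a) ℝ) - Aᵀ * A) * X
      = c • (Xᵀ * X) - (A * X)ᵀ * (A * X) := by
    rw [Matrix.mul_sub, Matrix.sub_mul, Matrix.transpose_mul]
    rw [Matrix.mul_smul, Matrix.smul_mul, Matrix.mul_one]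
    rw [Matrix.mul_assoc, Matrix.mul_assoc, Matrix.mul_assoc]
  rw [expand, Matrix.trace_sub, Matrix.trace_smul, smul_eq_mul] at key
  linarith

lemma frob_mul_right {a b p : ℕ} {A : Matrix (Fin b) (Fin p) ℝ} {c : ℝ} (hc : 0 ≤ c)
    (h : (c • (1 : Matrix (Fin b) (Fin b) ℝ) - A * Aᵀ).PosSemidef)
    (X : Matrix (Fin a) (Fin b) ℝ) :
    frobNorm (X * A) ≤ Real.sqrt c * frobNorm X := by
  have h' : (c • (1 : Matrix (Fin b) (Fin b) ℝ) - (Aᵀ)ᵀ * Aᵀ).PosSemidef := by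
    rwa [Matrix.transpose_transpose]
  have := frob_mul_left hc h' Xᵀ
  rwa [← Matrix.transpose_mul, frobNorm_transpose, frobNorm_transpose] at this


lemma herm_transpose {n : ℕ} {M : Matrix (Fin n) (Fin n) ℝ} (h : M.IsHermitian) : Mᵀ = M :=
  (Matrix.conjTranspose_eq_transpose_of_trivial M) ▸ h.eq

open scoped MatrixOrder in
lemma psd_sq_le {n : ℕ} {M : Matrix (Fin n) (Fin n) ℝ} (hM : M.PosSemidef) {c : ℝ} (hc : 0 ≤ c)
    (h : (c • (1 : Matrix (Fin n) (Fin n) ℝ) - M).PosSemidef) :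
    ((c ^ 2) • (1 : Matrix (Fin n) (Fin n) ℝ) - M * M).PosSemidef := by
  have hS : (CFC.sqrt M).PosSemidef := (CFC.sqrt_nonneg M).posSemidef
  have hSS : CFC.sqrt M * CFC.sqrt M = M := CFC.sqrt_mul_sqrt_self M hM.nonneg
  set S := CFC.sqrt M with hSdef
  have h1 : (S * (c • (1 : Matrix (Fin n) (Fin n) ℝ) - M) * Sᵀ).PosSemidef := congr_psd' h S
  rw [herm_transpose hS.1] at h1
  have h2 := psd_smul h hc
  have e : S * (c • (1 : Matrix (Fin n) (Fin n) ℝ) - M) * S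
      + c • (c • (1 : Matrix (Fin n) (Fin n) ℝ) - M)
      = (c ^ 2) • (1 : Matrix (Fin n) (Fin n) ℝ) - M * M := by
    have hSMS : S * M * S = M * M := by
      rw [← hSS]
      simp only [Matrix.mul_assoc]
    rw [Matrix.mul_sub, Matrix.sub_mul, Matrix.mul_smul, Matrix.smul_mul, Matrix.mul_one, hSS,
      hSMS, smul_sub, smul_smul]
    rw [sq c]
    abel
  have := h1.add h2
  rwa [e] at this

lemma psd_transfer {a b : ℕ} {G : Matrix (Fin a) (Fin b) ℝ} {c : ℝ} (hc : 0 < c)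
    (h : (c • (1 : Matrix (Fin b) (Fin b) ℝ) - Gᵀ * G).PosSemidef) :
    (c • (1 : Matrix (Fin a) (Fin a) ℝ) - G * Gᵀ).PosSemidef := by
  set P := c • (1 : Matrix (Fin a) (Fin a) ℝ) - G * Gᵀ with hP
  have hPsym : Pᵀ = P := by
    rw [hP, Matrix.transpose_sub, Matrix.transpose_smul, Matrix.transpose_one,
      Matrix.transpose_mul, Matrix.transpose_transpose]
  have h1 : (Pᵀ * P).PosSemidef := by
    have := Matrix.posSemidef_conjTranspose_mul_self P
    rwa [Matrix.conjTranspose_eq_transpose_of_trivial] at this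
  have h2 : (G * (c • (1 : Matrix (Fin b) (Fin b) ℝ) - Gᵀ * G) * Gᵀ).PosSemidef := congr_psd' h G
  have e : c • P = Pᵀ * P + G * (c • (1 : Matrix (Fin b) (Fin b) ℝ) - Gᵀ * G) * Gᵀ := by
    rw [hPsym, hP]
    simp only [Matrix.mul_sub, Matrix.sub_mul, Matrix.mul_smul, Matrix.smul_mul,
      Matrix.mul_one, Matrix.one_mul, smul_sub, smul_smul, Matrix.mul_assoc]
    abel
  have hsum := h1.add h2
  rw [← e] at hsum
  have := psd_smul hsum (le_of_lt (inv_pos.mpr hc))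
  rwa [smul_smul, inv_mul_cancel₀ (ne_of_gt hc), one_smul] at this

lemma posdef_smul_one {n : ℕ} {γ : ℝ} (hγ : 0 < γ) :
    (γ • (1 : Matrix (Fin n) (Fin n) ℝ)).PosDef := by
  have e : γ • (1 : Matrix (Fin n) (Fin n) ℝ) = Matrix.diagonal (fun _ => γ) := by
    ext i j
    by_cases hij : i = j <;> simp [Matrix.one_apply, Matrix.diagonal_apply, hij]
  rw [e]
  exact Matrix.posDef_diagonal_iff.mpr fun _ => hγ

lemma posdef_of_lower {n : ℕ} {M : Matrix (Fin n) (Fin n) ℝ} {γ : ℝ} (hγ : 0 < γ)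
    (h : (M - γ • (1 : Matrix (Fin n) (Fin n) ℝ)).PosSemidef) : M.PosDef := by
  have := Matrix.PosDef.posSemidef_add h (posdef_smul_one (n := n) hγ)
  rwa [sub_add_cancel] at this


open scoped MatrixOrder in
lemma psd_inv_le {n : ℕ} {M : Matrix (Fin n) (Fin n) ℝ} {γ : ℝ} (hγ : 0 < γ)
    (h : (M - γ • (1 : Matrix (Fin n) (Fin n) ℝ)).PosSemidef) :
    (γ⁻¹ • (1 : Matrix (Fin n) (Fin n) ℝ) - M⁻¹).PosSemidef := by
  have hMd : M.PosDef := posdef_of_lower hγ h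
  have hdet : IsUnit M.det := (Matrix.isUnit_iff_isUnit_det M).mp hMd.isUnit
  have hMM : M * M⁻¹ = 1 := Matrix.mul_nonsing_inv M hdet
  have hMMl : M⁻¹ * M = 1 := Matrix.nonsing_inv_mul M hdet
  have hT : (CFC.sqrt (M - γ • (1 : Matrix (Fin n) (Fin n) ℝ))).PosSemidef :=
    (CFC.sqrt_nonneg _).posSemidef
  set T := CFC.sqrt (M - γ • (1 : Matrix (Fin n) (Fin n) ℝ)) with hTdef
  have hTT : T * T = M - γ • (1 : Matrix (Fin n) (Fin n) ℝ) := CFC.sqrt_mul_sqrt_self _ h.nonneg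
  have hcomm : M * T = T * M := by
    have hTN : T * (M - γ • (1 : Matrix (Fin n) (Fin n) ℝ))
        = (M - γ • (1 : Matrix (Fin n) (Fin n) ℝ)) * T := by
      rw [← hTT, ← Matrix.mul_assoc]
    rw [Matrix.mul_sub, Matrix.sub_mul, Matrix.smul_mul, Matrix.mul_smul, Matrix.one_mul,
      Matrix.mul_one] at hTN
    exact (sub_left_inj.mp hTN).symm
  have hMsym : M⁻¹ᵀ = M⁻¹ := by
    rw [Matrix.transpose_nonsing_inv, herm_transpose hMd.isHermitian]
  have hcong := congr_psd' hMd.posSemidef (M⁻¹ * T)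
  have etr : (M⁻¹ * T)ᵀ = T * M⁻¹ := by
    rw [Matrix.transpose_mul, herm_transpose hT.1, hMsym]
  rw [etr] at hcong
  simp only [Matrix.mul_assoc] at hcong
  -- hcong : (M⁻¹ * (T * (M * (T * M⁻¹)))).PosSemidef
  have e0 : M * (T * M⁻¹) = T := by
    rw [← Matrix.mul_assoc, hcomm, Matrix.mul_assoc, hMM, Matrix.mul_one]
  have key : γ⁻¹ • (M⁻¹ * (T * (M * (T * M⁻¹))))
      = γ⁻¹ • (1 : Matrix (Fin n) (Fin n) ℝ) - M⁻¹ := by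
    rw [e0, hTT, Matrix.mul_sub, hMMl, Matrix.mul_smul, Matrix.mul_one, smul_sub, smul_smul,
      inv_mul_cancel₀ (ne_of_gt hγ), one_smul]
  have := psd_smul hcong (le_of_lt (inv_pos.mpr hγ))
  rwa [key] at this

end PLaux

open PLaux in
set_option maxHeartbeats 2000000 in
/-- Lipschitz continuity of the pseudoinverse `B ↦ (BᵀB)⁻¹Bᵀ` under
two-sided eigenvalue bounds on `BᵀB`. -/
theorem pseudoinverse_lipschitz {m r : ℕ}
    (γmin γmax : ℝ) (hγmin : 0 < γmin) (hγmax : 0 < γmax)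
    (B Bt : Matrix (Fin m) (Fin r) ℝ)
    (hB1 : (Bᵀ * B - γmin • (1 : Matrix (Fin r) (Fin r) ℝ)).PosSemidef)
    (hB2 : (γmax • (1 : Matrix (Fin r) (Fin r) ℝ) - Bᵀ * B).PosSemidef)
    (hB1t : (Btᵀ * Bt - γmin • (1 : Matrix (Fin r) (Fin r) ℝ)).PosSemidef)
    (hB2t : (γmax • (1 : Matrix (Fin r) (Fin r) ℝ) - Btᵀ * Bt).PosSemidef) :
    frobNorm ((Bᵀ * B)⁻¹ * Bᵀ - (Btᵀ * Bt)⁻¹ * Btᵀ)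
      ≤ (1 / γmin + 2 * γmax / γmin ^ 2) * frobNorm (B - Bt) := by
  rcases Nat.eq_zero_or_pos r with hr | hr
  · subst hr
    simp [frobNorm]
  -- γmin ≤ γmax
  have hle : γmin ≤ γmax := by
    have hsum := hB1.add hB2
    have e : (Bᵀ * B - γmin • (1 : Matrix (Fin r) (Fin r) ℝ))
        + (γmax • (1 : Matrix (Fin r) (Fin r) ℝ) - Bᵀ * B)
        = (γmax - γmin) • (1 : Matrix (Fin r) (Fin r) ℝ) := by
      rw [sub_smul]; abel
    rw [e] at hsum
    have h0 := hsum.dotProduct_mulVec_nonneg (fun _ => 1)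
    simp [Matrix.smul_mulVec, Matrix.one_mulVec, dotProduct,
      Finset.sum_const, Finset.card_univ] at h0
    have hr' : (0:ℝ) < r := by exact_mod_cast hr
    nlinarith
  set M := Bᵀ * B with hMdef
  set N := Btᵀ * Bt with hNdef
  have hMd : M.PosDef := posdef_of_lower hγmin hB1
  have hNd : N.PosDef := posdef_of_lower hγmin hB1t
  have hMdet : IsUnit M.det := (Matrix.isUnit_iff_isUnit_det M).mp hMd.isUnit
  have hNdet : IsUnit N.det := (Matrix.isUnit_iff_isUnit_det N).mp hNd.isUnit
  have hMsym : M⁻¹ᵀ = M⁻¹ := by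
    rw [Matrix.transpose_nonsing_inv, herm_transpose hMd.isHermitian]
  have hNsym : N⁻¹ᵀ = N⁻¹ := by
    rw [Matrix.transpose_nonsing_inv, herm_transpose hNd.isHermitian]
  have hMinv : (γmin⁻¹ • (1 : Matrix (Fin r) (Fin r) ℝ) - M⁻¹).PosSemidef :=
    psd_inv_le hγmin hB1
  have hNinv : (γmin⁻¹ • (1 : Matrix (Fin r) (Fin r) ℝ) - N⁻¹).PosSemidef :=
    psd_inv_le hγmin hB1t
  have hMinvPSD : M⁻¹.PosSemidef := hMd.inv.posSemidef
  have hA1 : ((γmin⁻¹ ^ 2) • (1 : Matrix (Fin r) (Fin r) ℝ) - M⁻¹ᵀ * M⁻¹).PosSemidef := by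
    rw [hMsym]
    exact psd_sq_le hMinvPSD (inv_nonneg.mpr hγmin.le) hMinv
  have hA2 : (γmax • (1 : Matrix (Fin m) (Fin m) ℝ) - (Btᵀ)ᵀ * Btᵀ).PosSemidef := by
    rw [Matrix.transpose_transpose]
    exact psd_transfer hγmax hB2t
  have e3 : (N⁻¹ * Btᵀ) * (N⁻¹ * Btᵀ)ᵀ = N⁻¹ := by
    rw [Matrix.transpose_mul, hNsym]
    calc N⁻¹ * Btᵀ * (Bt * N⁻¹) = N⁻¹ * (Btᵀ * Bt * N⁻¹) := by
          simp only [Matrix.mul_assoc]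
      _ = N⁻¹ := by rw [Matrix.mul_nonsing_inv N hNdet, Matrix.mul_one]
  have hA3 : (γmin⁻¹ • (1 : Matrix (Fin r) (Fin r) ℝ)
      - (N⁻¹ * Btᵀ) * (N⁻¹ * Btᵀ)ᵀ).PosSemidef := by
    rw [e3]; exact hNinv
  have e4 : (B * (N⁻¹ * Btᵀ)) * (B * (N⁻¹ * Btᵀ))ᵀ = B * (N⁻¹ * Bᵀ) := by
    rw [Matrix.transpose_mul, Matrix.mul_assoc B (N⁻¹ * Btᵀ) _,
      ← Matrix.mul_assoc (N⁻¹ * Btᵀ) ((N⁻¹ * Btᵀ)ᵀ) Bᵀ, e3]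
  have p1 := psd_smul (psd_transfer hγmax hB2) (inv_nonneg.mpr hγmin.le)
  have p2 := congr_psd' hNinv B
  have hA4 : ((γmin⁻¹ * γmax) • (1 : Matrix (Fin m) (Fin m) ℝ)
      - (B * (N⁻¹ * Btᵀ)) * (B * (N⁻¹ * Btᵀ))ᵀ).PosSemidef := by
    rw [e4]
    have hsum2 := p1.add p2
    have eid : γmin⁻¹ • (γmax • (1 : Matrix (Fin m) (Fin m) ℝ) - B * Bᵀ)
        + B * (γmin⁻¹ • (1 : Matrix (Fin r) (Fin r) ℝ) - N⁻¹) * Bᵀ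
        = (γmin⁻¹ * γmax) • (1 : Matrix (Fin m) (Fin m) ℝ) - B * (N⁻¹ * Bᵀ) := by
      simp only [smul_sub, smul_smul, Matrix.mul_sub, Matrix.sub_mul, Matrix.mul_smul,
        Matrix.smul_mul, Matrix.mul_one, Matrix.one_mul, Matrix.mul_assoc]
      abel
    rwa [eid] at hsum2
  -- decomposition
  have c1 : Btᵀ * (Bt * (N⁻¹ * Btᵀ)) = Btᵀ := by
    rw [← Matrix.mul_assoc Btᵀ Bt _, ← hNdef,
      Matrix.mul_nonsing_inv_cancel_left (A := N) Btᵀ hNdet]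
  have c2 : Bᵀ * (B * (N⁻¹ * Btᵀ)) = M * (N⁻¹ * Btᵀ) := by
    rw [← Matrix.mul_assoc Bᵀ B _, ← hMdef]
  have c3 : M⁻¹ * (M * (N⁻¹ * Btᵀ)) = N⁻¹ * Btᵀ :=
    Matrix.nonsing_inv_mul_cancel_left (A := M) _ hMdet
  have decomp : M⁻¹ * Bᵀ - N⁻¹ * Btᵀ
      = M⁻¹ * (B - Bt)ᵀ - M⁻¹ * (Btᵀ * ((B - Bt) * (N⁻¹ * Btᵀ)))
        - M⁻¹ * ((B - Bt)ᵀ * (B * (N⁻¹ * Btᵀ))) := by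
    simp only [Matrix.transpose_sub, Matrix.sub_mul, Matrix.mul_sub, c1, c2, c3]
    abel
  -- norm bounds
  have hγi : (0:ℝ) ≤ γmin⁻¹ := inv_nonneg.mpr hγmin.le
  have sq1 : Real.sqrt (γmin⁻¹ ^ 2) = γmin⁻¹ := Real.sqrt_sq hγi
  have s1 : frobNorm (M⁻¹ * (B - Bt)ᵀ) ≤ γmin⁻¹ * frobNorm (B - Bt) := by
    have t := frob_mul_left (by positivity) hA1 (B - Bt)ᵀ
    rwa [sq1, frobNorm_transpose] at t
  have s2 : frobNorm (M⁻¹ * (Btᵀ * ((B - Bt) * (N⁻¹ * Btᵀ))))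
      ≤ γmin⁻¹ * (Real.sqrt γmax * (Real.sqrt γmin⁻¹ * frobNorm (B - Bt))) := by
    have t1 := frob_mul_left (by positivity) hA1 (Btᵀ * ((B - Bt) * (N⁻¹ * Btᵀ)))
    rw [sq1] at t1
    have t2 := frob_mul_left hγmax.le hA2 ((B - Bt) * (N⁻¹ * Btᵀ))
    have t3 := frob_mul_right hγi hA3 (B - Bt)
    refine t1.trans (mul_le_mul_of_nonneg_left (t2.trans ?_) hγi)
    exact mul_le_mul_of_nonneg_left t3 (Real.sqrt_nonneg _)
  have s3 : frobNorm (M⁻¹ * ((B - Bt)ᵀ * (B * (N⁻¹ * Btᵀ))))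
      ≤ γmin⁻¹ * (Real.sqrt (γmin⁻¹ * γmax) * frobNorm (B - Bt)) := by
    have t1 := frob_mul_left (by positivity) hA1 ((B - Bt)ᵀ * (B * (N⁻¹ * Btᵀ)))
    rw [sq1] at t1
    have t2 := frob_mul_right (by positivity) hA4 (B - Bt)ᵀ
    rw [frobNorm_transpose] at t2
    exact t1.trans (mul_le_mul_of_nonneg_left t2 hγi)
  -- assemble
  rw [decomp]
  have tri := triangle3 (M⁻¹ * (B - Bt)ᵀ) (M⁻¹ * (Btᵀ * ((B - Bt) * (N⁻¹ * Btᵀ))))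
    (M⁻¹ * ((B - Bt)ᵀ * (B * (N⁻¹ * Btᵀ))))
  have total := tri.trans (add_le_add (add_le_add s1 s2) s3)
  refine total.trans ?_
  -- arithmetic
  have hF0 : 0 ≤ frobNorm (B - Bt) := frobNorm_nonneg _
  set F := frobNorm (B - Bt) with hF
  have hs : Real.sqrt γmax * Real.sqrt γmin⁻¹ = Real.sqrt (γmin⁻¹ * γmax) := by
    rw [← Real.sqrt_mul hγmax.le, mul_comm]
  set s := Real.sqrt (γmin⁻¹ * γmax) with hsdef
  have hs0 : 0 ≤ s := Real.sqrt_nonneg _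
  have hs2 : s ^ 2 = γmin⁻¹ * γmax := Real.sq_sqrt (by positivity)
  have hratio : 1 ≤ γmin⁻¹ * γmax := by
    rw [inv_mul_eq_div]
    exact (one_le_div hγmin).mpr hle
  have hkey : s ≤ γmin⁻¹ * γmax := by nlinarith [sq_nonneg (s - 1)]
  have e1 : 1 / γmin = γmin⁻¹ := one_div γmin
  have e2 : 2 * γmax / γmin ^ 2 = 2 * (γmin⁻¹ * (γmin⁻¹ * γmax)) := by
    field_simp
  rw [e1, e2, show Real.sqrt γmax * (Real.sqrt γmin⁻¹ * F) = s * F by rw [← hs]; ring]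
  have q1 : γmin⁻¹ * (s * F) ≤ γmin⁻¹ * (γmin⁻¹ * γmax * F) :=
    mul_le_mul_of_nonneg_left (mul_le_mul_of_nonneg_right hkey hF0) hγi
  nlinarith [q1]
end

section
/- Let γ_min, γ_max > 0 and let B, B̃ ∈ ℝ^{m×r} satisfy γ_min·I ⪯ BᵀB ⪯ γ_max·I and γ_min·I ⪯ B̃ᵀB̃ ⪯ γ_max·I. Then the orthogonal projections onto the column spaces of B and B̃ satisfy ‖B(BᵀB)⁻¹Bᵀ − B̃(B̃ᵀB̃)⁻¹B̃ᵀ‖_F ≤ ( √γ_max/γ_min + 2·γ_max^{3/2}/γ_min² + 1/√γ_min ) · ‖B − B̃‖_F. -/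
open Matrix

namespace ColProjAux

lemma dp_self_nonneg {n : ℕ} (v : Fin n → ℝ) : 0 ≤ v ⬝ᵥ v :=
  Finset.sum_nonneg fun i _ => mul_self_nonneg _

lemma dp_cs {n : ℕ} (v w : Fin n → ℝ) :
    v ⬝ᵥ w ≤ Real.sqrt (v ⬝ᵥ v) * Real.sqrt (w ⬝ᵥ w) := by
  have h := Real.sum_mul_le_sqrt_mul_sqrt (Finset.univ : Finset (Fin n)) v w
  simpa only [dotProduct, pow_two] using h

/-- operator norm square bound: `‖X u‖² ≤ c ‖u‖²`. -/
def opb (c : ℝ) {a b : ℕ} (X : Matrix (Fin a) (Fin b) ℝ) : Prop :=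
  ∀ u : Fin b → ℝ, (X *ᵥ u) ⬝ᵥ (X *ᵥ u) ≤ c * (u ⬝ᵥ u)

lemma quad_div {γ t s : ℝ} (hγ : 0 < γ) (ht : 0 ≤ t) (hs : 0 ≤ s)
    (h : γ * t ^ 2 ≤ t * s) : t ≤ γ⁻¹ * s := by
  rcases eq_or_lt_of_le ht with h0 | h0
  · rw [← h0]; positivity
  · have h1 : γ * t ≤ s := by nlinarith
    calc t = γ⁻¹ * (γ * t) := by field_simp
    _ ≤ γ⁻¹ * s := by
        exact mul_le_mul_of_nonneg_left h1 (inv_nonneg.2 hγ.le)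

lemma opb_transpose {a b : ℕ} {c : ℝ} (hc : 0 ≤ c) {X : Matrix (Fin a) (Fin b) ℝ}
    (h : opb c X) : opb c Xᵀ := by
  intro v
  set w : Fin b → ℝ := Xᵀ *ᵥ v with hw
  have ht0 : 0 ≤ w ⬝ᵥ w := dp_self_nonneg w
  have h1 : w ⬝ᵥ w = v ⬝ᵥ (X *ᵥ w) := by
    rw [dotProduct_mulVec v X w, ← Matrix.mulVec_transpose, ← hw]
  have h2 : v ⬝ᵥ (X *ᵥ w) ≤ Real.sqrt (v ⬝ᵥ v) * Real.sqrt ((X *ᵥ w) ⬝ᵥ (X *ᵥ w)) :=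
    dp_cs _ _
  have h3 : Real.sqrt ((X *ᵥ w) ⬝ᵥ (X *ᵥ w)) ≤ Real.sqrt (c * (w ⬝ᵥ w)) :=
    Real.sqrt_le_sqrt (h w)
  have h4 : w ⬝ᵥ w ≤ Real.sqrt (v ⬝ᵥ v) * (Real.sqrt c * Real.sqrt (w ⬝ᵥ w)) := by
    calc w ⬝ᵥ w = v ⬝ᵥ (X *ᵥ w) := h1
    _ ≤ Real.sqrt (v ⬝ᵥ v) * Real.sqrt ((X *ᵥ w) ⬝ᵥ (X *ᵥ w)) := h2
    _ ≤ Real.sqrt (v ⬝ᵥ v) * Real.sqrt (c * (w ⬝ᵥ w)) :=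
        mul_le_mul_of_nonneg_left h3 (Real.sqrt_nonneg _)
    _ = Real.sqrt (v ⬝ᵥ v) * (Real.sqrt c * Real.sqrt (w ⬝ᵥ w)) := by
        rw [Real.sqrt_mul hc]
  -- conclude w⬝w ≤ c * v⬝v
  have hsq : w ⬝ᵥ w = Real.sqrt (w ⬝ᵥ w) * Real.sqrt (w ⬝ᵥ w) :=
    (Real.mul_self_sqrt ht0).symm
  rcases eq_or_lt_of_le (Real.sqrt_nonneg (w ⬝ᵥ w)) with h0 | h0
  · have : w ⬝ᵥ w = 0 := by rw [hsq, ← h0]; ring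
    rw [this]
    have := dp_self_nonneg v
    positivity
  · have h5 : Real.sqrt (w ⬝ᵥ w) ≤ Real.sqrt (v ⬝ᵥ v) * Real.sqrt c := by
      have := h4
      rw [hsq] at this
      nlinarith
    have h6 : w ⬝ᵥ w ≤ (Real.sqrt (v ⬝ᵥ v) * Real.sqrt c) ^ 2 := by
      rw [hsq, ← pow_two]
      exact pow_le_pow_left₀ (Real.sqrt_nonneg _) h5 2
    calc w ⬝ᵥ w ≤ (Real.sqrt (v ⬝ᵥ v) * Real.sqrt c) ^ 2 := h6
    _ = c * (v ⬝ᵥ v) := by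
        rw [mul_pow, Real.sq_sqrt (dp_self_nonneg v), Real.sq_sqrt hc]; ring

lemma frobNorm_nonneg {m n : ℕ} (A : Matrix (Fin m) (Fin n) ℝ) : 0 ≤ frobNorm A :=
  Real.sqrt_nonneg _

lemma frob_transpose {m n : ℕ} (A : Matrix (Fin m) (Fin n) ℝ) :
    frobNorm Aᵀ = frobNorm A := by
  unfold frobNorm
  congr 1
  rw [Finset.sum_comm]
  simp [Matrix.transpose_apply]

lemma frob_mul_left {a b c : ℕ} {κ : ℝ} (hκ : 0 ≤ κ) {X : Matrix (Fin a) (Fin b) ℝ}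
    (hX : opb κ X) (Y : Matrix (Fin b) (Fin c) ℝ) :
    frobNorm (X * Y) ≤ Real.sqrt κ * frobNorm Y := by
  unfold frobNorm
  rw [← Real.sqrt_mul hκ]
  apply Real.sqrt_le_sqrt
  rw [Finset.sum_comm]
  have hcol : ∀ j, ∑ i, ((X * Y) i j) ^ 2
      = (X *ᵥ (fun k => Y k j)) ⬝ᵥ (X *ᵥ (fun k => Y k j)) := by
    intro j
    simp [Matrix.mul_apply, Matrix.mulVec, dotProduct, pow_two]
  calc ∑ j, ∑ i, ((X * Y) i j) ^ 2
      = ∑ j, (X *ᵥ (fun k => Y k j)) ⬝ᵥ (X *ᵥ (fun k => Y k j)) := by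
        exact Finset.sum_congr rfl fun j _ => hcol j
  _ ≤ ∑ j : Fin c, κ * ((fun k => Y k j) ⬝ᵥ (fun k => Y k j)) :=
        Finset.sum_le_sum fun j _ => hX _
  _ = κ * ∑ i, ∑ j, (Y i j) ^ 2 := by
        rw [← Finset.mul_sum]
        congr 1
        rw [Finset.sum_comm]
        simp [dotProduct, pow_two]

lemma frob_mul_right {a b c : ℕ} {κ : ℝ} (hκ : 0 ≤ κ) {X : Matrix (Fin b) (Fin c) ℝ}
    (hX : opb κ Xᵀ) (Y : Matrix (Fin a) (Fin b) ℝ) :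
    frobNorm (Y * X) ≤ Real.sqrt κ * frobNorm Y := by
  rw [← frob_transpose (Y * X), Matrix.transpose_mul, ← frob_transpose Y]
  exact frob_mul_left hκ hX Yᵀ

noncomputable def toE {m n : ℕ} (A : Matrix (Fin m) (Fin n) ℝ) :
    EuclideanSpace ℝ (Fin m × Fin n) :=
  (WithLp.equiv 2 ((Fin m × Fin n) → ℝ)).symm (fun p => A p.1 p.2)

lemma frob_eq_norm {m n : ℕ} (A : Matrix (Fin m) (Fin n) ℝ) :
    frobNorm A = ‖toE A‖ := by
  rw [EuclideanSpace.norm_eq]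
  unfold frobNorm
  congr 1
  rw [Fintype.sum_prod_type]
  refine Finset.sum_congr rfl fun a _ => Finset.sum_congr rfl fun b _ => ?_
  rw [Real.norm_eq_abs, sq_abs]
  rfl

lemma toE_add {m n : ℕ} (A B : Matrix (Fin m) (Fin n) ℝ) :
    toE (A + B) = toE A + toE B := rfl

lemma toE_sub {m n : ℕ} (A B : Matrix (Fin m) (Fin n) ℝ) :
    toE (A - B) = toE A - toE B := rfl

lemma frob_add_le {m n : ℕ} (A B : Matrix (Fin m) (Fin n) ℝ) :
    frobNorm (A + B) ≤ frobNorm A + frobNorm B := by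
  rw [frob_eq_norm, frob_eq_norm, frob_eq_norm, toE_add]
  exact norm_add_le _ _

lemma frob_sub_le {m n : ℕ} (A B : Matrix (Fin m) (Fin n) ℝ) :
    frobNorm (A - B) ≤ frobNorm A + frobNorm B := by
  rw [frob_eq_norm, frob_eq_norm, frob_eq_norm, toE_sub]
  exact norm_sub_le _ _

lemma qf {m r : ℕ} (C : Matrix (Fin m) (Fin r) ℝ) (u : Fin r → ℝ) :
    u ⬝ᵥ ((Cᵀ * C) *ᵥ u) = (C *ᵥ u) ⬝ᵥ (C *ᵥ u) := by
  rw [← Matrix.mulVec_mulVec, dotProduct_mulVec, Matrix.vecMul_transpose]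

/-- all the facts we need about one matrix satisfying the eigenvalue bounds. -/
lemma package {m r : ℕ} {γmin γmax : ℝ} (hγmin : 0 < γmin) (hγmax : 0 < γmax)
    (B : Matrix (Fin m) (Fin r) ℝ)
    (hB1 : (Bᵀ * B - γmin • (1 : Matrix (Fin r) (Fin r) ℝ)).PosSemidef)
    (hB2 : (γmax • (1 : Matrix (Fin r) (Fin r) ℝ) - Bᵀ * B).PosSemidef) :
    (Bᵀ * B) * (Bᵀ * B)⁻¹ = 1 ∧ (Bᵀ * B)⁻¹ * (Bᵀ * B) = 1 ∧
    ((Bᵀ * B)⁻¹)ᵀ = (Bᵀ * B)⁻¹ ∧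
    opb γmax B ∧ opb (γmin⁻¹ * γmin⁻¹) (Bᵀ * B)⁻¹ ∧
    opb γmin⁻¹ (B * (Bᵀ * B)⁻¹) := by
  set A := Bᵀ * B with hA
  -- quadratic form bounds
  have coerc : ∀ u : Fin r → ℝ, γmin * (u ⬝ᵥ u) ≤ (B *ᵥ u) ⬝ᵥ (B *ᵥ u) := by
    intro u
    have h := hB1.dotProduct_mulVec_nonneg u
    rw [star_trivial] at h
    rw [Matrix.sub_mulVec, Matrix.smul_mulVec, Matrix.one_mulVec,
      dotProduct_sub, dotProduct_smul, qf] at h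
    simpa [smul_eq_mul] using h
  have opbB : opb γmax B := by
    intro u
    have h := hB2.dotProduct_mulVec_nonneg u
    rw [star_trivial] at h
    rw [Matrix.sub_mulVec, Matrix.smul_mulVec, Matrix.one_mulVec,
      dotProduct_sub, dotProduct_smul, qf] at h
    simpa [smul_eq_mul] using h
  -- A is positive definite
  have hApd : A.PosDef := by
    refine Matrix.PosDef.of_dotProduct_mulVec_pos ?_ ?_
    · show Aᴴ = A
      ext i j
      simp [hA, Matrix.conjTranspose_apply, Matrix.mul_apply, Matrix.transpose_apply,
        mul_comm]
    · intro x hx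
      rw [star_trivial]
      have h1 : 0 < x ⬝ᵥ x := by
        rcases eq_or_lt_of_le (dp_self_nonneg x) with h0 | h0
        · exact absurd (dotProduct_self_eq_zero.mp h0.symm) hx
        · exact h0
      have := coerc x
      rw [qf]
      nlinarith
  have hdet : IsUnit A.det := hApd.det_pos.ne'.isUnit
  have hAS : A * A⁻¹ = 1 := Matrix.mul_nonsing_inv A hdet
  have hSA : A⁻¹ * A = 1 := Matrix.nonsing_inv_mul A hdet
  have hAT : Aᵀ = A := by rw [hA, Matrix.transpose_mul, Matrix.transpose_transpose]
  have hST : (A⁻¹)ᵀ = A⁻¹ := by rw [Matrix.transpose_nonsing_inv, hAT]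
  -- opb for the inverse
  have hSw : ∀ u : Fin r → ℝ, Real.sqrt ((A⁻¹ *ᵥ u) ⬝ᵥ (A⁻¹ *ᵥ u))
      ≤ γmin⁻¹ * Real.sqrt (u ⬝ᵥ u) := by
    intro u
    set w : Fin r → ℝ := A⁻¹ *ᵥ u with hw
    have hAw : A *ᵥ w = u := by
      rw [hw, Matrix.mulVec_mulVec, hAS, Matrix.one_mulVec]
    have h1 : γmin * (w ⬝ᵥ w) ≤ w ⬝ᵥ u := by
      calc γmin * (w ⬝ᵥ w) ≤ (B *ᵥ w) ⬝ᵥ (B *ᵥ w) := coerc w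
      _ = w ⬝ᵥ ((Bᵀ * B) *ᵥ w) := (qf B w).symm
      _ = w ⬝ᵥ u := by rw [← hA, hAw]
    have h2 : w ⬝ᵥ u ≤ Real.sqrt (w ⬝ᵥ w) * Real.sqrt (u ⬝ᵥ u) := dp_cs _ _
    have h3 : γmin * Real.sqrt (w ⬝ᵥ w) ^ 2 ≤
        Real.sqrt (w ⬝ᵥ w) * Real.sqrt (u ⬝ᵥ u) := by
      rw [Real.sq_sqrt (dp_self_nonneg w)]
      exact h1.trans h2
    exact quad_div hγmin (Real.sqrt_nonneg _) (Real.sqrt_nonneg _) h3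
  have opbS : opb (γmin⁻¹ * γmin⁻¹) A⁻¹ := by
    intro u
    have h := hSw u
    have h2 : (A⁻¹ *ᵥ u) ⬝ᵥ (A⁻¹ *ᵥ u) ≤ (γmin⁻¹ * Real.sqrt (u ⬝ᵥ u)) ^ 2 := by
      rw [← Real.sq_sqrt (dp_self_nonneg (A⁻¹ *ᵥ u))]
      exact pow_le_pow_left₀ (Real.sqrt_nonneg _) h 2
    calc (A⁻¹ *ᵥ u) ⬝ᵥ (A⁻¹ *ᵥ u) ≤ (γmin⁻¹ * Real.sqrt (u ⬝ᵥ u)) ^ 2 := h2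
    _ = γmin⁻¹ * γmin⁻¹ * (u ⬝ᵥ u) := by
        rw [mul_pow, Real.sq_sqrt (dp_self_nonneg u)]; ring
  have opbBS : opb γmin⁻¹ (B * A⁻¹) := by
    intro u
    set w : Fin r → ℝ := A⁻¹ *ᵥ u with hw
    have hBS : (B * A⁻¹) *ᵥ u = B *ᵥ w := by
      rw [hw, Matrix.mulVec_mulVec]
    have hAw : A *ᵥ w = u := by
      rw [hw, Matrix.mulVec_mulVec, hAS, Matrix.one_mulVec]
    have h1 : (B *ᵥ w) ⬝ᵥ (B *ᵥ w) = w ⬝ᵥ u := by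
      calc (B *ᵥ w) ⬝ᵥ (B *ᵥ w) = w ⬝ᵥ ((Bᵀ * B) *ᵥ w) := (qf B w).symm
      _ = w ⬝ᵥ u := by rw [← hA, hAw]
    have h2 : w ⬝ᵥ u ≤ Real.sqrt (w ⬝ᵥ w) * Real.sqrt (u ⬝ᵥ u) := dp_cs _ _
    have h3 : Real.sqrt (w ⬝ᵥ w) ≤ γmin⁻¹ * Real.sqrt (u ⬝ᵥ u) := hSw u
    calc ((B * A⁻¹) *ᵥ u) ⬝ᵥ ((B * A⁻¹) *ᵥ u) = w ⬝ᵥ u := by rw [hBS, h1]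
    _ ≤ Real.sqrt (w ⬝ᵥ w) * Real.sqrt (u ⬝ᵥ u) := h2
    _ ≤ (γmin⁻¹ * Real.sqrt (u ⬝ᵥ u)) * Real.sqrt (u ⬝ᵥ u) :=
        mul_le_mul_of_nonneg_right h3 (Real.sqrt_nonneg _)
    _ = γmin⁻¹ * (u ⬝ᵥ u) := by
        rw [mul_assoc, Real.mul_self_sqrt (dp_self_nonneg u)]
  exact ⟨hAS, hSA, hST, opbB, opbS, opbBS⟩

end ColProjAux

open ColProjAux in
/-- Lipschitz continuity of the orthogonal projection onto the column space,
`B ↦ B(BᵀB)⁻¹Bᵀ`, under two-sided eigenvalue bounds on `BᵀB`. -/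
theorem column_projection_lipschitz {m r : ℕ}
    (γmin γmax : ℝ) (hγmin : 0 < γmin) (hγmax : 0 < γmax)
    (B Bt : Matrix (Fin m) (Fin r) ℝ)
    (hB1 : (Bᵀ * B - γmin • (1 : Matrix (Fin r) (Fin r) ℝ)).PosSemidef)
    (hB2 : (γmax • (1 : Matrix (Fin r) (Fin r) ℝ) - Bᵀ * B).PosSemidef)
    (hB1t : (Btᵀ * Bt - γmin • (1 : Matrix (Fin r) (Fin r) ℝ)).PosSemidef)
    (hB2t : (γmax • (1 : Matrix (Fin r) (Fin r) ℝ) - Btᵀ * Bt).PosSemidef) :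
    frobNorm (B * (Bᵀ * B)⁻¹ * Bᵀ - Bt * (Btᵀ * Bt)⁻¹ * Btᵀ)
      ≤ (Real.sqrt γmax / γmin + 2 * γmax ^ ((3:ℝ)/2) / γmin ^ 2
          + 1 / Real.sqrt γmin) * frobNorm (B - Bt) := by
  obtain ⟨hAS, hSA, hST, opbB, opbS, opbBS⟩ := package hγmin hγmax B hB1 hB2
  obtain ⟨hAtSt, hStAt, hStT, opbBt, opbSt, opbBtSt⟩ := package hγmin hγmax Bt hB1t hB2t
  set Δ : Matrix (Fin m) (Fin r) ℝ := B - Bt with hΔ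
  set A : Matrix (Fin r) (Fin r) ℝ := Bᵀ * B with hA
  set At : Matrix (Fin r) (Fin r) ℝ := Btᵀ * Bt with hAt
  set S : Matrix (Fin r) (Fin r) ℝ := A⁻¹ with hS
  set St : Matrix (Fin r) (Fin r) ℝ := At⁻¹ with hSt
  have opbBT : opb γmax Bᵀ := opb_transpose hγmax.le opbB
  have opbBtT : opb γmax Btᵀ := opb_transpose hγmax.le opbBt
  have hγi : (0:ℝ) ≤ γmin⁻¹ := by positivity
  have hγii : (0:ℝ) ≤ γmin⁻¹ * γmin⁻¹ := by positivity
  -- the algebraic decomposition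
  have step1 : B * S * Bᵀ - Bt * St * Btᵀ
      = Δ * S * Bᵀ + Bt * (S - St) * Bᵀ + Bt * St * Δᵀ := by
    rw [hΔ]
    simp only [Matrix.sub_mul, Matrix.mul_sub, Matrix.transpose_sub]
    abel
  have step2 : S - St = S * (At - A) * St := by
    calc S - St = S * (At * St) - S * A * St := by
          rw [hAtSt, hSA]
          simp
    _ = S * (At - A) * St := by noncomm_ring
  have step3 : At - A = -(Btᵀ * Δ) - Δᵀ * B := by
    rw [hΔ]
    simp only [Matrix.mul_sub, Matrix.sub_mul, Matrix.transpose_sub]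
    abel
  have key : B * S * Bᵀ - Bt * St * Btᵀ
      = ((Δ * S) * Bᵀ - Bt * (S * (Btᵀ * ((Δ * St) * Bᵀ)))
          - Bt * (S * (((Δᵀ * B) * St) * Bᵀ)))
        + (Bt * St) * Δᵀ := by
    rw [step1, step2, step3]
    simp only [Matrix.mul_sub, Matrix.sub_mul, Matrix.neg_mul, Matrix.mul_neg,
      Matrix.mul_assoc]
    abel
  rw [key]
  have hΔn : 0 ≤ frobNorm Δ := frobNorm_nonneg Δ
  have hsq : Real.sqrt (γmin⁻¹ * γmin⁻¹) = γmin⁻¹ := Real.sqrt_mul_self hγi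
  have hsm : 0 ≤ Real.sqrt γmax := Real.sqrt_nonneg _
  -- bound term 1
  have opbBTT : opb γmax Bᵀᵀ := by rw [Matrix.transpose_transpose]; exact opbB
  have opbSTT : opb (γmin⁻¹ * γmin⁻¹) Sᵀ := by rw [hST]; exact opbS
  have opbStTT : opb (γmin⁻¹ * γmin⁻¹) Stᵀ := by rw [hStT]; exact opbSt
  have b1 : frobNorm ((Δ * S) * Bᵀ) ≤ Real.sqrt γmax * (γmin⁻¹ * frobNorm Δ) := by
    calc frobNorm ((Δ * S) * Bᵀ) ≤ Real.sqrt γmax * frobNorm (Δ * S) :=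
          frob_mul_right hγmax.le opbBTT (Δ * S)
    _ ≤ Real.sqrt γmax * (γmin⁻¹ * frobNorm Δ) := by
        apply mul_le_mul_of_nonneg_left _ hsm
        have := frob_mul_right hγii opbSTT Δ
        rwa [hsq] at this
  -- bound for the inner piece (Δ * St) * Bᵀ
  have binner : frobNorm ((Δ * St) * Bᵀ) ≤ Real.sqrt γmax * (γmin⁻¹ * frobNorm Δ) := by
    calc frobNorm ((Δ * St) * Bᵀ) ≤ Real.sqrt γmax * frobNorm (Δ * St) :=
          frob_mul_right hγmax.le opbBTT (Δ * St)
    _ ≤ Real.sqrt γmax * (γmin⁻¹ * frobNorm Δ) := by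
        apply mul_le_mul_of_nonneg_left _ hsm
        have := frob_mul_right hγii opbStTT Δ
        rwa [hsq] at this
  have b2a : frobNorm (Bt * (S * (Btᵀ * ((Δ * St) * Bᵀ))))
      ≤ Real.sqrt γmax * (γmin⁻¹ * (Real.sqrt γmax *
          (Real.sqrt γmax * (γmin⁻¹ * frobNorm Δ)))) := by
    calc frobNorm (Bt * (S * (Btᵀ * ((Δ * St) * Bᵀ))))
        ≤ Real.sqrt γmax * frobNorm (S * (Btᵀ * ((Δ * St) * Bᵀ))) :=
          frob_mul_left hγmax.le opbBt _
    _ ≤ Real.sqrt γmax * (γmin⁻¹ * (Real.sqrt γmax *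
          (Real.sqrt γmax * (γmin⁻¹ * frobNorm Δ)))) := by
        apply mul_le_mul_of_nonneg_left _ hsm
        calc frobNorm (S * (Btᵀ * ((Δ * St) * Bᵀ)))
            ≤ γmin⁻¹ * frobNorm (Btᵀ * ((Δ * St) * Bᵀ)) := by
              have := frob_mul_left hγii opbS (Btᵀ * ((Δ * St) * Bᵀ))
              rwa [hsq] at this
        _ ≤ γmin⁻¹ * (Real.sqrt γmax * (Real.sqrt γmax * (γmin⁻¹ * frobNorm Δ))) := by
              apply mul_le_mul_of_nonneg_left _ hγi
              calc frobNorm (Btᵀ * ((Δ * St) * Bᵀ))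
                  ≤ Real.sqrt γmax * frobNorm ((Δ * St) * Bᵀ) :=
                    frob_mul_left hγmax.le opbBtT _
              _ ≤ Real.sqrt γmax * (Real.sqrt γmax * (γmin⁻¹ * frobNorm Δ)) :=
                    mul_le_mul_of_nonneg_left binner hsm
  have binner2 : frobNorm (((Δᵀ * B) * St) * Bᵀ)
      ≤ Real.sqrt γmax * (γmin⁻¹ * (Real.sqrt γmax * frobNorm Δ)) := by
    calc frobNorm (((Δᵀ * B) * St) * Bᵀ)
        ≤ Real.sqrt γmax * frobNorm ((Δᵀ * B) * St) :=
          frob_mul_right hγmax.le opbBTT _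
    _ ≤ Real.sqrt γmax * (γmin⁻¹ * (Real.sqrt γmax * frobNorm Δ)) := by
        apply mul_le_mul_of_nonneg_left _ hsm
        calc frobNorm ((Δᵀ * B) * St) ≤ γmin⁻¹ * frobNorm (Δᵀ * B) := by
              have := frob_mul_right hγii opbStTT (Δᵀ * B)
              rwa [hsq] at this
        _ ≤ γmin⁻¹ * (Real.sqrt γmax * frobNorm Δ) := by
              apply mul_le_mul_of_nonneg_left _ hγi
              have := frob_mul_right hγmax.le opbBT Δᵀ
              rwa [frob_transpose Δ] at this
  have b2b : frobNorm (Bt * (S * (((Δᵀ * B) * St) * Bᵀ)))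
      ≤ Real.sqrt γmax * (γmin⁻¹ * (Real.sqrt γmax *
          (γmin⁻¹ * (Real.sqrt γmax * frobNorm Δ)))) := by
    calc frobNorm (Bt * (S * (((Δᵀ * B) * St) * Bᵀ)))
        ≤ Real.sqrt γmax * frobNorm (S * (((Δᵀ * B) * St) * Bᵀ)) :=
          frob_mul_left hγmax.le opbBt _
    _ ≤ Real.sqrt γmax * (γmin⁻¹ * (Real.sqrt γmax *
          (γmin⁻¹ * (Real.sqrt γmax * frobNorm Δ)))) := by
        apply mul_le_mul_of_nonneg_left _ hsm
        calc frobNorm (S * (((Δᵀ * B) * St) * Bᵀ))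
            ≤ γmin⁻¹ * frobNorm (((Δᵀ * B) * St) * Bᵀ) := by
              have := frob_mul_left hγii opbS (((Δᵀ * B) * St) * Bᵀ)
              rwa [hsq] at this
        _ ≤ γmin⁻¹ * (Real.sqrt γmax * (γmin⁻¹ * (Real.sqrt γmax * frobNorm Δ))) :=
              mul_le_mul_of_nonneg_left binner2 hγi
  have b3 : frobNorm ((Bt * St) * Δᵀ) ≤ Real.sqrt γmin⁻¹ * frobNorm Δ := by
    have := frob_mul_left hγi opbBtSt Δᵀ
    rwa [frob_transpose Δ] at this
  -- assemble with triangle inequality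
  have tri : frobNorm (((Δ * S) * Bᵀ - Bt * (S * (Btᵀ * ((Δ * St) * Bᵀ)))
          - Bt * (S * (((Δᵀ * B) * St) * Bᵀ)))
        + (Bt * St) * Δᵀ)
      ≤ frobNorm ((Δ * S) * Bᵀ) + frobNorm (Bt * (S * (Btᵀ * ((Δ * St) * Bᵀ))))
        + frobNorm (Bt * (S * (((Δᵀ * B) * St) * Bᵀ)))
        + frobNorm ((Bt * St) * Δᵀ) := by
    calc frobNorm _ ≤ frobNorm ((Δ * S) * Bᵀ - Bt * (S * (Btᵀ * ((Δ * St) * Bᵀ)))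
          - Bt * (S * (((Δᵀ * B) * St) * Bᵀ))) + frobNorm ((Bt * St) * Δᵀ) :=
          frob_add_le _ _
    _ ≤ (frobNorm ((Δ * S) * Bᵀ - Bt * (S * (Btᵀ * ((Δ * St) * Bᵀ))))
          + frobNorm (Bt * (S * (((Δᵀ * B) * St) * Bᵀ)))) + frobNorm ((Bt * St) * Δᵀ) := by
          gcongr
          exact frob_sub_le _ _
    _ ≤ _ := by
          have := frob_sub_le ((Δ * S) * Bᵀ) (Bt * (S * (Btᵀ * ((Δ * St) * Bᵀ))))
          gcongr
  refine tri.trans ?_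
  have hcoef : Real.sqrt γmax * (γmin⁻¹ * frobNorm Δ)
      + Real.sqrt γmax * (γmin⁻¹ * (Real.sqrt γmax *
          (Real.sqrt γmax * (γmin⁻¹ * frobNorm Δ))))
      + Real.sqrt γmax * (γmin⁻¹ * (Real.sqrt γmax *
          (γmin⁻¹ * (Real.sqrt γmax * frobNorm Δ))))
      + Real.sqrt γmin⁻¹ * frobNorm Δ
      = (Real.sqrt γmax / γmin + 2 * γmax ^ ((3:ℝ)/2) / γmin ^ 2
          + 1 / Real.sqrt γmin) * frobNorm Δ := by
    have h32 : γmax ^ ((3:ℝ)/2) = Real.sqrt γmax * (Real.sqrt γmax * Real.sqrt γmax) := by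
      rw [Real.sqrt_eq_rpow, ← Real.rpow_add hγmax, ← Real.rpow_add hγmax]
      norm_num
    have hmin : Real.sqrt γmin⁻¹ = 1 / Real.sqrt γmin := by
      rw [Real.sqrt_inv, one_div]
    rw [h32, hmin]
    ring
  calc frobNorm ((Δ * S) * Bᵀ) + frobNorm (Bt * (S * (Btᵀ * ((Δ * St) * Bᵀ))))
        + frobNorm (Bt * (S * (((Δᵀ * B) * St) * Bᵀ)))
        + frobNorm ((Bt * St) * Δᵀ)
      ≤ Real.sqrt γmax * (γmin⁻¹ * frobNorm Δ)
        + Real.sqrt γmax * (γmin⁻¹ * (Real.sqrt γmax *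
            (Real.sqrt γmax * (γmin⁻¹ * frobNorm Δ))))
        + Real.sqrt γmax * (γmin⁻¹ * (Real.sqrt γmax *
            (γmin⁻¹ * (Real.sqrt γmax * frobNorm Δ))))
        + Real.sqrt γmin⁻¹ * frobNorm Δ := by
        exact add_le_add (add_le_add (add_le_add b1 b2a) b2b) b3
  _ = _ := hcoef
end
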